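/- arXiv:1607.07830 — 6 statements merged into one kernel-verified Lean document; each statement's English description precedes it below -/
import Mathlib

section
/- (Abstract form of Proposition 3.1, first part.) For every continuous compactly supported bi-K-invariant function f: G → ℂ and all ξ, η ∈ L²(X, ν), one has ∫_G f(g) ⟨π_ν(g)ξ, η⟩ dμ_G(g) = ⟨ξ, 1⟩ · ⟨1, η⟩ · ∫_G f(g) Ξ(g) dμ_G(g), where ⟨ξ, 1⟩ = ∫_X ξ dν, ⟨1, η⟩ = ∫_X conj(η) dν, and 1 denotes the constant function 1 on X. -/
open MeasureTheory ENNReal NNReal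
set_option maxHeartbeats 1000000


section MulRight
variable {G : Type*} [Group G] [TopologicalSpace G] [IsTopologicalGroup G]
    [LocallyCompactSpace G] [SecondCountableTopology G] [MeasurableSpace G] [BorelSpace G]

open Pointwise in
theorem RMC.map_mul_right_haar (μG : Measure G) [μG.IsHaarMeasure]
    (K : Subgroup G) (hK : IsCompact (K : Set G)) {k : G} (hk : k ∈ K) :
    Measure.map (· * k) μG = μG := by
  classical
  set D : G → ℝ≥0 := fun g => Measure.haarScalarFactor (μG.map (· * g)) μG with hD
  have key : ∀ g : G, μG.map (· * g) = D g • μG := fun g =>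
    Measure.isMulLeftInvariant_eq_smul _ _
  obtain ⟨V, hVc, hV1⟩ := exists_compact_mem_nhds (1 : G)
  set U : Set G := interior V with hU
  have hUmeas : MeasurableSet U := isOpen_interior.measurableSet
  have hUpos : 0 < μG U := isOpen_interior.measure_pos μG ⟨1, mem_interior_iff_mem_nhds.2 hV1⟩
  have hUfin : μG U < ∞ := lt_of_le_of_lt (measure_mono interior_subset) hVc.measure_lt_top
  have eval : ∀ g : G, ∀ A : Set G, MeasurableSet A →
      μG ((· * g) ⁻¹' A) = (D g : ℝ≥0∞) * μG A := by
    intro g A hA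
    have := congrArg (fun m : Measure G => m A) (key g)
    simpa [Measure.map_apply (measurable_mul_const g) hA] using this
  have cancel : ∀ a b : ℝ≥0∞, a * μG U = b * μG U → a = b := fun a b h =>
    (ENNReal.mul_left_inj hUpos.ne' hUfin.ne).mp h
  have hom : ∀ g₁ g₂ : G, (D (g₁ * g₂) : ℝ≥0∞) = D g₁ * D g₂ := by
    intro g₁ g₂
    apply cancel
    have h1 : ((· * (g₁ * g₂)) ⁻¹' U) = (· * g₁) ⁻¹' ((· * g₂) ⁻¹' U) := by
      ext x; simp [mul_assoc]
    rw [← eval (g₁ * g₂) U hUmeas, h1,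
      eval g₁ _ ((measurable_mul_const g₂) hUmeas), eval g₂ U hUmeas, mul_assoc]
  have D1 : (D 1 : ℝ≥0∞) = 1 := by
    apply cancel
    rw [← eval 1 U hUmeas]; simp
  have Dpow : ∀ g : G, ∀ n : ℕ, (D (g ^ n) : ℝ≥0∞) = (D g : ℝ≥0∞) ^ n := by
    intro g n
    induction n with
    | zero => simpa using D1
    | succ n ih => rw [pow_succ, hom, ih, pow_succ]
  have bound : ∀ g ∈ K, ∀ n : ℕ, (D g : ℝ≥0∞) ^ n * μG U ≤ μG (V * (K : Set G)) := by
    intro g hg n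
    rw [← Dpow, ← eval (g ^ n) U hUmeas]
    apply measure_mono
    intro x hx
    have : x = (x * g ^ n) * (g ^ n)⁻¹ := by group
    rw [this]
    exact Set.mul_mem_mul (interior_subset hx) (K.inv_mem (K.pow_mem hg n))
  have hVK : μG (V * (K : Set G)) < ∞ := (hVc.mul hK).measure_lt_top
  have Dle : ∀ g ∈ K, (D g : ℝ≥0∞) ≤ 1 := by
    intro g hg
    by_contra hlt
    push_neg at hlt
    have hlt' : (1 : ℝ) < (D g : ℝ) := by
      have := hlt
      rw [← ENNReal.coe_one, ENNReal.coe_lt_coe] at this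
      exact_mod_cast this
    obtain ⟨n, hn⟩ := pow_unbounded_of_one_lt ((μG (V * (K : Set G)) / μG U).toReal) hlt'
    have h1 : (D g : ℝ≥0∞) ^ n ≤ μG (V * (K : Set G)) / μG U :=
      ENNReal.le_div_iff_mul_le (Or.inl hUpos.ne') (Or.inl hUfin.ne) |>.mpr (bound g hg n)
    have h2 : ((D g : ℝ) ^ n) ≤ (μG (V * (K : Set G)) / μG U).toReal := by
      have := ENNReal.toReal_mono (by
        exact (ENNReal.div_lt_top hVK.ne hUpos.ne').ne) h1
      simpa [ENNReal.toReal_pow] using this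
    linarith
  have Dinvmul : ∀ g : G, (D g : ℝ≥0∞) * D g⁻¹ = 1 := by
    intro g
    rw [← hom, mul_inv_cancel, D1]
  have Done : ∀ g ∈ K, (D g : ℝ≥0∞) = 1 := by
    intro g hg
    have h1 := Dle g hg
    have h2 := Dle g⁻¹ (K.inv_mem hg)
    have h3 := Dinvmul g
    have : (D g : ℝ≥0∞) = 1 := by
      rcases lt_or_ge (D g : ℝ≥0∞) 1 with h | h
      · exfalso
        have : (D g : ℝ≥0∞) * D g⁻¹ < 1 := by
          calc (D g : ℝ≥0∞) * D g⁻¹ ≤ (D g) * 1 := by gcongr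
          _ = D g := mul_one _
          _ < 1 := h
        rw [h3] at this; exact lt_irrefl _ this
      · exact le_antisymm h1 h
    exact this
  have := key k
  rw [show (D k : ℝ≥0) = 1 by exact_mod_cast Done k hk] at this
  simpa using this

end MulRight

section Xside
variable {G : Type*} [Group G] [MeasurableSpace G]
variable {X : Type*} [MeasurableSpace X] [MulAction G X]

theorem RMC.meas_smul (hact : Measurable (fun p : G × X => p.1 • p.2)) (g : G) :
    Measurable (fun x : X => g • x) :=
  hact.comp (measurable_const.prodMk measurable_id)

/-- the action of `g` as a measurable equiv -/
noncomputable def RMC.e (hact : Measurable (fun p : G × X => p.1 • p.2)) (g : G) : X ≃ᵐ X where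
  toFun := fun x => g • x
  invFun := fun x => g⁻¹ • x
  left_inv := fun x => inv_smul_smul g x
  right_inv := fun x => smul_inv_smul g x
  measurable_toFun := RMC.meas_smul hact g
  measurable_invFun := RMC.meas_smul hact g⁻¹

theorem RMC.meas_c {c : G → X → ℝ} (hc_meas : Measurable (fun p : G × X => c p.1 p.2)) (g : G) :
    Measurable (fun x : X => c g x) :=
  hc_meas.comp (measurable_const.prodMk measurable_id)

variable (ν : Measure X) [IsProbabilityMeasure ν] {c : G → X → ℝ}

theorem RMC.mapAC (hc : ∀ g : G, Measure.map (fun x : X => g • x) ν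
      = ν.withDensity (fun x => ENNReal.ofReal (c g x))) (g : G) :
    Measure.map (fun x : X => g • x) ν ≪ ν := by
  rw [hc g]; exact withDensity_absolutelyContinuous ν _

theorem RMC.ae_comp (hact : Measurable (fun p : G × X => p.1 • p.2))
    (hc : ∀ g : G, Measure.map (fun x : X => g • x) ν
      = ν.withDensity (fun x => ENNReal.ofReal (c g x))) (g : G)
    {p : X → Prop} (h : ∀ᵐ x ∂ν, p x) : ∀ᵐ x ∂ν, p (g • x) := by
  have h1 : ∀ᵐ x ∂(Measure.map (fun x : X => g • x) ν), p x :=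
    (RMC.mapAC ν hc g).ae_le h
  have h2 : Measure.map (fun x : X => g • x) ν = ν.map (RMC.e hact g) := rfl
  rw [h2, ← MeasurableEquiv.map_ae] at h1
  exact h1

theorem RMC.c_smul_pos (hact : Measurable (fun p : G × X => p.1 • p.2))
    (hc_pos : ∀ g : G, ∀ᵐ x ∂ν, 0 < c g x)
    (hc : ∀ g : G, Measure.map (fun x : X => g • x) ν
      = ν.withDensity (fun x => ENNReal.ofReal (c g x))) (g h : G) :
    ∀ᵐ x ∂ν, 0 < c g (h • x) :=
  RMC.ae_comp ν hact hc h (hc_pos g)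

/-- transformation formula for lintegrals -/
theorem RMC.transform (hact : Measurable (fun p : G × X => p.1 • p.2))
    (hc_meas : Measurable (fun p : G × X => c p.1 p.2))
    (hc : ∀ g : G, Measure.map (fun x : X => g • x) ν
      = ν.withDensity (fun x => ENNReal.ofReal (c g x))) (g : G)
    (w : X → ℝ≥0∞) (hw : Measurable w) :
    ∫⁻ x, w (g⁻¹ • x) * ENNReal.ofReal (c g x) ∂ν = ∫⁻ x, w x ∂ν := by
  have hcm : Measurable (fun x => ENNReal.ofReal (c g x)) :=
    (RMC.meas_c hc_meas g).ennreal_ofReal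
  have hwm : Measurable (fun x : X => w (g⁻¹ • x)) := hw.comp (RMC.meas_smul hact g⁻¹)
  have h1 : ∫⁻ x, w (g⁻¹ • x) * ENNReal.ofReal (c g x) ∂ν
      = ∫⁻ x, w (g⁻¹ • x) ∂(ν.withDensity (fun x => ENNReal.ofReal (c g x))) := by
    rw [lintegral_withDensity_eq_lintegral_mul ν hcm hwm]
    simp only [Pi.mul_apply]
    exact lintegral_congr fun x => mul_comm _ _
  rw [h1, ← hc g, lintegral_map hwm (RMC.meas_smul hact g)]
  simp [inv_smul_smul]

theorem RMC.c_K_one (hc_meas : Measurable (fun p : G × X => c p.1 p.2))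
    (hc_pos : ∀ g : G, ∀ᵐ x ∂ν, 0 < c g x)
    (hc : ∀ g : G, Measure.map (fun x : X => g • x) ν
      = ν.withDensity (fun x => ENNReal.ofReal (c g x)))
    (k : G) (hmapk : Measure.map (fun x : X => k • x) ν = ν) :
    ∀ᵐ x ∂ν, c k x = 1 := by
  have h0 : ν.withDensity (fun x => ENNReal.ofReal (c k x)) = ν.withDensity (fun _ => 1) := by
    rw [← hc k, hmapk]; exact (withDensity_one (μ := ν)).symm
  have h1 : (fun x => ENNReal.ofReal (c k x)) =ᵐ[ν] (fun _ => 1) :=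
    (withDensity_eq_iff_of_sigmaFinite
      (RMC.meas_c hc_meas k).ennreal_ofReal.aemeasurable
      measurable_const.aemeasurable).mp h0
  filter_upwards [h1, hc_pos k] with x hx hposx
  rwa [show (1 : ℝ≥0∞) = ENNReal.ofReal 1 by simp,
    ENNReal.ofReal_eq_ofReal_iff hposx.le (by norm_num)] at hx

/-- `map k (ν.withDensity w) = ν.withDensity (w ∘ k⁻¹ • ·)` for `k` preserving `ν`. -/
theorem RMC.map_withDensity (hact : Measurable (fun p : G × X => p.1 • p.2)) (k : G)
    (hmapk : Measure.map (fun x : X => k • x) ν = ν) (w : X → ℝ≥0∞) (hw : Measurable w) :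
    Measure.map (fun x : X => k • x) (ν.withDensity w)
      = ν.withDensity (fun x => w (k⁻¹ • x)) := by
  have hwm : Measurable (fun x : X => w (k⁻¹ • x)) := hw.comp (RMC.meas_smul hact k⁻¹)
  ext A hA
  rw [Measure.map_apply (RMC.meas_smul hact k) hA, withDensity_apply _ hA,
    withDensity_apply _ ((RMC.meas_smul hact k) hA)]
  conv_rhs => rw [show ν = Measure.map (fun x : X => k • x) ν from hmapk.symm]
  rw [setLIntegral_map hA hwm (RMC.meas_smul hact k)]
  simp [inv_smul_smul]

/-- left cocycle identity: `c (k*g) (k•y) = c g y` a.e., for `k` preserving `ν`. -/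
theorem RMC.cocycle_left (hact : Measurable (fun p : G × X => p.1 • p.2))
    (hc_meas : Measurable (fun p : G × X => c p.1 p.2))
    (hc_pos : ∀ g : G, ∀ᵐ x ∂ν, 0 < c g x)
    (hc : ∀ g : G, Measure.map (fun x : X => g • x) ν
      = ν.withDensity (fun x => ENNReal.ofReal (c g x)))
    (k g : G) (hmapk : Measure.map (fun x : X => k • x) ν = ν) :
    ∀ᵐ y ∂ν, c (k * g) (k • y) = c g y := by
  have hmap : Measure.map (fun x : X => (k * g) • x) ν
      = ν.withDensity (fun x => ENNReal.ofReal (c g (k⁻¹ • x))) := by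
    have h1 : (fun x : X => (k * g) • x) = (fun x : X => k • x) ∘ (fun x : X => g • x) := by
      funext x; simp [mul_smul]
    rw [h1, ← Measure.map_map (RMC.meas_smul hact k) (RMC.meas_smul hact g), hc g,
      RMC.map_withDensity ν hact k hmapk _ (RMC.meas_c hc_meas g).ennreal_ofReal]
  have h2 : (fun x => ENNReal.ofReal (c (k * g) x))
      =ᵐ[ν] (fun x => ENNReal.ofReal (c g (k⁻¹ • x))) := by
    have hm2 : Measurable fun x : X => ENNReal.ofReal (c g (k⁻¹ • x)) :=
      ((RMC.meas_c hc_meas g).comp (RMC.meas_smul hact k⁻¹)).ennreal_ofReal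
    refine (withDensity_eq_iff_of_sigmaFinite
      (RMC.meas_c hc_meas (k * g)).ennreal_ofReal.aemeasurable hm2.aemeasurable).mp ?_
    rw [← hc (k * g), hmap]
  have h3 : ∀ᵐ x ∂ν, c (k * g) x = c g (k⁻¹ • x) := by
    filter_upwards [h2, hc_pos (k * g), RMC.c_smul_pos ν hact hc_pos hc g k⁻¹]
      with x hx hp1 hp2
    rwa [ENNReal.ofReal_eq_ofReal_iff hp1.le hp2.le] at hx
  have h4 := RMC.ae_comp ν hact hc k h3
  filter_upwards [h4] with y hy
  rw [hy, inv_smul_smul]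

/-- right cocycle identity: `c (g*k) = c g` a.e., for `k` preserving `ν`. -/
theorem RMC.cocycle_right (hact : Measurable (fun p : G × X => p.1 • p.2))
    (hc_meas : Measurable (fun p : G × X => c p.1 p.2))
    (hc_pos : ∀ g : G, ∀ᵐ x ∂ν, 0 < c g x)
    (hc : ∀ g : G, Measure.map (fun x : X => g • x) ν
      = ν.withDensity (fun x => ENNReal.ofReal (c g x)))
    (g k : G) (hmapk : Measure.map (fun x : X => k • x) ν = ν) :
    ∀ᵐ x ∂ν, c (g * k) x = c g x := by
  have hmap : Measure.map (fun x : X => (g * k) • x) ν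
      = ν.withDensity (fun x => ENNReal.ofReal (c g x)) := by
    have h1 : (fun x : X => (g * k) • x) = (fun x : X => g • x) ∘ (fun x : X => k • x) := by
      funext x; simp [mul_smul]
    rw [h1, ← Measure.map_map (RMC.meas_smul hact g) (RMC.meas_smul hact k), hmapk, hc g]
  have h2 : (fun x => ENNReal.ofReal (c (g * k) x)) =ᵐ[ν] (fun x => ENNReal.ofReal (c g x)) := by
    refine (withDensity_eq_iff_of_sigmaFinite
      (RMC.meas_c hc_meas (g * k)).ennreal_ofReal.aemeasurable
      (RMC.meas_c hc_meas g).ennreal_ofReal.aemeasurable).mp ?_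
    rw [← hc (g * k), hmap]
  filter_upwards [h2, hc_pos (g * k), hc_pos g] with x hx hp1 hp2
  rwa [ENNReal.ofReal_eq_ofReal_iff hp1.le hp2.le] at hx

end Xside

section Ergodic
variable {G : Type*} [Group G] {X : Type*} [MeasurableSpace X] [MulAction G X]

theorem RMC.ergodic_real (K : Subgroup G) (ν : Measure X) [IsProbabilityMeasure ν]
    (herg : ∀ A : Set X, MeasurableSet A →
      (∀ k ∈ K, ν (symmDiff ((fun x => k • x) '' A) A) = 0) → ν A = 0 ∨ ν A = 1)
    (φ : X → ℝ) (hm : Measurable φ)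
    (hinv : ∀ k ∈ K, ∀ᵐ x ∂ν, φ (k • x) = φ x) :
    ∃ t : ℝ, φ =ᵐ[ν] fun _ => t := by
  classical
  -- the sublevel sets have measure 0 or 1
  have hA01 : ∀ t : ℝ, ν {x | φ x < t} = 0 ∨ ν {x | φ x < t} = 1 := by
    intro t
    refine herg _ (hm measurableSet_Iio) ?_
    intro k hk
    have himg : (fun x => k • x) '' {x | φ x < t} = {x | φ (k⁻¹ • x) < t} := by
      ext x
      constructor
      · rintro ⟨y, hy, rfl⟩
        simpa [inv_smul_smul] using hy
      · intro hx
        exact ⟨k⁻¹ • x, hx, smul_inv_smul k x⟩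
    have hnull : ν {x | φ (k⁻¹ • x) ≠ φ x} = 0 := by
      have := hinv k⁻¹ (K.inv_mem hk)
      exact ae_iff.mp this
    refine measure_mono_null ?_ hnull
    intro x hx
    rw [himg, Set.mem_symmDiff] at hx
    simp only [Set.mem_setOf_eq] at hx ⊢
    rcases hx with ⟨ha1, ha2⟩ | ⟨ha1, ha2⟩
    · exact fun h => ha2 (by rw [← h]; exact ha1)
    · exact fun h => ha2 (by rw [h]; exact ha1)
  set S : Set ℝ := {t | ν {x | φ x < t} = 1} with hS
  have hmono : ∀ s t : ℝ, s ≤ t → s ∈ S → t ∈ S := by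
    intro s t hst hs
    have hsub : {x | φ x < s} ⊆ {x | φ x < t} := fun x hx => lt_of_lt_of_le hx hst
    rcases hA01 t with h | h
    · exfalso
      have := measure_mono_null hsub h
      rw [hs] at this; exact one_ne_zero this
    · exact h
  have hSne : S.Nonempty := by
    by_contra hne
    push_neg at hne
    have hall : ∀ n : ℕ, ν {x | φ x < (n : ℝ)} = 0 := by
      intro n
      rcases hA01 n with h | h
      · exact h
      · exfalso
        have hmem : (n : ℝ) ∈ S := h
        rw [hne] at hmem
        exact hmem
    have huniv : (Set.univ : Set X) = ⋃ n : ℕ, {x | φ x < (n : ℝ)} := by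
      ext x
      simp only [Set.mem_univ, Set.mem_iUnion, Set.mem_setOf_eq, true_iff]
      obtain ⟨n, hn⟩ := exists_nat_gt (φ x)
      exact ⟨n, hn⟩
    have : ν Set.univ = 0 := by
      rw [huniv]
      exact measure_iUnion_null hall
    simp at this
  have hSbdd : BddBelow S := by
    -- find n with ν {φ < -n} = 0
    have hex : ∃ n : ℕ, ν {x | φ x < -(n : ℝ)} = 0 := by
      by_contra hne
      push_neg at hne
      have hall : ∀ n : ℕ, ν {x | φ x < -(n : ℝ)} = 1 := by
        intro n
        rcases hA01 (-(n : ℝ)) with h | h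
        · exact absurd h (hne n)
        · exact h
      have hiempty : (⋂ n : ℕ, {x | φ x < -(n : ℝ)}) = ∅ := by
        ext x
        simp only [Set.mem_iInter, Set.mem_setOf_eq, Set.mem_empty_iff_false, iff_false]
        push_neg
        obtain ⟨n, hn⟩ := exists_nat_gt (-φ x)
        exact ⟨n, by linarith⟩
      have hae : ∀ᵐ x ∂ν, ∀ n : ℕ, φ x < -(n : ℝ) := by
        rw [ae_all_iff]
        intro n
        have h3 : ν {x | φ x < -(n : ℝ)}ᶜ = 0 :=
          (prob_compl_eq_zero_iff (hm measurableSet_Iio)).mpr (hall n)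
        rw [ae_iff, ← Set.compl_setOf]
        exact h3
      have : ν (⋂ n : ℕ, {x | φ x < -(n : ℝ)}) = 1 := by
        rw [measure_congr]
        · exact measure_univ
        · rw [Filter.eventuallyEq_univ]
          exact hae.mono fun x hx => Set.mem_iInter.mpr hx
      rw [hiempty] at this
      simp at this
    obtain ⟨n, hn⟩ := hex
    refine ⟨-(n : ℝ), fun t ht => ?_⟩
    by_contra hlt
    push_neg at hlt
    have := hmono t (-(n : ℝ)) hlt.le ht
    rw [hS] at this
    simp only [Set.mem_setOf_eq] at this
    rw [this] at hn
    exact one_ne_zero hn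
  set t₀ : ℝ := sInf S with ht₀
  have hub : ∀ᵐ x ∂ν, φ x ≤ t₀ := by
    have h1 : ∀ n : ℕ, ∀ᵐ x ∂ν, φ x < t₀ + 1 / (n + 1 : ℝ) := by
      intro n
      have hpos : (0 : ℝ) < 1 / (n + 1 : ℝ) := by positivity
      obtain ⟨s, hsS, hslt⟩ := (csInf_lt_iff hSbdd hSne).mp (by linarith : sInf S < t₀ + 1 / (n + 1 : ℝ))
      have h2 : ν {x | φ x < t₀ + 1 / (n + 1 : ℝ)} = 1 :=
        hmono s _ hslt.le hsS
      have h3 : ν {x | φ x < t₀ + 1 / (n + 1 : ℝ)}ᶜ = 0 :=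
        (prob_compl_eq_zero_iff (hm measurableSet_Iio)).mpr h2
      rw [ae_iff, ← Set.compl_setOf]
      exact h3
    have := ae_all_iff.mpr h1
    filter_upwards [this] with x hx
    by_contra hlt
    push_neg at hlt
    obtain ⟨n, hn⟩ := exists_nat_one_div_lt (by linarith : 0 < φ x - t₀)
    have := hx n
    linarith
  have hlb : ∀ᵐ x ∂ν, t₀ ≤ φ x := by
    have h1 : ∀ n : ℕ, ∀ᵐ x ∂ν, ¬ (φ x < t₀ - 1 / (n + 1 : ℝ)) := by
      intro n
      have hpos : (0 : ℝ) < 1 / (n + 1 : ℝ) := by positivity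
      have h0 : ν {x | φ x < t₀ - 1 / (n + 1 : ℝ)} = 0 := by
        rcases hA01 (t₀ - 1 / (n + 1 : ℝ)) with h | h
        · exact h
        · exfalso
          have : t₀ - 1 / (n + 1 : ℝ) ∈ S := h
          have := csInf_le hSbdd this
          rw [← ht₀] at this
          linarith
      rw [ae_iff]
      have hseteq : {x | ¬ ¬ (φ x < t₀ - 1 / (n + 1 : ℝ))} = {x | φ x < t₀ - 1 / (n + 1 : ℝ)} := by
        ext x; simp only [not_not]
      rw [hseteq]
      exact h0
    have := ae_all_iff.mpr h1
    filter_upwards [this] with x hx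
    by_contra hlt
    push_neg at hlt
    obtain ⟨n, hn⟩ := exists_nat_one_div_lt (by linarith : 0 < t₀ - φ x)
    have := hx n
    push_neg at this
    linarith
  refine ⟨t₀, ?_⟩
  filter_upwards [hub, hlb] with x h1 h2
  exact le_antisymm h1 h2

theorem RMC.ergodic_complex (K : Subgroup G) (ν : Measure X) [IsProbabilityMeasure ν]
    (herg : ∀ A : Set X, MeasurableSet A →
      (∀ k ∈ K, ν (symmDiff ((fun x => k • x) '' A) A) = 0) → ν A = 0 ∨ ν A = 1)
    (φ : X → ℂ) (hm : Measurable φ)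
    (hinv : ∀ k ∈ K, ∀ᵐ x ∂ν, φ (k • x) = φ x) :
    φ =ᵐ[ν] fun _ => ∫ x, φ x ∂ν := by
  obtain ⟨a, ha⟩ := RMC.ergodic_real K ν herg (fun x => (φ x).re) (Complex.measurable_re.comp hm)
    (fun k hk => (hinv k hk).mono fun x hx => congrArg Complex.re hx)
  obtain ⟨b, hb⟩ := RMC.ergodic_real K ν herg (fun x => (φ x).im) (Complex.measurable_im.comp hm)
    (fun k hk => (hinv k hk).mono fun x hx => congrArg Complex.im hx)
  have hconst : φ =ᵐ[ν] fun _ => (⟨a, b⟩ : ℂ) := by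
    filter_upwards [ha, hb] with x h1 h2
    exact Complex.ext (by simpa using h1) (by simpa using h2)
  have hint : ∫ x, φ x ∂ν = (⟨a, b⟩ : ℂ) := by
    rw [integral_congr_ae hconst, integral_const]
    simp
  rw [hint]
  exact hconst

end Ergodic

section Analytic

theorem RMC.integrable_prod_of_bound {α β : Type*} [MeasurableSpace α] [MeasurableSpace β]
    (μα : Measure α) (μβ : Measure β) [IsFiniteMeasure μα] [SFinite μβ]
    (F : α × β → ℂ) (hF : AEStronglyMeasurable F (μα.prod μβ))
    (C : ℝ≥0∞) (hC : C ≠ ∞)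
    (hb : ∀ a, ∫⁻ b, (‖F (a, b)‖₊ : ℝ≥0∞) ∂μβ ≤ C) : Integrable F (μα.prod μβ) := by
  refine ⟨hF, ?_⟩
  rw [hasFiniteIntegral_def]
  calc ∫⁻ p, (‖F p‖₊ : ℝ≥0∞) ∂(μα.prod μβ)
      = ∫⁻ a, ∫⁻ b, (‖F (a, b)‖₊ : ℝ≥0∞) ∂μβ ∂μα := lintegral_prod _ hF.enorm
    _ ≤ ∫⁻ _, C ∂μα := lintegral_mono hb
    _ = C * μα Set.univ := lintegral_const C
    _ < ∞ := ENNReal.mul_lt_top hC.lt_top (measure_lt_top μα _)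

theorem RMC.cs_bound {X : Type*} [MeasurableSpace X] (ν : Measure X) (A B : X → ℝ≥0∞)
    (hA : AEMeasurable A ν) (hB : AEMeasurable B ν) :
    ∫⁻ x, A x * B x ∂ν
      ≤ (∫⁻ x, A x ^ (2 : ℝ) ∂ν) ^ (1 / 2 : ℝ) * (∫⁻ x, B x ^ (2 : ℝ) ∂ν) ^ (1 / 2 : ℝ) := by
  have hpq : Real.HolderConjugate 2 2 := Real.HolderConjugate.two_two
  exact ENNReal.lintegral_mul_le_Lp_mul_Lq ν hpq hA hB

theorem RMC.lintegral_sq_ne_top {X : Type*} [MeasurableSpace X] (ν : Measure X) (ψ : X → ℂ)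
    (hψ : MemLp ψ 2 ν) : ∫⁻ x, (‖ψ x‖₊ : ℝ≥0∞) ^ (2 : ℝ) ∂ν ≠ ∞ := by
  have h := hψ.2
  rw [eLpNorm_eq_lintegral_rpow_enorm_toReal two_ne_zero ENNReal.ofNat_ne_top] at h
  simp only [ENNReal.toReal_ofNat] at h
  intro hcontra
  rw [show (∫⁻ x, ‖ψ x‖ₑ ^ (2 : ℝ) ∂ν) = ∞ from hcontra] at h
  rw [ENNReal.top_rpow_of_pos (by norm_num)] at h
  exact (lt_irrefl _ h).elim

end Analytic

theorem RMC.enorm_triple {r : ℝ} (hr : 0 ≤ r) (a b : ℂ) :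
    (‖(r : ℂ) * a * (starRingEnd ℂ) b‖₊ : ℝ≥0∞)
      = ENNReal.ofReal r * (‖a‖₊ : ℝ≥0∞) * (‖b‖₊ : ℝ≥0∞) := by
  rw [nnnorm_mul, nnnorm_mul, RCLike.nnnorm_conj]
  push_cast
  congr 1
  congr 1
  rw [show ((r : ℂ)) = ((r : ℝ) : ℂ) from rfl, Complex.nnnorm_real]
  exact (Real.enorm_eq_ofReal hr).symm ▸ rfl

theorem RMC.enorm_pair {r : ℝ} (hr : 0 ≤ r) (a : ℂ) :
    (‖(r : ℂ) * a‖₊ : ℝ≥0∞) = ENNReal.ofReal r * (‖a‖₊ : ℝ≥0∞) := by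
  rw [nnnorm_mul]
  push_cast
  congr 1
  rw [show ((r : ℂ)) = ((r : ℝ) : ℂ) from rfl, Complex.nnnorm_real]
  exact (Real.enorm_eq_ofReal hr).symm ▸ rfl

section Master
variable {G : Type*} [Group G] [MeasurableSpace G]
variable {X : Type*} [MeasurableSpace X] [MulAction G X]

/-- master Cauchy-Schwarz bound -/
theorem RMC.master_bound (ν : Measure X) [IsProbabilityMeasure ν] {c : G → X → ℝ}
    (hact : Measurable (fun p : G × X => p.1 • p.2))
    (hc_meas : Measurable (fun p : G × X => c p.1 p.2))
    (hc_pos : ∀ g : G, ∀ᵐ x ∂ν, 0 < c g x)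
    (hc : ∀ g : G, Measure.map (fun x : X => g • x) ν
      = ν.withDensity (fun x => ENNReal.ofReal (c g x)))
    (ψ : X → ℂ) (hψ : Measurable ψ) (h : G) (w : X → ℝ≥0∞) (hw : Measurable w) :
    ∫⁻ x, ENNReal.ofReal (Real.sqrt (c h x)) * (‖ψ (h⁻¹ • x)‖₊ : ℝ≥0∞) * w x ∂ν
      ≤ (∫⁻ x, (‖ψ x‖₊ : ℝ≥0∞) ^ (2 : ℝ) ∂ν) ^ (1 / 2 : ℝ)
        * (∫⁻ x, w x ^ (2 : ℝ) ∂ν) ^ (1 / 2 : ℝ) := by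
  set A : X → ℝ≥0∞ := fun x => ENNReal.ofReal (Real.sqrt (c h x)) * (‖ψ (h⁻¹ • x)‖₊ : ℝ≥0∞)
    with hA
  have hAm : Measurable A :=
    ((RMC.meas_c hc_meas h).sqrt.ennreal_ofReal).mul
      ((hψ.comp (RMC.meas_smul hact h⁻¹)).nnnorm.coe_nnreal_ennreal)
  have step1 : ∫⁻ x, A x * w x ∂ν
      ≤ (∫⁻ x, A x ^ (2 : ℝ) ∂ν) ^ (1 / 2 : ℝ) * (∫⁻ x, w x ^ (2 : ℝ) ∂ν) ^ (1 / 2 : ℝ) :=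
    RMC.cs_bound ν A w hAm.aemeasurable hw.aemeasurable
  have step2 : ∫⁻ x, A x ^ (2 : ℝ) ∂ν = ∫⁻ x, (‖ψ x‖₊ : ℝ≥0∞) ^ (2 : ℝ) ∂ν := by
    have hptwise : ∀ᵐ x ∂ν, A x ^ (2 : ℝ)
        = ((‖ψ (h⁻¹ • x)‖₊ : ℝ≥0∞) ^ (2 : ℝ)) * ENNReal.ofReal (c h x) := by
      filter_upwards [hc_pos h] with x hx
      rw [hA]
      rw [ENNReal.mul_rpow_of_nonneg _ _ (by norm_num : (0:ℝ) ≤ 2)]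
      rw [ENNReal.ofReal_rpow_of_nonneg (Real.sqrt_nonneg _) (by norm_num : (0:ℝ) ≤ 2)]
      rw [show ((Real.sqrt (c h x)) ^ (2:ℝ)) = (Real.sqrt (c h x)) ^ (2:ℕ) from
        Real.rpow_natCast _ 2]
      rw [sq, Real.mul_self_sqrt hx.le, mul_comm]
    rw [lintegral_congr_ae hptwise]
    exact RMC.transform ν hact hc_meas hc h _ (hψ.nnnorm.coe_nnreal_ennreal.pow_const (2:ℝ))
  rw [← step2]
  exact step1

/-- bound for the matrix coefficient type integrals -/
theorem RMC.coeff_bound (ν : Measure X) [IsProbabilityMeasure ν] {c : G → X → ℝ}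
    (hact : Measurable (fun p : G × X => p.1 • p.2))
    (hc_meas : Measurable (fun p : G × X => c p.1 p.2))
    (hc_pos : ∀ g : G, ∀ᵐ x ∂ν, 0 < c g x)
    (hc : ∀ g : G, Measure.map (fun x : X => g • x) ν
      = ν.withDensity (fun x => ENNReal.ofReal (c g x)))
    (ψ : X → ℂ) (hψ : Measurable ψ) (h : G) (φ : X → ℂ) (hφ : Measurable φ) :
    (‖∫ x, (Real.sqrt (c h x) : ℂ) * ψ (h⁻¹ • x) * φ x ∂ν‖₊ : ℝ≥0∞)
      ≤ (∫⁻ x, (‖ψ x‖₊ : ℝ≥0∞) ^ (2 : ℝ) ∂ν) ^ (1 / 2 : ℝ)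
        * (∫⁻ x, (‖φ x‖₊ : ℝ≥0∞) ^ (2 : ℝ) ∂ν) ^ (1 / 2 : ℝ) := by
  refine le_trans (enorm_integral_le_lintegral_enorm _) ?_
  have hptwise : ∀ x, (‖(Real.sqrt (c h x) : ℂ) * ψ (h⁻¹ • x) * φ x‖₊ : ℝ≥0∞)
      = ENNReal.ofReal (Real.sqrt (c h x)) * (‖ψ (h⁻¹ • x)‖₊ : ℝ≥0∞) * (‖φ x‖₊ : ℝ≥0∞) := by
    intro x
    rw [nnnorm_mul, nnnorm_mul]
    push_cast
    congr 1
    congr 1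
    rw [show ((Real.sqrt (c h x) : ℂ)) = ((Real.sqrt (c h x) : ℝ) : ℂ) from rfl,
      Complex.nnnorm_real]
    exact (Real.enorm_eq_ofReal (Real.sqrt_nonneg _)).symm ▸ rfl
  calc ∫⁻ x, (‖(Real.sqrt (c h x) : ℂ) * ψ (h⁻¹ • x) * φ x‖₊ : ℝ≥0∞) ∂ν
      = ∫⁻ x, ENNReal.ofReal (Real.sqrt (c h x)) * (‖ψ (h⁻¹ • x)‖₊ : ℝ≥0∞)
          * (‖φ x‖₊ : ℝ≥0∞) ∂ν := lintegral_congr hptwise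
    _ ≤ _ := RMC.master_bound ν hact hc_meas hc_pos hc ψ hψ h _ hφ.nnnorm.coe_nnreal_ennreal

end Master
/-- Abstract form of Proposition 3.1, first part: for every continuous compactly
supported bi-`K`-invariant `f : G → ℂ` and all `ξ, η ∈ L²(X, ν)`,
`∫_G f(g) ⟨π_ν(g)ξ, η⟩ dμ_G(g) = ⟨ξ, 1⟩ ⟨1, η⟩ ∫_G f(g) Ξ(g) dμ_G(g)`, where
`⟨π_ν(g)ξ, η⟩ = ∫_X c(g,x)^{1/2} ξ(g⁻¹·x) conj(η(x)) dν(x)`,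
`⟨ξ,1⟩ = ∫ ξ dν`, `⟨1,η⟩ = ∫ conj(η) dν`, and `Ξ(g) = ∫_X c(g,x)^{1/2} dν(x)`. -/
theorem radial_matrix_coefficient_identity
    {G : Type*} [Group G] [TopologicalSpace G] [IsTopologicalGroup G]
    [LocallyCompactSpace G] [SecondCountableTopology G]
    [MeasurableSpace G] [BorelSpace G]
    (μG : Measure G) [μG.IsHaarMeasure]
    (K : Subgroup G) (hK : IsCompact (K : Set G))
    {X : Type*} [MeasurableSpace X] [MulAction G X]
    (ν : Measure X) [IsProbabilityMeasure ν]
    (hact : Measurable (fun p : G × X => p.1 • p.2))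
    (c : G → X → ℝ)
    (hc_meas : Measurable (fun p : G × X => c p.1 p.2))
    (hc_pos : ∀ g : G, ∀ᵐ x ∂ν, 0 < c g x)
    (hc : ∀ g : G, Measure.map (fun x : X => g • x) ν
        = ν.withDensity (fun x => ENNReal.ofReal (c g x)))
    (hKinv : ∀ k ∈ K, Measure.map (fun x : X => k • x) ν = ν)
    (herg : ∀ A : Set X, MeasurableSet A →
      (∀ k ∈ K, ν (symmDiff ((fun x => k • x) '' A) A) = 0) → ν A = 0 ∨ ν A = 1)
    (Ξ : G → ℝ) (hΞ : ∀ g : G, Ξ g = ∫ x, Real.sqrt (c g x) ∂ν)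
    (f : G → ℂ) (hf_cont : Continuous f) (hf_supp : HasCompactSupport f)
    (hf_biK : ∀ k ∈ K, ∀ k' ∈ K, ∀ g : G, f (k * g * k') = f g)
    (ξ η : Lp ℂ 2 ν) :
    ∫ g, f g * ∫ x, (Real.sqrt (c g x) : ℂ) * (ξ : X → ℂ) (g⁻¹ • x)
        * (starRingEnd ℂ) ((η : X → ℂ) x) ∂ν ∂μG
      = (∫ x, (ξ : X → ℂ) x ∂ν) * (∫ x, (starRingEnd ℂ) ((η : X → ℂ) x) ∂ν)
        * ∫ g, f g * (Ξ g : ℂ) ∂μG := by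
  classical
  -- ## Setup: measure structure on the compact subgroup K
  letI : MeasurableSpace ↥K := borel ↥K
  haveI : BorelSpace ↥K := ⟨rfl⟩
  haveI : CompactSpace ↥K := isCompact_iff_compactSpace.mp hK
  haveI : SecondCountableTopology ↥K := TopologicalSpace.Subtype.secondCountableTopology (K : Set G)
  set K₀ : TopologicalSpace.PositiveCompacts ↥K :=
    ⟨⟨Set.univ, isCompact_univ⟩, by rw [interior_univ]; exact Set.univ_nonempty⟩ with hK₀
  set μK : Measure ↥K := Measure.haarMeasure K₀ with hμK
  haveI : IsProbabilityMeasure μK := ⟨Measure.haarMeasure_self (K₀ := K₀)⟩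
  have hcoe : Measurable ((↑) : ↥K → G) := continuous_subtype_val.measurable
  have hμKr : ∀ k₀ : ↥K, Measure.map (· * k₀) μK = μK := by
    intro k₀
    haveI : IsProbabilityMeasure (Measure.map (· * k₀) μK) :=
      Measure.isProbabilityMeasure_map (measurable_mul_const k₀).aemeasurable
    exact Measure.isHaarMeasure_eq_of_isProbabilityMeasure _ _
  have hμGr : ∀ k' : ↥K, Measure.map (· * (k' : G)) μG = μG :=
    fun k' => RMC.map_mul_right_haar μG K hK k'.2
  -- ## Setup: integrands and basic measurability
  have hfint : Integrable f μG := hf_cont.integrable_of_hasCompactSupport hf_supp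
  set ξf : X → ℂ := (ξ : X → ℂ) with hξf
  set ηf : X → ℂ := (η : X → ℂ) with hηf
  have hξm : Measurable ξf := (Lp.stronglyMeasurable ξ).measurable
  have hηm : Measurable ηf := (Lp.stronglyMeasurable η).measurable
  set Nξ : ℝ≥0∞ := ∫⁻ x, (‖ξf x‖₊ : ℝ≥0∞) ^ (2 : ℝ) ∂ν with hNξdef
  set Nη : ℝ≥0∞ := ∫⁻ x, (‖ηf x‖₊ : ℝ≥0∞) ^ (2 : ℝ) ∂ν with hNηdef
  have hNξ : Nξ ≠ ∞ := RMC.lintegral_sq_ne_top ν ξf (Lp.memLp ξ)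
  have hNη : Nη ≠ ∞ := RMC.lintegral_sq_ne_top ν ηf (Lp.memLp η)
  set M : G → ℂ := fun g => ∫ x, (Real.sqrt (c g x) : ℂ) * ξf (g⁻¹ • x)
      * (starRingEnd ℂ) (ηf x) ∂ν with hM
  set T : G → ℂ := fun g => ∫ x, (Real.sqrt (c g x) : ℂ) * ξf (g⁻¹ • x) ∂ν with hT
  have hconjm : Measurable fun z : ℂ => (starRingEnd ℂ) z :=
    Complex.conjCLE.continuous.measurable
  have hsqrtm : ∀ h : G, Measurable fun x : X => ((Real.sqrt (c h x) : ℝ) : ℂ) :=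
    fun h => Complex.measurable_ofReal.comp (RMC.meas_c hc_meas h).sqrt
  have hMm : StronglyMeasurable M := by
    apply MeasureTheory.StronglyMeasurable.integral_prod_right'
      (f := fun p : G × X => (Real.sqrt (c p.1 p.2) : ℂ) * ξf (p.1⁻¹ • p.2)
        * (starRingEnd ℂ) (ηf p.2))
    apply Measurable.stronglyMeasurable
    exact ((Complex.measurable_ofReal.comp hc_meas.sqrt).mul
      (hξm.comp (hact.comp ((measurable_fst.inv).prodMk measurable_snd)))).mul
      (hconjm.comp (hηm.comp measurable_snd))
  have hTm : StronglyMeasurable T := by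
    apply MeasureTheory.StronglyMeasurable.integral_prod_right'
      (f := fun p : G × X => (Real.sqrt (c p.1 p.2) : ℂ) * ξf (p.1⁻¹ • p.2))
    apply Measurable.stronglyMeasurable
    exact (Complex.measurable_ofReal.comp hc_meas.sqrt).mul
      (hξm.comp (hact.comp ((measurable_fst.inv).prodMk measurable_snd)))
  have hΦm : ∀ h : G, Measurable fun x : X =>
      (Real.sqrt (c h x) : ℂ) * ξf (h⁻¹ • x) * (starRingEnd ℂ) (ηf x) :=
    fun h => ((hsqrtm h).mul (hξm.comp (RMC.meas_smul hact h⁻¹))).mul (hconjm.comp hηm)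
  -- ## Step 1: rewriting `M (k * g)` via the change of variables `x = k • y`
  have hstep1 : ∀ (k : ↥K) (g : G), M ((k : G) * g)
      = ∫ x, (Real.sqrt (c g x) : ℂ) * ξf (g⁻¹ • x)
          * (starRingEnd ℂ) (ηf ((k : G) • x)) ∂ν := by
    intro k g
    have hmk := hKinv (k : G) k.2
    have hMdef : M ((k : G) * g) = ∫ x, (Real.sqrt (c ((k : G) * g) x) : ℂ)
        * ξf (((k : G) * g)⁻¹ • x) * (starRingEnd ℂ) (ηf x) ∂ν := rfl
    rw [hMdef]
    conv_lhs => rw [show ν = Measure.map (fun x : X => (k : G) • x) ν from hmk.symm]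
    rw [integral_map (RMC.meas_smul hact (k : G)).aemeasurable
      (hΦm ((k : G) * g)).aestronglyMeasurable]
    refine integral_congr_ae ?_
    filter_upwards [RMC.cocycle_left ν hact hc_meas hc_pos hc (k : G) g hmk] with y hy
    have hsm : ((k : G) * g)⁻¹ • ((k : G) • y) = g⁻¹ • y := by
      rw [smul_smul]
      congr 1
      group
    rw [hy, hsm]
  -- ## the averaged functions Qη and Pξ
  set Qη : X → ℂ := fun x => ∫ k : ↥K, ηf ((k : G) • x) ∂μK with hQη
  set Pξ : X → ℂ := fun z => ∫ k : ↥K, ξf ((k : G)⁻¹ • z) ∂μK with hPξ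
  have hKsmulm : Measurable fun p : (↥K) × X => ηf ((p.1 : G) • p.2) :=
    hηm.comp (hact.comp ((hcoe.comp measurable_fst).prodMk measurable_snd))
  have hKsmulm' : Measurable fun p : (↥K) × X => ξf ((p.1 : G)⁻¹ • p.2) :=
    hξm.comp (hact.comp (((hcoe.comp measurable_fst).inv).prodMk measurable_snd))
  have hQηm : Measurable Qη := by
    have := (hKsmulm.stronglyMeasurable).integral_prod_left' (μ := μK)
    exact this.measurable
  have hPξm : Measurable Pξ := by
    have := (hKsmulm'.stronglyMeasurable).integral_prod_left' (μ := μK)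
    exact this.measurable
  have hQη_inv : ∀ (k₀ : ↥K) (x : X), Qη ((k₀ : G) • x) = Qη x := by
    intro k₀ x
    rw [hQη]
    have h1 : (fun k : ↥K => ηf ((k : G) • (k₀ : G) • x))
        = fun k : ↥K => ηf (((k * k₀ : ↥K) : G) • x) := by
      funext k
      rw [smul_smul]
      rfl
    simp only []
    rw [h1]
    have h2 : ∫ k : ↥K, ηf (((k * k₀ : ↥K) : G) • x) ∂μK
        = ∫ k : ↥K, ηf ((k : G) • x) ∂(Measure.map (· * k₀) μK) := by
      rw [integral_map (measurable_mul_const k₀).aemeasurable]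
      exact (hηm.comp (hact.comp (hcoe.prodMk measurable_const))).aestronglyMeasurable
    rw [h2, hμKr k₀]
  have hPξ_inv : ∀ (k₀ : ↥K) (z : X), Pξ ((k₀ : G) • z) = Pξ z := by
    intro k₀ z
    rw [hPξ]
    have h1 : ∫ k : ↥K, ξf ((k : G)⁻¹ • (k₀ : G) • z) ∂μK
        = ∫ k : ↥K, ξf (((k₀ * k : ↥K) : G)⁻¹ • (k₀ : G) • z) ∂μK :=
      (integral_mul_left_eq_self (fun k : ↥K => ξf ((k : G)⁻¹ • (k₀ : G) • z)) k₀).symm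
    simp only []
    rw [h1]
    congr 1
    funext k
    congr 1
    rw [show ((k₀ * k : ↥K) : G) = (k₀ : G) * (k : G) from rfl, mul_inv_rev, mul_smul,
      inv_smul_smul]
  -- ## L¹ bounds and change of variables for k ∈ K
  have hchangeη : ∀ k : ↥K, ∫⁻ x, (‖ηf ((k : G) • x)‖₊ : ℝ≥0∞) ∂ν
      = ∫⁻ x, (‖ηf x‖₊ : ℝ≥0∞) ∂ν := by
    intro k
    have h := lintegral_map (μ := ν) (f := fun x => (‖ηf x‖₊ : ℝ≥0∞))
      hηm.nnnorm.coe_nnreal_ennreal (RMC.meas_smul hact (k : G))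
    rw [hKinv (k : G) k.2] at h
    exact h.symm
  have hchangeξ : ∀ k : ↥K, ∫⁻ x, (‖ξf ((k : G)⁻¹ • x)‖₊ : ℝ≥0∞) ∂ν
      = ∫⁻ x, (‖ξf x‖₊ : ℝ≥0∞) ∂ν := by
    intro k
    have h := lintegral_map (μ := ν) (f := fun x => (‖ξf x‖₊ : ℝ≥0∞))
      hξm.nnnorm.coe_nnreal_ennreal (RMC.meas_smul hact ((k : G))⁻¹)
    rw [hKinv ((k : G))⁻¹ (K.inv_mem k.2)] at h
    exact h.symm
  have hL1η : ∫⁻ x, (‖ηf x‖₊ : ℝ≥0∞) ∂ν ≤ Nη ^ (1 / 2 : ℝ) := by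
    rw [hNηdef]
    have h := RMC.cs_bound ν (fun x => (‖ηf x‖₊ : ℝ≥0∞)) (fun _ => 1)
      hηm.nnnorm.coe_nnreal_ennreal.aemeasurable aemeasurable_const
    simpa [ENNReal.one_rpow, measure_univ] using h
  have hL1ξ : ∫⁻ x, (‖ξf x‖₊ : ℝ≥0∞) ∂ν ≤ Nξ ^ (1 / 2 : ℝ) := by
    rw [hNξdef]
    have h := RMC.cs_bound ν (fun x => (‖ξf x‖₊ : ℝ≥0∞)) (fun _ => 1)
      hξm.nnnorm.coe_nnreal_ennreal.aemeasurable aemeasurable_const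
    simpa [ENNReal.one_rpow, measure_univ] using h
  have hNξr : Nξ ^ (1 / 2 : ℝ) ≠ ∞ := ENNReal.rpow_ne_top_of_nonneg (by norm_num) hNξ
  have hNηr : Nη ^ (1 / 2 : ℝ) ≠ ∞ := ENNReal.rpow_ne_top_of_nonneg (by norm_num) hNη
  -- ## the averages Qη, Pξ have the expected integrals
  have hηint_k : Integrable (fun p : ↥K × X => ηf ((p.1 : G) • p.2)) (μK.prod ν) :=
    RMC.integrable_prod_of_bound μK ν _ hKsmulm.aestronglyMeasurable (Nη ^ (1 / 2 : ℝ)) hNηr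
      (fun k => by rw [hchangeη k]; exact hL1η)
  have hξint_k : Integrable (fun p : ↥K × X => ξf ((p.1 : G)⁻¹ • p.2)) (μK.prod ν) :=
    RMC.integrable_prod_of_bound μK ν _ hKsmulm'.aestronglyMeasurable (Nξ ^ (1 / 2 : ℝ)) hNξr
      (fun k => by rw [hchangeξ k]; exact hL1ξ)
  have hBη : ∫ x, Qη x ∂ν = ∫ x, ηf x ∂ν := by
    have h0 : ∫ x, Qη x ∂ν = ∫ x, ∫ k : ↥K, ηf ((k : G) • x) ∂μK ∂ν := rfl
    have hswap := integral_integral_swap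
      (f := fun (k : ↥K) (x : X) => ηf ((k : G) • x)) hηint_k
    rw [h0, ← hswap]
    have hin : ∀ k : ↥K, ∫ x, ηf ((k : G) • x) ∂ν = ∫ x, ηf x ∂ν := by
      intro k
      conv_rhs => rw [← hKinv (k : G) k.2]
      rw [integral_map (RMC.meas_smul hact (k : G)).aemeasurable hηm.aestronglyMeasurable]
    rw [integral_congr_ae (ae_of_all _ hin), integral_const]
    simp
  have hAξ : ∫ x, Pξ x ∂ν = ∫ x, ξf x ∂ν := by
    have h0 : ∫ x, Pξ x ∂ν = ∫ x, ∫ k : ↥K, ξf ((k : G)⁻¹ • x) ∂μK ∂ν := rfl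
    have hswap := integral_integral_swap
      (f := fun (k : ↥K) (x : X) => ξf ((k : G)⁻¹ • x)) hξint_k
    rw [h0, ← hswap]
    have hin : ∀ k : ↥K, ∫ x, ξf ((k : G)⁻¹ • x) ∂ν = ∫ x, ξf x ∂ν := by
      intro k
      conv_rhs => rw [← hKinv ((k : G))⁻¹ (K.inv_mem k.2)]
      rw [integral_map (RMC.meas_smul hact ((k : G))⁻¹).aemeasurable hξm.aestronglyMeasurable]
    rw [integral_congr_ae (ae_of_all _ hin), integral_const]
    simp
  -- ## ergodicity: the averages are a.e. constant
  have hQη_const : Qη =ᵐ[ν] fun _ => ∫ x, ηf x ∂ν := by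
    have h := RMC.ergodic_complex K ν herg Qη hQηm
      (fun k hk => Filter.Eventually.of_forall (fun x => hQη_inv ⟨k, hk⟩ x))
    rwa [hBη] at h
  have hPξ_const : Pξ =ᵐ[ν] fun _ => ∫ x, ξf x ∂ν := by
    have h := RMC.ergodic_complex K ν herg Pξ hPξm
      (fun k hk => Filter.Eventually.of_forall (fun x => hPξ_inv ⟨k, hk⟩ x))
    rwa [hAξ] at h
  -- ## squared change of variables
  have hchange2η : ∀ k : ↥K, ∫⁻ x, (‖ηf ((k : G) • x)‖₊ : ℝ≥0∞) ^ (2 : ℝ) ∂ν = Nη := by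
    intro k
    have h := lintegral_map (μ := ν) (f := fun x => (‖ηf x‖₊ : ℝ≥0∞) ^ (2 : ℝ))
      (hηm.nnnorm.coe_nnreal_ennreal.pow_const _) (RMC.meas_smul hact (k : G))
    rw [hKinv (k : G) k.2] at h
    rw [hNηdef]
    exact h.symm
  -- ## Part I : inner average over K
  have key1 : ∀ g : G, ∫ k : ↥K, M ((k : G) * g) ∂μK
      = ∫ x, (Real.sqrt (c g x) : ℂ) * ξf (g⁻¹ • x) * (starRingEnd ℂ) (Qη x) ∂ν := by
    intro g
    rw [show (fun k : ↥K => M ((k : G) * g))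
        = fun k : ↥K => ∫ x, (Real.sqrt (c g x) : ℂ) * ξf (g⁻¹ • x)
            * (starRingEnd ℂ) (ηf ((k : G) • x)) ∂ν from funext fun k => hstep1 k g]
    have hFm : Measurable fun p : ↥K × X => (Real.sqrt (c g p.2) : ℂ) * ξf (g⁻¹ • p.2)
        * (starRingEnd ℂ) (ηf ((p.1 : G) • p.2)) :=
      (((hsqrtm g).comp measurable_snd).mul
        ((hξm.comp (RMC.meas_smul hact g⁻¹)).comp measurable_snd)).mul
        (hconjm.comp hKsmulm)
    have hFint : Integrable (fun p : ↥K × X => (Real.sqrt (c g p.2) : ℂ) * ξf (g⁻¹ • p.2)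
        * (starRingEnd ℂ) (ηf ((p.1 : G) • p.2))) (μK.prod ν) := by
      refine RMC.integrable_prod_of_bound μK ν _ hFm.aestronglyMeasurable
        (Nξ ^ (1 / 2 : ℝ) * Nη ^ (1 / 2 : ℝ)) (ENNReal.mul_ne_top hNξr hNηr) (fun k => ?_)
      calc ∫⁻ x, (‖(Real.sqrt (c g x) : ℂ) * ξf (g⁻¹ • x)
              * (starRingEnd ℂ) (ηf ((k : G) • x))‖₊ : ℝ≥0∞) ∂ν
          = ∫⁻ x, ENNReal.ofReal (Real.sqrt (c g x)) * (‖ξf (g⁻¹ • x)‖₊ : ℝ≥0∞)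
              * (‖ηf ((k : G) • x)‖₊ : ℝ≥0∞) ∂ν :=
            lintegral_congr fun x => RMC.enorm_triple (Real.sqrt_nonneg _) _ _
        _ ≤ Nξ ^ (1 / 2 : ℝ)
              * (∫⁻ x, (‖ηf ((k : G) • x)‖₊ : ℝ≥0∞) ^ (2 : ℝ) ∂ν) ^ (1 / 2 : ℝ) := by
            have := RMC.master_bound ν hact hc_meas hc_pos hc ξf hξm g
              (fun x => (‖ηf ((k : G) • x)‖₊ : ℝ≥0∞))
              ((hηm.comp (RMC.meas_smul hact (k : G))).nnnorm.coe_nnreal_ennreal)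
            rw [hNξdef]
            exact this
        _ = Nξ ^ (1 / 2 : ℝ) * Nη ^ (1 / 2 : ℝ) := by rw [hchange2η k]
    have hswap := integral_integral_swap
      (f := fun (k : ↥K) (x : X) => (Real.sqrt (c g x) : ℂ) * ξf (g⁻¹ • x)
        * (starRingEnd ℂ) (ηf ((k : G) • x))) hFint
    rw [hswap]
    refine integral_congr_ae (Filter.Eventually.of_forall fun x => ?_)
    show ∫ k : ↥K, (Real.sqrt (c g x) : ℂ) * ξf (g⁻¹ • x)
          * (starRingEnd ℂ) (ηf ((k : G) • x)) ∂μK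
        = (Real.sqrt (c g x) : ℂ) * ξf (g⁻¹ • x) * (starRingEnd ℂ) (Qη x)
    rw [integral_const_mul, integral_conj]
  -- ## Part I : translation invariance and averaging
  have htransk : ∀ k : ↥K, ∫ g, f g * M g ∂μG = ∫ g, f g * M ((k : G) * g) ∂μG := by
    intro k
    conv_lhs => rw [← integral_mul_left_eq_self (fun g => f g * M g) (k : G)]
    refine integral_congr_ae (Filter.Eventually.of_forall fun g => ?_)
    have hfk : f ((k : G) * g) = f g := by
      have := hf_biK (k : G) k.2 1 K.one_mem g
      rwa [mul_one] at this
    show f ((k : G) * g) * M ((k : G) * g) = f g * M ((k : G) * g)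
    rw [hfk]
  have havg1 : ∫ g, f g * M g ∂μG = ∫ k : ↥K, ∫ g, f g * M ((k : G) * g) ∂μG ∂μK := by
    have h1 : ∫ g, f g * M g ∂μG = ∫ _k : ↥K, ∫ g, f g * M g ∂μG ∂μK := by
      rw [integral_const]; simp
    rw [h1]
    exact integral_congr_ae (Filter.Eventually.of_forall fun k => htransk k)
  have hMb : ∀ (k : ↥K) (g : G), (‖M ((k : G) * g)‖₊ : ℝ≥0∞)
      ≤ Nξ ^ (1 / 2 : ℝ) * Nη ^ (1 / 2 : ℝ) := by
    intro k g
    rw [hstep1 k g]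
    have h := RMC.coeff_bound ν hact hc_meas hc_pos hc ξf hξm g
      (fun x => (starRingEnd ℂ) (ηf ((k : G) • x)))
      (hconjm.comp (hηm.comp (RMC.meas_smul hact (k : G))))
    refine h.trans ?_
    have h2 : ∫⁻ x, (‖(starRingEnd ℂ) (ηf ((k : G) • x))‖₊ : ℝ≥0∞) ^ (2 : ℝ) ∂ν = Nη := by
      rw [← hchange2η k]
      exact lintegral_congr fun x => by rw [RCLike.nnnorm_conj]
    rw [h2, hNξdef]
  have hHm : AEStronglyMeasurable (fun p : ↥K × G => f p.2 * M ((p.1 : G) * p.2))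
      (μK.prod μG) :=
    ((hf_cont.measurable.comp measurable_snd).mul
      (hMm.measurable.comp ((hcoe.comp measurable_fst).mul measurable_snd))).aestronglyMeasurable
  have hCf : ∫⁻ g, (‖f g‖₊ : ℝ≥0∞) ∂μG ≠ ∞ := hfint.2.ne
  have hHint : Integrable (fun p : ↥K × G => f p.2 * M ((p.1 : G) * p.2)) (μK.prod μG) := by
    refine RMC.integrable_prod_of_bound μK μG _ hHm
      ((∫⁻ g, (‖f g‖₊ : ℝ≥0∞) ∂μG) * (Nξ ^ (1 / 2 : ℝ) * Nη ^ (1 / 2 : ℝ)))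
      (ENNReal.mul_ne_top hCf (ENNReal.mul_ne_top hNξr hNηr)) (fun k => ?_)
    calc ∫⁻ g, (‖f g * M ((k : G) * g)‖₊ : ℝ≥0∞) ∂μG
        = ∫⁻ g, (‖f g‖₊ : ℝ≥0∞) * (‖M ((k : G) * g)‖₊ : ℝ≥0∞) ∂μG :=
          lintegral_congr fun g => by rw [nnnorm_mul, ENNReal.coe_mul]
      _ ≤ ∫⁻ g, (‖f g‖₊ : ℝ≥0∞) * (Nξ ^ (1 / 2 : ℝ) * Nη ^ (1 / 2 : ℝ)) ∂μG :=
          lintegral_mono fun g => mul_le_mul' le_rfl (hMb k g)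
      _ = (∫⁻ g, (‖f g‖₊ : ℝ≥0∞) ∂μG) * (Nξ ^ (1 / 2 : ℝ) * Nη ^ (1 / 2 : ℝ)) :=
          lintegral_mul_const _ hf_cont.measurable.nnnorm.coe_nnreal_ennreal
  have hbigswap := integral_integral_swap
    (f := fun (k : ↥K) (g : G) => f g * M ((k : G) * g)) hHint
  set Bη : ℂ := ∫ x, ηf x ∂ν with hBηdef
  have part1 : ∫ g, f g * M g ∂μG
      = (∫ g, f g * T g ∂μG) * (starRingEnd ℂ) Bη := by
    have hmid : ∫ g, f g * M g ∂μG = ∫ g, f g * (T g * (starRingEnd ℂ) Bη) ∂μG := by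
      rw [havg1, hbigswap]
      refine integral_congr_ae (Filter.Eventually.of_forall fun g => ?_)
      show ∫ k : ↥K, f g * M ((k : G) * g) ∂μK = f g * (T g * (starRingEnd ℂ) Bη)
      rw [integral_const_mul, key1 g]
      congr 1
      have hcongr : ∫ x, (Real.sqrt (c g x) : ℂ) * ξf (g⁻¹ • x)
            * (starRingEnd ℂ) (Qη x) ∂ν
          = ∫ x, (Real.sqrt (c g x) : ℂ) * ξf (g⁻¹ • x) * (starRingEnd ℂ) Bη ∂ν := by
        refine integral_congr_ae ?_
        filter_upwards [hQη_const] with x hx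
        rw [hx]
      rw [hcongr, integral_mul_const]
    rw [hmid, show (fun g => f g * (T g * (starRingEnd ℂ) Bη))
      = fun g => (f g * T g) * (starRingEnd ℂ) Bη from funext fun g => by ring]
    exact integral_mul_const _ _
  -- ## Part II : right translation invariance
  have hfTm : AEStronglyMeasurable (fun g => f g * T g) μG :=
    (hf_cont.measurable.mul hTm.measurable).aestronglyMeasurable
  have htransk2 : ∀ k' : ↥K, ∫ g, f g * T g ∂μG = ∫ g, f g * T (g * (k' : G)) ∂μG := by
    intro k'
    conv_lhs => rw [show μG = Measure.map (· * (k' : G)) μG from (hμGr k').symm]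
    rw [integral_map (measurable_mul_const ((k' : G))).aemeasurable
      (by rw [hμGr k']; exact hfTm)]
    refine integral_congr_ae (Filter.Eventually.of_forall fun g => ?_)
    show f (g * (k' : G)) * T (g * (k' : G)) = f g * T (g * (k' : G))
    have hfk : f (g * (k' : G)) = f g := by
      have := hf_biK 1 K.one_mem (k' : G) k'.2 g
      rwa [one_mul] at this
    rw [hfk]
  have hstep2 : ∀ (k' : ↥K) (g : G), T (g * (k' : G))
      = ∫ x, (Real.sqrt (c g x) : ℂ) * ξf ((k' : G)⁻¹ • g⁻¹ • x) ∂ν := by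
    intro k' g
    have hTdef : T (g * (k' : G)) = ∫ x, (Real.sqrt (c (g * (k' : G)) x) : ℂ)
        * ξf ((g * (k' : G))⁻¹ • x) ∂ν := rfl
    rw [hTdef]
    refine integral_congr_ae ?_
    filter_upwards [RMC.cocycle_right ν hact hc_meas hc_pos hc g (k' : G)
      (hKinv (k' : G) k'.2)] with x hx
    rw [hx, mul_inv_rev, mul_smul]
  have hTb : ∀ h : G, (‖T h‖₊ : ℝ≥0∞) ≤ Nξ ^ (1 / 2 : ℝ) := by
    intro h
    have hTdef : T h = ∫ x, (Real.sqrt (c h x) : ℂ) * ξf (h⁻¹ • x) * (fun _ : X => (1:ℂ)) x ∂ν := by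
      show (∫ x, (Real.sqrt (c h x) : ℂ) * ξf (h⁻¹ • x) ∂ν) = _
      exact integral_congr_ae (Filter.Eventually.of_forall fun x => by simp)
    rw [hTdef]
    have hb := RMC.coeff_bound ν hact hc_meas hc_pos hc ξf hξm h
      (fun _ : X => (1 : ℂ)) measurable_const
    refine hb.trans ?_
    rw [hNξdef]
    have h1 : ∫⁻ x, (‖(1 : ℂ)‖₊ : ℝ≥0∞) ^ (2 : ℝ) ∂ν = 1 := by
      simp [ENNReal.one_rpow, measure_univ]
    rw [h1]
    simp [ENNReal.one_rpow]
  have havg2 : ∫ g, f g * T g ∂μG = ∫ k' : ↥K, ∫ g, f g * T (g * (k' : G)) ∂μG ∂μK := by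
    have h1 : ∫ g, f g * T g ∂μG = ∫ _k : ↥K, ∫ g, f g * T g ∂μG ∂μK := by
      rw [integral_const]; simp
    rw [h1]
    exact integral_congr_ae (Filter.Eventually.of_forall fun k => htransk2 k)
  have hH2m : AEStronglyMeasurable (fun p : ↥K × G => f p.2 * T (p.2 * (p.1 : G)))
      (μK.prod μG) :=
    ((hf_cont.measurable.comp measurable_snd).mul
      (hTm.measurable.comp (measurable_snd.mul (hcoe.comp measurable_fst)))).aestronglyMeasurable
  have hH2int : Integrable (fun p : ↥K × G => f p.2 * T (p.2 * (p.1 : G))) (μK.prod μG) := by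
    refine RMC.integrable_prod_of_bound μK μG _ hH2m
      ((∫⁻ g, (‖f g‖₊ : ℝ≥0∞) ∂μG) * Nξ ^ (1 / 2 : ℝ))
      (ENNReal.mul_ne_top hCf hNξr) (fun k => ?_)
    calc ∫⁻ g, (‖f g * T (g * (k : G))‖₊ : ℝ≥0∞) ∂μG
        = ∫⁻ g, (‖f g‖₊ : ℝ≥0∞) * (‖T (g * (k : G))‖₊ : ℝ≥0∞) ∂μG :=
          lintegral_congr fun g => by rw [nnnorm_mul, ENNReal.coe_mul]
      _ ≤ ∫⁻ g, (‖f g‖₊ : ℝ≥0∞) * Nξ ^ (1 / 2 : ℝ) ∂μG :=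
          lintegral_mono fun g => mul_le_mul' le_rfl (hTb _)
      _ = _ := lintegral_mul_const _ hf_cont.measurable.nnnorm.coe_nnreal_ennreal
  have hbigswap2 := integral_integral_swap
    (f := fun (k' : ↥K) (g : G) => f g * T (g * (k' : G))) hH2int
  set Aξ : ℂ := ∫ x, ξf x ∂ν with hAξdef
  -- ## Part II : the inner average over k'
  have key2 : ∀ g : G, ∫ k' : ↥K, T (g * (k' : G)) ∂μK = (Ξ g : ℂ) * Aξ := by
    intro g
    rw [show (fun k' : ↥K => T (g * (k' : G)))
        = fun k' : ↥K => ∫ x, (Real.sqrt (c g x) : ℂ) * ξf ((k' : G)⁻¹ • g⁻¹ • x) ∂ν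
        from funext fun k' => hstep2 k' g]
    have hGm : Measurable fun p : ↥K × X => (Real.sqrt (c g p.2) : ℂ)
        * ξf ((p.1 : G)⁻¹ • g⁻¹ • p.2) :=
      ((hsqrtm g).comp measurable_snd).mul
        (hξm.comp (hact.comp (((hcoe.comp measurable_fst).inv).prodMk
          ((RMC.meas_smul hact g⁻¹).comp measurable_snd))))
    have hGint : Integrable (fun p : ↥K × X => (Real.sqrt (c g p.2) : ℂ)
        * ξf ((p.1 : G)⁻¹ • g⁻¹ • p.2)) (μK.prod ν) := by
      refine RMC.integrable_prod_of_bound μK ν _ hGm.aestronglyMeasurable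
        (Nξ ^ (1 / 2 : ℝ)) hNξr (fun k' => ?_)
      have hae : ∀ᵐ x ∂ν, ENNReal.ofReal (Real.sqrt (c g x))
            * (‖ξf ((k' : G)⁻¹ • g⁻¹ • x)‖₊ : ℝ≥0∞)
          = ENNReal.ofReal (Real.sqrt (c (g * (k' : G)) x))
            * (‖ξf ((g * (k' : G))⁻¹ • x)‖₊ : ℝ≥0∞) := by
        filter_upwards [RMC.cocycle_right ν hact hc_meas hc_pos hc g (k' : G)
          (hKinv (k' : G) k'.2)] with x hx
        rw [hx, mul_inv_rev, mul_smul]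
      calc ∫⁻ x, (‖(Real.sqrt (c g x) : ℂ) * ξf ((k' : G)⁻¹ • g⁻¹ • x)‖₊ : ℝ≥0∞) ∂ν
          = ∫⁻ x, ENNReal.ofReal (Real.sqrt (c g x))
              * (‖ξf ((k' : G)⁻¹ • g⁻¹ • x)‖₊ : ℝ≥0∞) ∂ν :=
            lintegral_congr fun x => RMC.enorm_pair (Real.sqrt_nonneg _) _
        _ = ∫⁻ x, ENNReal.ofReal (Real.sqrt (c (g * (k' : G)) x))
              * (‖ξf ((g * (k' : G))⁻¹ • x)‖₊ : ℝ≥0∞) ∂ν := lintegral_congr_ae hae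
        _ = ∫⁻ x, ENNReal.ofReal (Real.sqrt (c (g * (k' : G)) x))
              * (‖ξf ((g * (k' : G))⁻¹ • x)‖₊ : ℝ≥0∞) * (fun _ : X => (1:ℝ≥0∞)) x ∂ν := by
            simp
        _ ≤ (∫⁻ x, (‖ξf x‖₊ : ℝ≥0∞) ^ (2 : ℝ) ∂ν) ^ (1 / 2 : ℝ)
              * (∫⁻ x, (fun _ : X => (1:ℝ≥0∞)) x ^ (2 : ℝ) ∂ν) ^ (1 / 2 : ℝ) :=
            RMC.master_bound ν hact hc_meas hc_pos hc ξf hξm (g * (k' : G))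
              (fun _ : X => (1:ℝ≥0∞)) measurable_const
        _ = Nξ ^ (1 / 2 : ℝ) := by
            rw [← hNξdef]
            have h1 : ∫⁻ x, (fun _ : X => (1:ℝ≥0∞)) x ^ (2 : ℝ) ∂ν = 1 := by
              simp [ENNReal.one_rpow, measure_univ]
            rw [h1]
            simp [ENNReal.one_rpow]
    have hswap2 := integral_integral_swap
      (f := fun (k' : ↥K) (x : X) => (Real.sqrt (c g x) : ℂ)
        * ξf ((k' : G)⁻¹ • g⁻¹ • x)) hGint
    rw [hswap2]
    have hinner2 : ∫ x, (∫ k' : ↥K, (Real.sqrt (c g x) : ℂ)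
          * ξf ((k' : G)⁻¹ • g⁻¹ • x) ∂μK) ∂ν
        = ∫ x, (Real.sqrt (c g x) : ℂ) * Pξ (g⁻¹ • x) ∂ν := by
      refine integral_congr_ae (Filter.Eventually.of_forall fun x => ?_)
      show ∫ k' : ↥K, (Real.sqrt (c g x) : ℂ) * ξf ((k' : G)⁻¹ • g⁻¹ • x) ∂μK
          = (Real.sqrt (c g x) : ℂ) * Pξ (g⁻¹ • x)
      rw [integral_const_mul]
    rw [hinner2]
    have hPg : ∀ᵐ x ∂ν, Pξ (g⁻¹ • x) = Aξ := by
      have := RMC.ae_comp ν hact hc g⁻¹ hPξ_const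
      filter_upwards [this] with x hx
      exact hx
    have hrepl : ∫ x, (Real.sqrt (c g x) : ℂ) * Pξ (g⁻¹ • x) ∂ν
        = ∫ x, (Real.sqrt (c g x) : ℂ) * Aξ ∂ν := by
      refine integral_congr_ae ?_
      filter_upwards [hPg] with x hx
      rw [hx]
    rw [hrepl, integral_mul_const]
    congr 1
    rw [hΞ g]
    exact integral_ofReal
  -- ## Part II : conclusion
  have part2 : ∫ g, f g * T g ∂μG = (∫ g, f g * (Ξ g : ℂ) ∂μG) * Aξ := by
    rw [havg2, hbigswap2]
    have hmid : ∫ g, (∫ k' : ↥K, f g * T (g * (k' : G)) ∂μK) ∂μG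
        = ∫ g, (f g * (Ξ g : ℂ)) * Aξ ∂μG := by
      refine integral_congr_ae (Filter.Eventually.of_forall fun g => ?_)
      show ∫ k' : ↥K, f g * T (g * (k' : G)) ∂μK = (f g * (Ξ g : ℂ)) * Aξ
      rw [integral_const_mul, key2 g]
      ring
    rw [hmid]
    exact integral_mul_const _ _
  -- ## Conclusion
  show ∫ g, f g * M g ∂μG
      = Aξ * (∫ x, (starRingEnd ℂ) (ηf x) ∂ν) * ∫ g, f g * (Ξ g : ℂ) ∂μG
  rw [part1, part2, integral_conj, ← hBηdef]
  ring
end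

section
/- (Abstract form of Proposition 3.3.) Let Γ ⊆ G be a countable discrete subgroup. Let f: G → [0,∞) be measurable and bi-K-invariant with ∫_G f(g) Ξ(g) dμ_G(g) < ∞, and let ξ: X → [0,∞] be measurable with ∫_X ξ dν < ∞. Suppose there exist a relatively compact open neighborhood U of the identity whose translates γU (γ ∈ Γ) are pairwise disjoint, and a constant C > 0, such that for every γ ∈ Γ and every g ∈ γU one has f(γ) ≤ C f(g) and ∫_X c(γ,x)^{1/2} ξ(x) dν(x) ≤ C ∫_X c(g,x)^{1/2} ξ(x) dν(x). Then Σ_{γ∈Γ} f(γ) ∫_X c(γ,x)^{1/2} ξ(x) dν(x) ≤ (C² / μ_G(U)) · (∫_G f Ξ dμ_G) · (∫_X ξ dν). -/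
open MeasureTheory ENNReal

set_option maxHeartbeats 2000000 in
/-- Abstract form of Proposition 3.3: for a countable discrete subgroup `Γ ⊆ G`,
a nonnegative measurable bi-`K`-invariant `f` with `∫_G f Ξ dμ_G < ∞` which is stable
relative to `Γ` (together with the matrix coefficients `g ↦ ∫ c(g,x)^{1/2} ξ dν`),
with constant `C` and disjointness neighborhood `U`, one has
`Σ_{γ∈Γ} f(γ) ∫_X c(γ,x)^{1/2} ξ dν ≤ (C²/μ_G(U)) (∫_G f Ξ dμ_G) (∫_X ξ dν)`. -/
theorem discretized_radial_estimate
    {G : Type*} [Group G] [TopologicalSpace G] [IsTopologicalGroup G]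
    [LocallyCompactSpace G] [SecondCountableTopology G]
    [MeasurableSpace G] [BorelSpace G]
    (μG : Measure G) [μG.IsHaarMeasure]
    (K : Subgroup G) (hK : IsCompact (K : Set G))
    {X : Type*} [MeasurableSpace X] [MulAction G X]
    (ν : Measure X) [IsProbabilityMeasure ν]
    (hact : Measurable (fun p : G × X => p.1 • p.2))
    (c : G → X → ℝ)
    (hc_meas : Measurable (fun p : G × X => c p.1 p.2))
    (hc_pos : ∀ g : G, ∀ᵐ x ∂ν, 0 < c g x)
    (hc : ∀ g : G, Measure.map (fun x : X => g • x) ν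
        = ν.withDensity (fun x => ENNReal.ofReal (c g x)))
    (hKinv : ∀ k ∈ K, Measure.map (fun x : X => k • x) ν = ν)
    (herg : ∀ A : Set X, MeasurableSet A →
      (∀ k ∈ K, ν (symmDiff ((fun x => k • x) '' A) A) = 0) → ν A = 0 ∨ ν A = 1)
    (Ξ : G → ℝ) (hΞ : ∀ g : G, Ξ g = ∫ x, Real.sqrt (c g x) ∂ν)
    (Γ : Subgroup G) (hΓ_count : Countable Γ) (hΓ_disc : DiscreteTopology Γ)
    (f : G → ℝ) (hf_meas : Measurable f) (hf_nonneg : ∀ g, 0 ≤ f g)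
    (hf_biK : ∀ k ∈ K, ∀ k' ∈ K, ∀ g : G, f (k * g * k') = f g)
    (hfΞ : ∫⁻ g, ENNReal.ofReal (f g * Ξ g) ∂μG < ⊤)
    (ξ : X → ℝ≥0∞) (hξ_meas : Measurable ξ) (hξ_fin : ∫⁻ x, ξ x ∂ν < ⊤)
    (U : Set G) (hU_open : IsOpen U) (hU_mem : (1 : G) ∈ U)
    (hU_cpt : IsCompact (closure U))
    (hdisj : ∀ γ ∈ Γ, ∀ γ' ∈ Γ, γ ≠ γ' →
      Disjoint ((fun u => γ * u) '' U) ((fun u => γ' * u) '' U))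
    (C : ℝ) (hC : 0 < C)
    (hstab_f : ∀ γ ∈ Γ, ∀ g ∈ (fun u => γ * u) '' U, f γ ≤ C * f g)
    (hstab_coeff : ∀ γ ∈ Γ, ∀ g ∈ (fun u => γ * u) '' U,
      ∫⁻ x, ENNReal.ofReal (Real.sqrt (c γ x)) * ξ x ∂ν
        ≤ ENNReal.ofReal C * ∫⁻ x, ENNReal.ofReal (Real.sqrt (c g x)) * ξ x ∂ν) :
    ∑' γ : Γ, ENNReal.ofReal (f (γ : G))
        * ∫⁻ x, ENNReal.ofReal (Real.sqrt (c (γ : G) x)) * ξ x ∂ν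
      ≤ (ENNReal.ofReal (C ^ 2) / μG U)
        * (∫⁻ g, ENNReal.ofReal (f g * Ξ g) ∂μG) * ∫⁻ x, ξ x ∂ν := by
  classical
  haveI : Countable Γ := hΓ_count
  -- measurability helpers
  have msmul : ∀ g : G, Measurable (fun x : X => g • x) := fun g =>
    hact.comp (measurable_const.prodMk measurable_id)
  have hcg : ∀ g : G, Measurable (c g) := fun g =>
    hc_meas.comp (measurable_const.prodMk measurable_id)
  set F : G → ℝ≥0∞ := fun g => ENNReal.ofReal (f g) with hFdef
  set S : G → X → ℝ≥0∞ := fun g x => ENNReal.ofReal (Real.sqrt (c g x)) with hSdef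
  have hF_meas : Measurable F := ENNReal.measurable_ofReal.comp hf_meas
  have hS_meas2 : Measurable (fun p : G × X => S p.1 p.2) :=
    ENNReal.measurable_ofReal.comp hc_meas.sqrt
  have hSg : ∀ g, Measurable (S g) := fun g =>
    ENNReal.measurable_ofReal.comp (hcg g).sqrt
  set I : G → ℝ≥0∞ := fun g => ∫⁻ x, S g x * ξ x ∂ν with hIdef
  have hI_meas : Measurable I := by
    apply Measurable.lintegral_prod_right (f := fun g x => S g x * ξ x)
    exact hS_meas2.mul (hξ_meas.comp measurable_snd)
  set h : X → ℝ≥0∞ := fun x => ∫⁻ g, F g * S g x ∂μG with hhdef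
  have hh_meas : Measurable h := by
    apply Measurable.lintegral_prod_left (f := fun g x => F g * S g x)
    exact (hF_meas.comp measurable_fst).mul hS_meas2
  -- the density integrates to 1
  have densone : ∀ g : G, ∫⁻ x, ENNReal.ofReal (c g x) ∂ν = 1 := by
    intro g
    have h1 : (ν.withDensity fun x => ENNReal.ofReal (c g x)) Set.univ = ν Set.univ := by
      rw [← hc g, Measure.map_apply (msmul g) MeasurableSet.univ, Set.preimage_univ]
    rwa [withDensity_apply _ MeasurableSet.univ, setLIntegral_univ, measure_univ] at h1
  -- integrability of sqrt(c g ·)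
  have hint_sqrt : ∀ g : G, Integrable (fun x => Real.sqrt (c g x)) ν := by
    intro g
    have hc_int : Integrable (c g) ν := by
      refine ⟨(hcg g).aestronglyMeasurable, ?_⟩
      rw [hasFiniteIntegral_iff_ofReal ((hc_pos g).mono fun x hx => hx.le)]
      rw [densone g]
      exact one_lt_top
    refine Integrable.mono' ((integrable_const (1 : ℝ)).add hc_int)
      ((hcg g).sqrt.aestronglyMeasurable) ?_
    filter_upwards [hc_pos g] with x hx
    have h0 : (0:ℝ) ≤ c g x := hx.le
    have hb : Real.sqrt (c g x) ≤ 1 + c g x := by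
      nlinarith [Real.sq_sqrt h0, Real.sqrt_nonneg (c g x)]
    rw [Real.norm_eq_abs, abs_of_nonneg (Real.sqrt_nonneg _)]
    exact hb
  have hΞ_lint : ∀ g : G, ∫⁻ x, S g x ∂ν = ENNReal.ofReal (Ξ g) := by
    intro g
    rw [hΞ g, ofReal_integral_eq_lintegral_ofReal (hint_sqrt g)
      (Filter.Eventually.of_forall fun x => Real.sqrt_nonneg _)]
  -- cocycle identity: c(k g, x) = c(g, k⁻¹ x) a.e.
  have cocycle : ∀ k ∈ K, ∀ g : G,
      (fun x => ENNReal.ofReal (c (k * g) x)) =ᵐ[ν] fun x => ENNReal.ofReal (c g (k⁻¹ • x)) := by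
    intro k hk g
    have hmapk : Measure.map (fun x : X => k • x) ν = ν := hKinv k hk
    have hmeas2 : Measurable fun x : X => ENNReal.ofReal (c g (k⁻¹ • x)) :=
      ENNReal.measurable_ofReal.comp ((hcg g).comp (msmul k⁻¹))
    have key : ν.withDensity (fun x => ENNReal.ofReal (c (k * g) x))
        = ν.withDensity (fun x => ENNReal.ofReal (c g (k⁻¹ • x))) := by
      rw [← hc (k * g)]
      have hcomp : (fun x : X => (k * g) • x)
          = (fun x : X => k • x) ∘ fun x : X => g • x := by
        funext x; simp [mul_smul]
      rw [hcomp, ← Measure.map_map (msmul k) (msmul g), hc g]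
      ext A hA
      rw [Measure.map_apply (msmul k) hA, withDensity_apply _ ((msmul k) hA),
        withDensity_apply _ hA]
      conv_rhs => rw [← hmapk]
      rw [setLIntegral_map hA hmeas2 (msmul k)]
      simp [inv_smul_smul]
    exact (withDensity_eq_iff (ENNReal.measurable_ofReal.comp (hcg (k * g))).aemeasurable
      hmeas2.aemeasurable (by
        show (∫⁻ x, ENNReal.ofReal (c (k * g) x) ∂ν) ≠ ⊤
        rw [densone]; exact one_ne_top)).mp key
  have sqrt_cocycle : ∀ k ∈ K, ∀ g : G, ∀ᵐ x ∂ν, S (k * g) x = S g (k⁻¹ • x) := by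
    intro k hk g
    have hpos2 : ∀ᵐ x ∂ν, 0 < c g (k⁻¹ • x) := by
      have h1 := hc_pos g
      rw [← hKinv k⁻¹ (inv_mem hk)] at h1
      exact (ae_map_iff (msmul k⁻¹).aemeasurable
        (measurableSet_lt measurable_const (hcg g))).mp h1
    filter_upwards [cocycle k hk g, hc_pos (k * g), hpos2] with x hx h1 h2
    have heq : c (k * g) x = c g (k⁻¹ • x) :=
      (ENNReal.ofReal_eq_ofReal_iff h1.le h2.le).mp hx
    simp only [hSdef, heq]
  -- K-invariance of h
  have hinv : ∀ k ∈ K, ∀ᵐ x ∂ν, h (k⁻¹ • x) = h x := by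
    intro k hk
    have hm1 : Measurable fun p : G × X => S (k * p.1) p.2 :=
      ENNReal.measurable_ofReal.comp
        ((hc_meas.comp ((measurable_const.mul measurable_fst).prodMk measurable_snd)).sqrt)
    have hm2 : Measurable fun p : G × X => S p.1 (k⁻¹ • p.2) :=
      ENNReal.measurable_ofReal.comp
        ((hc_meas.comp (measurable_fst.prodMk ((msmul k⁻¹).comp measurable_snd))).sqrt)
    have heqset : ∀ {α : Type _} [MeasurableSpace α] (u v : α → ℝ≥0∞), Measurable u →
        Measurable v → MeasurableSet {a | u a = v a} := by
      intro α _ u v hu hv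
      have : {a | u a = v a} = {a | u a ≤ v a} ∩ {a | v a ≤ u a} := by
        ext a; simp [le_antisymm_iff]
      rw [this]
      exact (measurableSet_le hu hv).inter (measurableSet_le hv hu)
    have hBmeas : MeasurableSet {p : G × X | ¬ S (k * p.1) p.2 = S p.1 (k⁻¹ • p.2)} :=
      (heqset _ _ hm1 hm2).compl
    have hprodnull : (μG.prod ν) {p : G × X | ¬ S (k * p.1) p.2 = S p.1 (k⁻¹ • p.2)} = 0 := by
      rw [Measure.measure_prod_null hBmeas]
      refine Filter.Eventually.of_forall fun g => ?_
      exact ae_iff.mp (sqrt_cocycle k hk g)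
    have hswapnull :
        (ν.prod μG) {p : X × G | ¬ S (k * p.2) p.1 = S p.2 (k⁻¹ • p.1)} = 0 := by
      rw [← Measure.prod_swap, Measure.map_apply measurable_swap]
      · exact hprodnull
      · exact (heqset _ _
          (ENNReal.measurable_ofReal.comp
            ((hc_meas.comp ((measurable_const.mul measurable_snd).prodMk measurable_fst)).sqrt))
          (ENNReal.measurable_ofReal.comp
            ((hc_meas.comp (measurable_snd.prodMk ((msmul k⁻¹).comp measurable_fst))).sqrt))).compl
    have hxg : ∀ᵐ x ∂ν, ∀ᵐ g ∂μG, S (k * g) x = S g (k⁻¹ • x) := by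
      have hae : ∀ᵐ p ∂(ν.prod μG), S (k * p.2) p.1 = S p.2 (k⁻¹ • p.1) :=
        ae_iff.mpr hswapnull
      exact Measure.ae_ae_of_ae_prod hae
    filter_upwards [hxg] with x hx
    have hstep : ∫⁻ g, F g * S g (k⁻¹ • x) ∂μG = ∫⁻ g, F g * S g x ∂μG := by
      calc ∫⁻ g, F g * S g (k⁻¹ • x) ∂μG
          = ∫⁻ g, F (k * g) * S (k * g) x ∂μG := by
            refine lintegral_congr_ae ?_
            filter_upwards [hx] with g hg
            have hFk : F (k * g) = F g := by
              simp only [hFdef]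
              have := hf_biK k hk 1 (one_mem K) g
              rw [mul_one] at this
              rw [this]
            rw [hFk, ← hg]
        _ = ∫⁻ g, F g * S g x ∂μG :=
            lintegral_mul_left_eq_self (fun g' => F g' * S g' x) k
    exact hstep
  -- ergodicity: superlevel sets of h have measure 0 or 1
  have hlevel : ∀ t : ℝ≥0∞, ν {x | t < h x} = 0 ∨ ν {x | t < h x} = 1 := by
    intro t
    refine herg _ (measurableSet_lt measurable_const hh_meas) ?_
    intro k hk
    have himg : (fun x => k • x) '' {x | t < h x}
        = (fun x => k⁻¹ • x) ⁻¹' {x | t < h x} := by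
      ext y
      constructor
      · rintro ⟨x, hx, rfl⟩; simpa [inv_smul_smul] using hx
      · intro hy; exact ⟨k⁻¹ • y, hy, by simp [smul_inv_smul]⟩
    have hsub : symmDiff ((fun x => k • x) '' {x | t < h x}) {x | t < h x}
        ⊆ {x | ¬ h (k⁻¹ • x) = h x} := by
      rw [himg]
      intro y hy
      simp only [Set.mem_symmDiff, Set.mem_preimage, Set.mem_setOf_eq] at hy ⊢
      rcases hy with ⟨h1, h2⟩ | ⟨h1, h2⟩
      · exact fun he => h2 (by rw [← he]; exact h1)
      · exact fun he => h2 (by rw [he]; exact h1)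
    exact measure_mono_null hsub (ae_iff.mp (hinv k hk))
  -- h is a.e. bounded by its mean m
  set m : ℝ≥0∞ := ∫⁻ x, h x ∂ν with hmdef
  have hhm : ∀ᵐ x ∂ν, h x ≤ m := by
    have hgt : ∀ t : ℝ≥0∞, m < t → ν {x | t < h x} = 0 := by
      intro t ht
      rcases hlevel t with h0 | h1
      · exact h0
      · exfalso
        have hle : t * ν {x | t < h x} ≤ m := by
          calc t * ν {x | t < h x} ≤ t * ν {x | t ≤ h x} := by
                gcongr
                exact fun hx => le_of_lt hx
            _ ≤ m := mul_meas_ge_le_lintegral₀ hh_meas.aemeasurable t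
        rw [h1, mul_one] at hle
        exact absurd hle (not_le.mpr ht)
    have hnull : ν {x | m < h x} = 0 := by
      have hsub : {x | m < h x} ⊆
          ⋃ q : ℚ, {x | m < (Real.toNNReal q : ℝ≥0∞) ∧ (Real.toNNReal q : ℝ≥0∞) < h x} := by
        intro x hx
        obtain ⟨q, _, hq1, hq2⟩ := ENNReal.lt_iff_exists_rat_btwn.mp hx
        exact Set.mem_iUnion.mpr ⟨q, hq1, hq2⟩
      refine measure_mono_null hsub (measure_iUnion_null fun q => ?_)
      by_cases hq : m < (Real.toNNReal q : ℝ≥0∞)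
      · exact measure_mono_null (fun x hx => hx.2) (hgt _ hq)
      · have : {x | m < (Real.toNNReal q : ℝ≥0∞) ∧ (Real.toNNReal q : ℝ≥0∞) < h x}
            = (∅ : Set X) := by
          ext x; simp only [Set.mem_setOf_eq, Set.mem_empty_iff_false, iff_false]
          exact fun hx => hq hx.1
        rw [this]; exact measure_empty
    rw [ae_iff]
    simpa only [not_le] using hnull
  -- Tonelli: m equals the f·Ξ integral
  have hswap1 : ∫⁻ x, ∫⁻ g, F g * S g x ∂μG ∂ν = ∫⁻ g, ∫⁻ x, F g * S g x ∂ν ∂μG := by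
    apply lintegral_lintegral_swap (f := fun x g => F g * S g x)
    exact ((hF_meas.comp measurable_snd).mul
      (hS_meas2.comp (measurable_snd.prodMk measurable_fst))).aemeasurable
  have hmeq : m = ∫⁻ g, ENNReal.ofReal (f g * Ξ g) ∂μG := by
    calc m = ∫⁻ g, ∫⁻ x, F g * S g x ∂ν ∂μG := hswap1
      _ = ∫⁻ g, F g * ∫⁻ x, S g x ∂ν ∂μG :=
          lintegral_congr fun g => lintegral_const_mul (F g) (hSg g)
      _ = ∫⁻ g, ENNReal.ofReal (f g * Ξ g) ∂μG := by
          refine lintegral_congr fun g => ?_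
          rw [hΞ_lint g, hFdef, ← ENNReal.ofReal_mul (hf_nonneg g)]
  -- the key integral bound
  have hT : ∫⁻ g, F g * I g ∂μG ≤ m * ∫⁻ x, ξ x ∂ν := by
    have h1 : ∫⁻ g, F g * I g ∂μG = ∫⁻ x, h x * ξ x ∂ν := by
      calc ∫⁻ g, F g * I g ∂μG
          = ∫⁻ g, ∫⁻ x, F g * (S g x * ξ x) ∂ν ∂μG :=
            lintegral_congr fun g =>
              (lintegral_const_mul (F g) ((hSg g).mul hξ_meas)).symm
        _ = ∫⁻ x, ∫⁻ g, F g * (S g x * ξ x) ∂μG ∂ν := by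
            apply lintegral_lintegral_swap (f := fun g x => F g * (S g x * ξ x))
            exact ((hF_meas.comp measurable_fst).mul
              (hS_meas2.mul (hξ_meas.comp measurable_snd))).aemeasurable
        _ = ∫⁻ x, (∫⁻ g, F g * S g x ∂μG) * ξ x ∂ν := by
            refine lintegral_congr fun x => ?_
            have hgx : Measurable fun g => F g * S g x :=
              hF_meas.mul (hS_meas2.comp (measurable_id.prodMk measurable_const))
            rw [← lintegral_mul_const (ξ x) hgx]
            exact lintegral_congr fun g => by ring
    rw [h1]
    calc ∫⁻ x, h x * ξ x ∂ν ≤ ∫⁻ x, m * ξ x ∂ν :=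
          lintegral_mono_ae (hhm.mono fun x hx => mul_le_mul_left hx _)
      _ = m * ∫⁻ x, ξ x ∂ν := lintegral_const_mul m hξ_meas
  -- translates of U
  set s : Γ → Set G := fun γ => (fun u => (γ : G) * u) '' U with hsdef
  have hs_eq : ∀ γ : Γ, s γ = (fun v => (γ : G)⁻¹ * v) ⁻¹' U := by
    intro γ; ext v
    constructor
    · rintro ⟨u, hu, rfl⟩
      simpa [← mul_assoc] using hu
    · intro hv
      exact ⟨(γ : G)⁻¹ * v, hv, by simp [← mul_assoc]⟩
  have hs_meas : ∀ γ : Γ, MeasurableSet (s γ) := fun γ => by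
    rw [hs_eq]
    exact hU_open.measurableSet.preimage (measurable_const_mul _)
  have hs_measure : ∀ γ : Γ, μG (s γ) = μG U := fun γ => by
    rw [hs_eq]
    exact measure_preimage_mul μG _ U
  have hs_disj : Pairwise (Function.onFun Disjoint s) := by
    intro γ γ' hne
    exact hdisj (γ : G) γ.2 (γ' : G) γ'.2 (fun hcoe => hne (Subtype.ext hcoe))
  -- per-γ estimate
  have key : ∀ γ : Γ, μG U * (F (γ : G) * I (γ : G))
      ≤ ENNReal.ofReal (C ^ 2) * ∫⁻ g in s γ, F g * I g ∂μG := by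
    intro γ
    have hb : ∀ g ∈ s γ, F (γ : G) * I (γ : G) ≤ ENNReal.ofReal (C ^ 2) * (F g * I g) := by
      intro g hg
      have h1 : F (γ : G) ≤ ENNReal.ofReal C * F g := by
        rw [hFdef]
        simp only []
        rw [← ENNReal.ofReal_mul hC.le]
        exact ENNReal.ofReal_le_ofReal (hstab_f (γ : G) γ.2 g hg)
      have h2 : I (γ : G) ≤ ENNReal.ofReal C * I g := hstab_coeff (γ : G) γ.2 g hg
      calc F (γ : G) * I (γ : G)
          ≤ (ENNReal.ofReal C * F g) * (ENNReal.ofReal C * I g) := mul_le_mul' h1 h2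
        _ = (ENNReal.ofReal C * ENNReal.ofReal C) * (F g * I g) := by ring
        _ = ENNReal.ofReal (C ^ 2) * (F g * I g) := by
            rw [← ENNReal.ofReal_mul hC.le, sq]
    calc μG U * (F (γ : G) * I (γ : G))
        = ∫⁻ _ in s γ, F (γ : G) * I (γ : G) ∂μG := by
          rw [setLIntegral_const, hs_measure γ, mul_comm]
      _ ≤ ∫⁻ g in s γ, ENNReal.ofReal (C ^ 2) * (F g * I g) ∂μG :=
          setLIntegral_mono (measurable_const.mul (hF_meas.mul hI_meas)) hb
      _ = ENNReal.ofReal (C ^ 2) * ∫⁻ g in s γ, F g * I g ∂μG :=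
          lintegral_const_mul _ (hF_meas.mul hI_meas)
  -- summation
  have hsum : μG U * ∑' γ : Γ, F (γ : G) * I (γ : G)
      ≤ ENNReal.ofReal (C ^ 2) * (m * ∫⁻ x, ξ x ∂ν) := by
    calc μG U * ∑' γ : Γ, F (γ : G) * I (γ : G)
        = ∑' γ : Γ, μG U * (F (γ : G) * I (γ : G)) := ENNReal.tsum_mul_left.symm
      _ ≤ ∑' γ : Γ, ENNReal.ofReal (C ^ 2) * ∫⁻ g in s γ, F g * I g ∂μG :=
          ENNReal.tsum_le_tsum key
      _ = ENNReal.ofReal (C ^ 2) * ∑' γ : Γ, ∫⁻ g in s γ, F g * I g ∂μG :=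
          ENNReal.tsum_mul_left
      _ = ENNReal.ofReal (C ^ 2) * ∫⁻ g in ⋃ γ : Γ, s γ, F g * I g ∂μG := by
          rw [lintegral_iUnion hs_meas hs_disj]
      _ ≤ ENNReal.ofReal (C ^ 2) * ∫⁻ g, F g * I g ∂μG := by
          gcongr
          exact Measure.restrict_le_self
      _ ≤ ENNReal.ofReal (C ^ 2) * (m * ∫⁻ x, ξ x ∂ν) := mul_le_mul_right hT _
  -- conclude
  have hU0 : μG U ≠ 0 := (hU_open.measure_pos μG ⟨1, hU_mem⟩).ne'
  have hUtop : μG U ≠ ⊤ :=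
    (lt_of_le_of_lt (measure_mono subset_closure) hU_cpt.measure_lt_top).ne
  rw [hmeq] at hsum
  have hRHS : (ENNReal.ofReal (C ^ 2) / μG U)
        * (∫⁻ g, ENNReal.ofReal (f g * Ξ g) ∂μG) * ∫⁻ x, ξ x ∂ν
      = (ENNReal.ofReal (C ^ 2)
          * ((∫⁻ g, ENNReal.ofReal (f g * Ξ g) ∂μG) * ∫⁻ x, ξ x ∂ν)) / μG U := by
    rw [ENNReal.div_eq_inv_mul, ENNReal.div_eq_inv_mul]
    ring
  show (∑' γ : Γ, F (γ : G) * I (γ : G))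
      ≤ (ENNReal.ofReal (C ^ 2) / μG U)
        * (∫⁻ g, ENNReal.ofReal (f g * Ξ g) ∂μG) * ∫⁻ x, ξ x ∂ν
  rw [hRHS, ENNReal.le_div_iff_mul_le (Or.inl hU0) (Or.inl hUtop), mul_comm]
  exact hsum
end

section
/- (Key convolution estimate.) Assume hypothesis (★). Then for every g ∈ Γ: Σ_{γ∈Γ} [Ξ(γ)/(1+L(γ))^{2d}] · [Ξ(γ⁻¹g)/(1+L(γ⁻¹g))^{2d}] ≤ 2^{2d+1} C · Ξ(g)/(1+L(g))^{2d}. -/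
open MeasureTheory ENNReal

/-- Key convolution estimate: under hypothesis (★), for every `g ∈ Γ`,
`Σ_{γ∈Γ} [Ξ(γ)/(1+L(γ))^{2d}] [Ξ(γ⁻¹g)/(1+L(γ⁻¹g))^{2d}]
  ≤ 2^{2d+1} C Ξ(g)/(1+L(g))^{2d}`. -/
theorem key_convolution_estimate
    {Γ : Type*} [Group Γ] [Countable Γ]
    {X : Type*} [MeasurableSpace X] [MulAction Γ X]
    (ν : Measure X) [IsProbabilityMeasure ν]
    (hact : ∀ γ : Γ, Measurable (fun x : X => γ • x))
    (c : Γ → X → ℝ)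
    (hc_meas : ∀ γ : Γ, Measurable (c γ))
    (hc_pos : ∀ γ : Γ, ∀ᵐ x ∂ν, 0 < c γ x)
    (hc : ∀ γ : Γ, Measure.map (fun x : X => γ • x) ν
        = ν.withDensity (fun x => ENNReal.ofReal (c γ x)))
    (Ξ : Γ → ℝ) (hΞ : ∀ γ : Γ, Ξ γ = ∫ x, Real.sqrt (c γ x) ∂ν)
    (L : Γ → ℝ) (hL_nonneg : ∀ γ, 0 ≤ L γ) (hL_one : L 1 = 0)
    (hL_inv : ∀ γ, L γ⁻¹ = L γ) (hL_sub : ∀ γ δ : Γ, L (γ * δ) ≤ L γ + L δ)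
    (d : ℝ) (hd : 0 < d) (C : ℝ) (hC : 0 < C)
    (hstar : ∀ ξ : X → ℝ≥0∞, Measurable ξ →
      ∑' γ : Γ, ENNReal.ofReal (Ξ γ / (1 + L γ) ^ (2 * d))
          * ∫⁻ x, ENNReal.ofReal (Real.sqrt (c γ x)) * ξ x ∂ν
        ≤ ENNReal.ofReal C * ∫⁻ x, ξ x ∂ν) :
    ∀ g : Γ,
      ∑' γ : Γ, ENNReal.ofReal ((Ξ γ / (1 + L γ) ^ (2 * d))
          * (Ξ (γ⁻¹ * g) / (1 + L (γ⁻¹ * g)) ^ (2 * d)))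
        ≤ ENNReal.ofReal ((2 : ℝ) ^ (2 * d + 1) * C * (Ξ g / (1 + L g) ^ (2 * d))) := by
  have key0 : ∀ (γ : Γ) (f : X → ℝ≥0∞), Measurable f →
      ∫⁻ x, f (γ • x) ∂ν = ∫⁻ y, f y * ENNReal.ofReal (c γ y) ∂ν := by
    intro γ f hf
    rw [← lintegral_map hf (hact γ), hc γ,
      lintegral_withDensity_eq_lintegral_mul ν (hc_meas γ).ennreal_ofReal hf]
    exact lintegral_congr fun y => mul_comm _ _
  have cint : ∀ γ : Γ, ∫⁻ x, ENNReal.ofReal (c γ x) ∂ν = 1 := by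
    intro γ
    have := key0 γ (fun _ => 1) measurable_const
    simpa using this.symm
  have qmp : ∀ γ : Γ, Measure.QuasiMeasurePreserving (fun x : X => γ • x) ν ν := by
    intro γ
    refine ⟨hact γ, ?_⟩
    rw [hc γ]; exact withDensity_absolutelyContinuous ν _
  have cocycle : ∀ α β : Γ, (fun x => ENNReal.ofReal (c (α * β) x))
      =ᵐ[ν] fun x => ENNReal.ofReal (c α x) * ENNReal.ofReal (c β (α⁻¹ • x)) := by
    intro α β
    have hmeasβ : Measurable fun z : X => ENNReal.ofReal (c β (α⁻¹ • z)) :=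
      ((hc_meas β).comp (hact α⁻¹)).ennreal_ofReal
    have h1 : ν.withDensity (fun x => ENNReal.ofReal (c (α * β) x))
        = ν.withDensity (fun x => ENNReal.ofReal (c α x) * ENNReal.ofReal (c β (α⁻¹ • x))) := by
      rw [← hc (α * β)]
      refine Measure.ext fun s hs => ?_
      set f : X → ℝ≥0∞ := s.indicator (fun _ => 1) with hfdef
      have hf : Measurable f := measurable_const.indicator hs
      have hpre : MeasurableSet ((fun x : X => (α * β) • x) ⁻¹' s) := hact (α * β) hs
      calc Measure.map (fun x : X => (α * β) • x) ν s
          = ν ((fun x : X => (α * β) • x) ⁻¹' s) := Measure.map_apply (hact _) hs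
        _ = ∫⁻ x, f ((α * β) • x) ∂ν := by
            rw [← lintegral_indicator_one hpre]
            refine lintegral_congr fun x => ?_
            by_cases hx : (α * β) • x ∈ s <;>
              simp [f, Set.indicator_apply, Set.mem_preimage, hx]
        _ = ∫⁻ x, (fun y => f (α • y)) (β • x) ∂ν := by
            simp only [mul_smul]
        _ = ∫⁻ y, f (α • y) * ENNReal.ofReal (c β y) ∂ν :=
            key0 β _ (hf.comp (hact α))
        _ = ∫⁻ x, (fun z => f z * ENNReal.ofReal (c β (α⁻¹ • z))) (α • x) ∂ν := by
            refine lintegral_congr fun x => ?_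
            simp [inv_smul_smul]
        _ = ∫⁻ z, (f z * ENNReal.ofReal (c β (α⁻¹ • z))) * ENNReal.ofReal (c α z) ∂ν :=
            key0 α _ (hf.mul hmeasβ)
        _ = ∫⁻ z, s.indicator (fun x => ENNReal.ofReal (c α x)
              * ENNReal.ofReal (c β (α⁻¹ • x))) z ∂ν := by
            refine lintegral_congr fun z => ?_
            by_cases hz : z ∈ s <;> simp [hfdef, Set.indicator_apply, hz, mul_comm]
        _ = ν.withDensity (fun x => ENNReal.ofReal (c α x)
              * ENNReal.ofReal (c β (α⁻¹ • x))) s := by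
            rw [lintegral_indicator hs, withDensity_apply _ hs]
    exact (withDensity_eq_iff (hc_meas (α * β)).ennreal_ofReal.aemeasurable
      ((hc_meas α).ennreal_ofReal.mul hmeasβ).aemeasurable
      (by rw [cint]; exact one_ne_top)).mp h1
  have msqrt : ∀ γ : Γ, Measurable fun x => ENNReal.ofReal (Real.sqrt (c γ x)) :=
    fun γ => (Real.continuous_sqrt.measurable.comp (hc_meas γ)).ennreal_ofReal
  have hsqrt_le : ∀ (t : ℝ), ENNReal.ofReal (Real.sqrt t) ≤ 1 + ENNReal.ofReal t := by
    intro t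
    rcases le_or_gt 0 t with ht | ht
    · have h1 : Real.sqrt t ≤ 1 + t := by
        nlinarith [Real.sq_sqrt ht, Real.sqrt_nonneg t, sq_nonneg (Real.sqrt t - 1)]
      calc ENNReal.ofReal (Real.sqrt t) ≤ ENNReal.ofReal (1 + t) :=
            ENNReal.ofReal_le_ofReal h1
        _ = 1 + ENNReal.ofReal t := by
            rw [ENNReal.ofReal_add zero_le_one ht, ENNReal.ofReal_one]
    · simp [Real.sqrt_eq_zero_of_nonpos ht.le]
  have hsqrt_fin : ∀ γ : Γ, ∫⁻ x, ENNReal.ofReal (Real.sqrt (c γ x)) ∂ν ≠ ∞ := by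
    intro γ
    refine ne_top_of_le_ne_top ?_ (lintegral_mono fun x => hsqrt_le (c γ x))
    rw [lintegral_add_left measurable_const, lintegral_const, cint γ]
    simp
  have hΞ_lint : ∀ γ : Γ, ENNReal.ofReal (Ξ γ)
      = ∫⁻ x, ENNReal.ofReal (Real.sqrt (c γ x)) ∂ν := by
    intro γ
    rw [hΞ γ]
    refine ofReal_integral_eq_lintegral_ofReal ?_ (ae_of_all _ fun x => Real.sqrt_nonneg _)
    refine ⟨(Real.continuous_sqrt.measurable.comp (hc_meas γ)).aestronglyMeasurable, ?_⟩
    rw [hasFiniteIntegral_iff_ofReal (ae_of_all _ fun x => Real.sqrt_nonneg _)]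
    exact (hsqrt_fin γ).lt_top
  have hΞ_nonneg : ∀ γ : Γ, 0 ≤ Ξ γ := by
    intro γ; rw [hΞ γ]; exact integral_nonneg fun x => Real.sqrt_nonneg _
  -- the key identity
  have key1 : ∀ α β : Γ, ∫⁻ x, ENNReal.ofReal (Real.sqrt (c α x))
      * ENNReal.ofReal (Real.sqrt (c β x)) ∂ν = ENNReal.ofReal (Ξ (α⁻¹ * β)) := by
    intro α β
    set f : X → ℝ≥0∞ := fun y =>
      ENNReal.ofReal (Real.sqrt (c β y)) / ENNReal.ofReal (Real.sqrt (c α y)) with hfdef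
    have hf : Measurable f := (msqrt β).div (msqrt α)
    have step1 : ∫⁻ x, ENNReal.ofReal (Real.sqrt (c α x))
        * ENNReal.ofReal (Real.sqrt (c β x)) ∂ν
        = ∫⁻ y, f y * ENNReal.ofReal (c α y) ∂ν := by
      refine lintegral_congr_ae ?_
      filter_upwards [hc_pos α] with y hy
      have hs : (0:ℝ) < Real.sqrt (c α y) := Real.sqrt_pos.mpr hy
      have h0 : ENNReal.ofReal (Real.sqrt (c α y)) ≠ 0 := by
        simpa [ENNReal.ofReal_eq_zero, not_le] using hs
      have hcy : ENNReal.ofReal (c α y)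
          = ENNReal.ofReal (Real.sqrt (c α y)) * ENNReal.ofReal (Real.sqrt (c α y)) := by
        rw [← ENNReal.ofReal_mul (Real.sqrt_nonneg _), Real.mul_self_sqrt hy.le]
      rw [hfdef]
      simp only
      rw [hcy, ← mul_assoc, ENNReal.div_mul_cancel h0 ENNReal.ofReal_ne_top, mul_comm]
    have step2 : ∫⁻ y, f y * ENNReal.ofReal (c α y) ∂ν = ∫⁻ x, f (α • x) ∂ν :=
      (key0 α f hf).symm
    have step3 : ∫⁻ x, f (α • x) ∂ν
        = ∫⁻ x, ENNReal.ofReal (Real.sqrt (c (α⁻¹ * β) x)) ∂ν := by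
      refine lintegral_congr_ae ?_
      have hco := cocycle α (α⁻¹ * β)
      filter_upwards [(qmp α).ae hco, (qmp α).ae (hc_pos α), (qmp α).ae (hc_pos β),
        hc_pos (α⁻¹ * β)] with x hx hpα hpβ hpδ
      have hx' : ENNReal.ofReal (c β (α • x))
          = ENNReal.ofReal (c α (α • x)) * ENNReal.ofReal (c (α⁻¹ * β) x) := by
        have := hx
        rw [mul_inv_cancel_left] at this
        rwa [inv_smul_smul] at this
      have hreal : c β (α • x) = c α (α • x) * c (α⁻¹ * β) x := by
        rw [← ENNReal.ofReal_mul hpα.le] at hx'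
        exact (ENNReal.ofReal_eq_ofReal_iff hpβ.le (mul_nonneg hpα.le hpδ.le)).mp hx'
      have hs : (0:ℝ) < Real.sqrt (c α (α • x)) := Real.sqrt_pos.mpr hpα
      have h0 : ENNReal.ofReal (Real.sqrt (c α (α • x))) ≠ 0 := by
        simpa [ENNReal.ofReal_eq_zero, not_le] using hs
      rw [hfdef]
      simp only
      rw [hreal, Real.sqrt_mul hpα.le, ENNReal.ofReal_mul (Real.sqrt_nonneg _),
        mul_div_assoc, ENNReal.mul_div_cancel h0 ENNReal.ofReal_ne_top]
    rw [step1, step2, step3, hΞ_lint]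
  -- the cocycle at the identity is a.e. 1
  have c1 : ∀ᵐ x ∂ν, ENNReal.ofReal (c 1 x) = 1 := by
    have h1 : ν.withDensity (fun x => ENNReal.ofReal (c (1 : Γ) x))
        = ν.withDensity 1 := by
      rw [← hc 1, withDensity_one]
      have he : (fun x : X => (1 : Γ) • x) = id := funext fun x => one_smul Γ x
      rw [he, Measure.map_id]
    have := (withDensity_eq_iff (hc_meas (1 : Γ)).ennreal_ofReal.aemeasurable
      aemeasurable_const (by rw [cint]; exact one_ne_top)).mp h1
    filter_upwards [this] with x hx using by simpa using hx
  -- symmetry of Ξ under inverses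
  have Ξ_inv : ∀ γ : Γ, Ξ γ⁻¹ = Ξ γ := by
    intro γ
    have h1 : ∫⁻ x, ENNReal.ofReal (Real.sqrt (c γ x))
        * ENNReal.ofReal (Real.sqrt (c 1 x)) ∂ν = ENNReal.ofReal (Ξ γ⁻¹) := by
      rw [key1 γ 1, mul_one]
    have h2 : ∫⁻ x, ENNReal.ofReal (Real.sqrt (c γ x))
        * ENNReal.ofReal (Real.sqrt (c 1 x)) ∂ν = ENNReal.ofReal (Ξ γ) := by
      rw [hΞ_lint γ]
      refine lintegral_congr_ae ?_
      filter_upwards [c1] with x hx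
      have : c (1 : Γ) x = 1 := ENNReal.ofReal_eq_one.mp hx
      simp [this]
    have := h1.symm.trans h2
    exact (ENNReal.ofReal_eq_ofReal_iff (hΞ_nonneg _) (hΞ_nonneg _)).mp this
  -- consequence of hypothesis (★)
  have star1 : ∀ h : Γ,
      ∑' γ : Γ, ENNReal.ofReal (Ξ γ / (1 + L γ) ^ (2 * d))
          * ENNReal.ofReal (Ξ (γ⁻¹ * h))
        ≤ ENNReal.ofReal C * ENNReal.ofReal (Ξ h) := by
    intro h
    have := hstar (fun x => ENNReal.ofReal (Real.sqrt (c h x))) (msqrt h)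
    calc ∑' γ : Γ, ENNReal.ofReal (Ξ γ / (1 + L γ) ^ (2 * d))
          * ENNReal.ofReal (Ξ (γ⁻¹ * h))
        = ∑' γ : Γ, ENNReal.ofReal (Ξ γ / (1 + L γ) ^ (2 * d))
          * ∫⁻ x, ENNReal.ofReal (Real.sqrt (c γ x))
            * ENNReal.ofReal (Real.sqrt (c h x)) ∂ν := by
          exact tsum_congr fun γ => by rw [key1 γ h]
      _ ≤ ENNReal.ofReal C * ∫⁻ x, ENNReal.ofReal (Real.sqrt (c h x)) ∂ν := by
          simpa using this
      _ = ENNReal.ofReal C * ENNReal.ofReal (Ξ h) := by rw [← hΞ_lint h]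
  intro g
  -- notation
  set A : Γ → ℝ := fun γ => (1 + L γ) ^ (2 * d) with hAdef
  have hA_pos : ∀ γ : Γ, 0 < A γ := fun γ =>
    Real.rpow_pos_of_pos (by linarith [hL_nonneg γ]) _
  have h2d : (0:ℝ) ≤ 2 * d := by linarith
  have hKnn : (0:ℝ) ≤ 2 ^ (2 * d) / A g :=
    div_nonneg (Real.rpow_nonneg (by norm_num) _) (hA_pos g).le
  have hhalf : ∀ γ : Γ, L g / 2 ≤ L γ → A g ≤ 2 ^ (2 * d) * A γ := by
    intro γ hγ
    calc A g = (1 + L g) ^ (2 * d) := rfl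
      _ ≤ (2 * (1 + L γ)) ^ (2 * d) := by
          refine Real.rpow_le_rpow (by linarith [hL_nonneg g]) (by linarith) h2d
      _ = 2 ^ (2 * d) * (1 + L γ) ^ (2 * d) :=
          Real.mul_rpow (by norm_num) (by linarith [hL_nonneg γ])
  -- pointwise real estimate
  have hpt : ∀ γ : Γ,
      (Ξ γ / A γ) * (Ξ (γ⁻¹ * g) / A (γ⁻¹ * g))
        ≤ (2 ^ (2 * d) / A g)
          * ((Ξ γ / A γ) * Ξ (γ⁻¹ * g) + Ξ γ * (Ξ (γ⁻¹ * g) / A (γ⁻¹ * g))) := by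
    intro γ
    set δ : Γ := γ⁻¹ * g with hδdef
    have hnn1 : 0 ≤ (Ξ γ / A γ) * Ξ δ :=
      mul_nonneg (div_nonneg (hΞ_nonneg γ) (hA_pos γ).le) (hΞ_nonneg δ)
    have hnn2 : 0 ≤ Ξ γ * (Ξ δ / A δ) :=
      mul_nonneg (hΞ_nonneg γ) (div_nonneg (hΞ_nonneg δ) (hA_pos δ).le)
    rcases le_or_gt (L g / 2) (L γ) with hcase | hcase
    · have hd1 : (1:ℝ) / A γ ≤ 2 ^ (2 * d) / A g := by
        rw [div_le_div_iff₀ (hA_pos γ) (hA_pos g)]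
        calc 1 * A g = A g := one_mul _
          _ ≤ 2 ^ (2 * d) * A γ := hhalf γ hcase
      calc (Ξ γ / A γ) * (Ξ δ / A δ) = (1 / A γ) * (Ξ γ * (Ξ δ / A δ)) := by ring
        _ ≤ (2 ^ (2 * d) / A g) * (Ξ γ * (Ξ δ / A δ)) :=
            mul_le_mul_of_nonneg_right hd1 hnn2
        _ ≤ (2 ^ (2 * d) / A g) * ((Ξ γ / A γ) * Ξ δ + Ξ γ * (Ξ δ / A δ)) := by
            refine mul_le_mul_of_nonneg_left ?_ hKnn
            linarith
    · have hLδ : L g / 2 ≤ L δ := by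
        have hgs : γ * δ = g := by rw [hδdef, mul_inv_cancel_left]
        have := hL_sub γ δ
        rw [hgs] at this
        linarith
      have hd1 : (1:ℝ) / A δ ≤ 2 ^ (2 * d) / A g := by
        rw [div_le_div_iff₀ (hA_pos δ) (hA_pos g)]
        calc 1 * A g = A g := one_mul _
          _ ≤ 2 ^ (2 * d) * A δ := hhalf δ hLδ
      calc (Ξ γ / A γ) * (Ξ δ / A δ) = (1 / A δ) * ((Ξ γ / A γ) * Ξ δ) := by ring
        _ ≤ (2 ^ (2 * d) / A g) * ((Ξ γ / A γ) * Ξ δ) :=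
            mul_le_mul_of_nonneg_right hd1 hnn1
        _ ≤ (2 ^ (2 * d) / A g) * ((Ξ γ / A γ) * Ξ δ + Ξ γ * (Ξ δ / A δ)) := by
            refine mul_le_mul_of_nonneg_left ?_ hKnn
            linarith
  -- per-term ENNReal estimate
  set K : ℝ≥0∞ := ENNReal.ofReal (2 ^ (2 * d) / A g) with hKdef
  have hterm : ∀ γ : Γ,
      ENNReal.ofReal ((Ξ γ / A γ) * (Ξ (γ⁻¹ * g) / A (γ⁻¹ * g)))
        ≤ K * (ENNReal.ofReal (Ξ γ / A γ) * ENNReal.ofReal (Ξ (γ⁻¹ * g))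
            + ENNReal.ofReal (Ξ γ) * ENNReal.ofReal (Ξ (γ⁻¹ * g) / A (γ⁻¹ * g))) := by
    intro γ
    refine le_trans (ENNReal.ofReal_le_ofReal (hpt γ)) (le_of_eq ?_)
    rw [ENNReal.ofReal_mul hKnn,
      ENNReal.ofReal_add
        (mul_nonneg (div_nonneg (hΞ_nonneg γ) (hA_pos γ).le) (hΞ_nonneg _))
        (mul_nonneg (hΞ_nonneg γ) (div_nonneg (hΞ_nonneg _) (hA_pos _).le)),
      ENNReal.ofReal_mul (div_nonneg (hΞ_nonneg γ) (hA_pos γ).le),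
      ENNReal.ofReal_mul (hΞ_nonneg γ)]
  -- bound on the first sum
  have hS1 : ∑' γ : Γ, ENNReal.ofReal (Ξ γ / A γ) * ENNReal.ofReal (Ξ (γ⁻¹ * g))
      ≤ ENNReal.ofReal C * ENNReal.ofReal (Ξ g) := star1 g
  -- bound on the second sum via reindexing
  have hS2 : ∑' γ : Γ, ENNReal.ofReal (Ξ γ) * ENNReal.ofReal (Ξ (γ⁻¹ * g) / A (γ⁻¹ * g))
      ≤ ENNReal.ofReal C * ENNReal.ofReal (Ξ g) := by
    have hre : ∑' γ : Γ, ENNReal.ofReal (Ξ γ)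
        * ENNReal.ofReal (Ξ (γ⁻¹ * g) / A (γ⁻¹ * g))
        = ∑' σ : Γ, ENNReal.ofReal (Ξ σ / A σ) * ENNReal.ofReal (Ξ (σ⁻¹ * g⁻¹)) := by
      rw [← (Equiv.mulLeft g).tsum_eq fun γ : Γ => ENNReal.ofReal (Ξ γ)
        * ENNReal.ofReal (Ξ (γ⁻¹ * g) / A (γ⁻¹ * g))]
      refine tsum_congr fun σ => ?_
      have h1 : ((Equiv.mulLeft g) σ)⁻¹ * g = σ⁻¹ := by
        simp [Equiv.mulLeft, mul_inv_rev, mul_assoc]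
      have h2 : Ξ ((Equiv.mulLeft g) σ) = Ξ (σ⁻¹ * g⁻¹) := by
        rw [← Ξ_inv (σ⁻¹ * g⁻¹)]
        congr 1
        simp [Equiv.mulLeft, mul_inv_rev]
      rw [h1, h2, Ξ_inv σ]
      have h3 : A σ⁻¹ = A σ := by simp only [hAdef, hL_inv]
      rw [h3, mul_comm]
    rw [hre]
    calc ∑' σ : Γ, ENNReal.ofReal (Ξ σ / A σ) * ENNReal.ofReal (Ξ (σ⁻¹ * g⁻¹))
        ≤ ENNReal.ofReal C * ENNReal.ofReal (Ξ g⁻¹) := star1 g⁻¹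
      _ = ENNReal.ofReal C * ENNReal.ofReal (Ξ g) := by rw [Ξ_inv g]
  -- put everything together
  calc ∑' γ : Γ, ENNReal.ofReal ((Ξ γ / A γ) * (Ξ (γ⁻¹ * g) / A (γ⁻¹ * g)))
      ≤ ∑' γ : Γ, K * (ENNReal.ofReal (Ξ γ / A γ) * ENNReal.ofReal (Ξ (γ⁻¹ * g))
          + ENNReal.ofReal (Ξ γ) * ENNReal.ofReal (Ξ (γ⁻¹ * g) / A (γ⁻¹ * g))) :=
        ENNReal.tsum_le_tsum hterm
    _ = K * ((∑' γ : Γ, ENNReal.ofReal (Ξ γ / A γ) * ENNReal.ofReal (Ξ (γ⁻¹ * g)))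
          + ∑' γ : Γ, ENNReal.ofReal (Ξ γ) * ENNReal.ofReal (Ξ (γ⁻¹ * g) / A (γ⁻¹ * g))) := by
        rw [ENNReal.tsum_mul_left, ENNReal.tsum_add]
    _ ≤ K * (ENNReal.ofReal C * ENNReal.ofReal (Ξ g)
          + ENNReal.ofReal C * ENNReal.ofReal (Ξ g)) := by
        exact mul_le_mul_right (add_le_add hS1 hS2) K
    _ = ENNReal.ofReal ((2 : ℝ) ^ (2 * d + 1) * C * (Ξ g / A g)) := by
        rw [hKdef, ← two_mul, ← ENNReal.ofReal_mul hC.le,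
          ← ENNReal.ofReal_ofNat 2, ← ENNReal.ofReal_mul (by norm_num),
          ← ENNReal.ofReal_mul hKnn]
        congr 1
        have hrw : (2:ℝ) ^ (2 * d + 1) = 2 ^ (2 * d) * 2 := by
          rw [Real.rpow_add (by norm_num : (0:ℝ) < 2), Real.rpow_one]
        rw [hrw]
        field_simp
end

section
/- (Abstract form of Theorem 1.2, Item (1).) Assume hypothesis (★). Then for all finitely supported functions f₁, f₂: Γ → ℂ, the convolution (f₁ * f₂)(g) = Σ_{γ∈Γ} f₁(γ) f₂(γ⁻¹g) satisfies ‖f₁ * f₂‖_{S^{2d}} ≤ 2^{2d+1} C · ‖f₁‖_{S^{2d}} · ‖f₂‖_{S^{2d}}; that is, the weighted norm ‖·‖_{S^{2d}} is submultiplicative up to the constant 2^{2d+1} C. -/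
open MeasureTheory ENNReal

/-- The measurable self-equivalence of `X` given by the action of a group element. -/
def smulMEquiv {Γ X : Type*} [Group Γ] [MeasurableSpace X] [MulAction Γ X]
    (hact : ∀ γ : Γ, Measurable (fun x : X => γ • x)) (γ : Γ) : X ≃ᵐ X where
  toFun x := γ • x
  invFun x := γ⁻¹ • x
  left_inv x := inv_smul_smul γ x
  right_inv x := smul_inv_smul γ x
  measurable_toFun := hact γ
  measurable_invFun := hact γ⁻¹

/-- Pushing forward a `withDensity` measure along a measurable equivalence. -/
lemma map_withDensity_mequiv {X : Type*} [MeasurableSpace X] (e : X ≃ᵐ X)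
    (μ : Measure X) (g : X → ℝ≥0∞) (hg : Measurable g) :
    Measure.map e (μ.withDensity (fun x => g (e x))) = (Measure.map e μ).withDensity g := by
  ext s hs
  rw [Measure.map_apply e.measurable hs, withDensity_apply _ (e.measurable hs),
    withDensity_apply _ hs, setLIntegral_map hs hg e.measurable]

set_option maxHeartbeats 1000000 in
/-- Abstract form of Theorem 1.2, Item (1): under hypothesis (★), the weighted norm
`‖f‖_{S^{2d}} = sup_γ |f(γ)|(1+L(γ))^{2d}/Ξ(γ)` is submultiplicative up to the
constant `2^{2d+1} C` for the convolution
`(f₁ * f₂)(g) = Σ_γ f₁(γ) f₂(γ⁻¹g)` of finitely supported functions. -/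
theorem harish_chandra_schwartz_submultiplicative
    {Γ : Type*} [Group Γ] [Countable Γ]
    {X : Type*} [MeasurableSpace X] [MulAction Γ X]
    (ν : Measure X) [IsProbabilityMeasure ν]
    (hact : ∀ γ : Γ, Measurable (fun x : X => γ • x))
    (c : Γ → X → ℝ)
    (hc_meas : ∀ γ : Γ, Measurable (c γ))
    (hc_pos : ∀ γ : Γ, ∀ᵐ x ∂ν, 0 < c γ x)
    (hc : ∀ γ : Γ, Measure.map (fun x : X => γ • x) ν
        = ν.withDensity (fun x => ENNReal.ofReal (c γ x)))
    (Ξ : Γ → ℝ) (hΞ : ∀ γ : Γ, Ξ γ = ∫ x, Real.sqrt (c γ x) ∂ν)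
    (L : Γ → ℝ) (hL_nonneg : ∀ γ, 0 ≤ L γ) (hL_one : L 1 = 0)
    (hL_inv : ∀ γ, L γ⁻¹ = L γ) (hL_sub : ∀ γ δ : Γ, L (γ * δ) ≤ L γ + L δ)
    (d : ℝ) (hd : 0 < d) (C : ℝ) (hC : 0 < C)
    (hstar : ∀ ξ : X → ℝ≥0∞, Measurable ξ →
      ∑' γ : Γ, ENNReal.ofReal (Ξ γ / (1 + L γ) ^ (2 * d))
          * ∫⁻ x, ENNReal.ofReal (Real.sqrt (c γ x)) * ξ x ∂ν
        ≤ ENNReal.ofReal C * ∫⁻ x, ξ x ∂ν)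
    (S : (Γ → ℂ) → ℝ)
    (hS : ∀ f : Γ → ℂ, S f = ⨆ γ : Γ, ‖f γ‖ * (1 + L γ) ^ (2 * d) / Ξ γ)
    (f₁ f₂ : Γ → ℂ) (hf₁ : f₁.support.Finite) (hf₂ : f₂.support.Finite) :
    S (fun g => ∑' γ : Γ, f₁ γ * f₂ (γ⁻¹ * g))
      ≤ (2 : ℝ) ^ (2 * d + 1) * C * (S f₁ * S f₂) := by
  classical
  haveI : Nonempty Γ := ⟨1⟩
  -- basic positivity facts
  have hpow_pos : ∀ γ : Γ, (0:ℝ) < (1 + L γ) ^ (2 * d) := fun γ =>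
    Real.rpow_pos_of_pos (by linarith [hL_nonneg γ]) _
  -- total mass of the densities
  have hDint : ∀ γ : Γ, ∫⁻ x, ENNReal.ofReal (c γ x) ∂ν = 1 := by
    intro γ
    have h1 : (Measure.map (fun x : X => γ • x) ν) Set.univ = 1 := by
      rw [Measure.map_apply (hact γ) MeasurableSet.univ]
      simp
    rw [hc γ] at h1
    rwa [withDensity_apply _ MeasurableSet.univ, setLIntegral_univ] at h1
  -- the cocycle identity
  have hcoc : ∀ α β : Γ, ∀ᵐ x ∂ν,
      c (α * β) x = c α x * c β (α⁻¹ • x) ∧ 0 < c β (α⁻¹ • x) := by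
    intro α β
    have hg : Measurable fun x : X => ENNReal.ofReal (c β (α⁻¹ • x)) :=
      (hc_meas β).ennreal_ofReal.comp (hact α⁻¹)
    have hwd : ν.withDensity (fun x => ENNReal.ofReal (c (α * β) x))
        = ν.withDensity (fun x => ENNReal.ofReal (c α x) * ENNReal.ofReal (c β (α⁻¹ • x))) := by
      have hcomp : (fun x : X => (α * β) • x)
          = (fun x : X => α • x) ∘ (fun x : X => β • x) := funext fun x => mul_smul α β x
      have hmm : Measure.map (fun x : X => (α * β) • x) ν
          = Measure.map (fun x : X => α • x) (Measure.map (fun x : X => β • x) ν) := by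
        rw [hcomp, ← Measure.map_map (hact α) (hact β)]
      have hbe : (fun x : X => ENNReal.ofReal (c β x))
          = fun x : X => ENNReal.ofReal (c β (α⁻¹ • ((smulMEquiv hact α) x))) := by
        funext x
        simp [smulMEquiv, inv_smul_smul]
      calc ν.withDensity (fun x => ENNReal.ofReal (c (α * β) x))
          = Measure.map (fun x : X => (α * β) • x) ν := (hc _).symm
        _ = Measure.map (fun x : X => α • x) (Measure.map (fun x : X => β • x) ν) := hmm
        _ = Measure.map (smulMEquiv hact α) (ν.withDensity (fun x => ENNReal.ofReal (c β x))) := by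
            rw [hc β]; rfl
        _ = Measure.map (smulMEquiv hact α)
              (ν.withDensity (fun x => ENNReal.ofReal (c β (α⁻¹ • ((smulMEquiv hact α) x))))) := by
            rw [← hbe]
        _ = (Measure.map (smulMEquiv hact α) ν).withDensity
              (fun x => ENNReal.ofReal (c β (α⁻¹ • x))) :=
            map_withDensity_mequiv (smulMEquiv hact α) ν
              (fun x => ENNReal.ofReal (c β (α⁻¹ • x))) hg
        _ = (ν.withDensity (fun x => ENNReal.ofReal (c α x))).withDensity
              (fun x => ENNReal.ofReal (c β (α⁻¹ • x))) := by
            rw [show (Measure.map (smulMEquiv hact α) ν) = Measure.map (fun x : X => α • x) ν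
              from rfl, hc α]
        _ = ν.withDensity
              (fun x => ENNReal.ofReal (c α x) * ENNReal.ofReal (c β (α⁻¹ • x))) :=
            (withDensity_mul ν (hc_meas α).ennreal_ofReal hg).symm
    have hae := (withDensity_eq_iff (hc_meas (α * β)).ennreal_ofReal.aemeasurable
      ((hc_meas α).ennreal_ofReal.mul hg).aemeasurable
      (by rw [hDint (α * β)]; exact one_ne_top)).mp hwd
    filter_upwards [hae, hc_pos (α * β), hc_pos α] with x h1 h2 h3
    simp only [Pi.mul_apply] at h1
    have hb : 0 < c β (α⁻¹ • x) := by
      by_contra hb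
      push_neg at hb
      rw [ENNReal.ofReal_eq_zero.mpr hb, mul_zero] at h1
      exact absurd h1 (ENNReal.ofReal_pos.mpr h2).ne'
    refine ⟨?_, hb⟩
    rw [← ENNReal.ofReal_mul h3.le] at h1
    exact (ENNReal.ofReal_eq_ofReal_iff h2.le (mul_nonneg h3.le hb.le)).mp h1
  -- the density of the identity is 1
  have hc1 : ∀ᵐ x ∂ν, c 1 x = 1 := by
    have hwd : ν.withDensity (fun x => ENNReal.ofReal (c 1 x))
        = ν.withDensity (fun _ => (1 : ℝ≥0∞)) := by
      rw [← hc 1]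
      have h1 : (fun x : X => (1 : Γ) • x) = id := funext fun x => one_smul Γ x
      rw [h1, Measure.map_id]
      exact (withDensity_one (μ := ν)).symm
    have hae := (withDensity_eq_iff (hc_meas 1).ennreal_ofReal.aemeasurable
      aemeasurable_const (by rw [hDint 1]; exact one_ne_top)).mp hwd
    filter_upwards [hae] with x hx
    exact ENNReal.ofReal_eq_one.mp hx
  -- integrability of the densities and their square roots
  have hcInt : ∀ γ : Γ, Integrable (c γ) ν := by
    intro γ
    refine ⟨(hc_meas γ).aestronglyMeasurable, ?_⟩
    have heq : ∫⁻ x, ‖c γ x‖ₑ ∂ν = ∫⁻ x, ENNReal.ofReal (c γ x) ∂ν :=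
      lintegral_congr_ae ((hc_pos γ).mono fun x hx => Real.enorm_eq_ofReal hx.le)
    rw [HasFiniteIntegral, heq, hDint γ]
    exact one_lt_top
  have hsqrtInt : ∀ γ : Γ, Integrable (fun x => Real.sqrt (c γ x)) ν := by
    intro γ
    refine Integrable.mono ((integrable_const (1 : ℝ)).add (hcInt γ))
      ((hc_meas γ).sqrt.aestronglyMeasurable) ?_
    filter_upwards [hc_pos γ] with x hx
    rw [Real.norm_eq_abs, abs_of_nonneg (Real.sqrt_nonneg _), Real.norm_eq_abs]
    have h1 : Real.sqrt (c γ x) ≤ 1 + c γ x := by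
      nlinarith [Real.sq_sqrt hx.le, Real.sqrt_nonneg (c γ x)]
    exact h1.trans (le_abs_self _)
  have hofΞ : ∀ γ : Γ, ∫⁻ x, ENNReal.ofReal (Real.sqrt (c γ x)) ∂ν = ENNReal.ofReal (Ξ γ) :=
    fun γ => by
      rw [hΞ γ, ofReal_integral_eq_lintegral_ofReal (hsqrtInt γ)
        (Filter.Eventually.of_forall fun x => Real.sqrt_nonneg _)]
  -- positivity of the Harish-Chandra function
  have hΞpos : ∀ γ : Γ, 0 < Ξ γ := by
    intro γ
    rw [hΞ γ, integral_pos_iff_support_of_nonneg_ae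
      (Filter.Eventually.of_forall fun x => Real.sqrt_nonneg _) (hsqrtInt γ)]
    have hsub : {x : X | 0 < c γ x} ⊆ Function.support fun x => Real.sqrt (c γ x) :=
      fun x hx => (Real.sqrt_pos.mpr hx).ne'
    refine lt_of_lt_of_le ?_ (measure_mono hsub)
    by_contra h
    push_neg at h
    have h0 : ν {x : X | 0 < c γ x} = 0 := le_antisymm h zero_le
    have h1 : ν {x : X | ¬ 0 < c γ x} = 0 := MeasureTheory.ae_iff.mp (hc_pos γ)
    have huniv : (Set.univ : Set X) ⊆ {x : X | 0 < c γ x} ∪ {x : X | ¬ 0 < c γ x} :=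
      fun x _ => (em _).elim Or.inl Or.inr
    have := (measure_mono huniv).trans (measure_union_le (μ := ν) _ _)
    rw [h0, h1, measure_univ] at this
    simp at this
  -- key integral identity (matrix coefficient identity)
  have lemB : ∀ γ h : Γ,
      ∫⁻ x, ENNReal.ofReal (Real.sqrt (c γ x)) * ENNReal.ofReal (Real.sqrt (c h x)) ∂ν
        = ENNReal.ofReal (Ξ (γ⁻¹ * h)) := by
    intro γ h
    set F : X → ℝ≥0∞ :=
      fun x => ENNReal.ofReal (Real.sqrt (c γ x)) * ENNReal.ofReal (Real.sqrt (c h x)) with hF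
    have hFmeas : Measurable F :=
      ((hc_meas γ).sqrt.ennreal_ofReal).mul ((hc_meas h).sqrt.ennreal_ofReal)
    have hν : ν = Measure.map (fun x : X => γ • x) (Measure.map (fun x : X => γ⁻¹ • x) ν) := by
      rw [Measure.map_map (hact γ) (hact γ⁻¹)]
      have hcomp : (fun x : X => γ • x) ∘ (fun x : X => γ⁻¹ • x) = id :=
        funext fun x => smul_inv_smul γ x
      rw [hcomp, Measure.map_id]
    calc ∫⁻ x, F x ∂ν
        = ∫⁻ x, F x ∂(Measure.map (fun x : X => γ • x) (Measure.map (fun x : X => γ⁻¹ • x) ν)) :=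
          by rw [← hν]
      _ = ∫⁻ x, F (γ • x) ∂(Measure.map (fun x : X => γ⁻¹ • x) ν) :=
          lintegral_map hFmeas (hact γ)
      _ = ∫⁻ x, F (γ • x) ∂(ν.withDensity fun x => ENNReal.ofReal (c γ⁻¹ x)) := by rw [hc γ⁻¹]
      _ = ∫⁻ x, ENNReal.ofReal (c γ⁻¹ x) * F (γ • x) ∂ν := by
          have hFγ : Measurable fun x : X => F (γ • x) := hFmeas.comp (hact γ)
          rw [lintegral_withDensity_eq_lintegral_mul ν (hc_meas γ⁻¹).ennreal_ofReal hFγ]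
          rfl
      _ = ∫⁻ x, ENNReal.ofReal (Real.sqrt (c (γ⁻¹ * h) x)) ∂ν := by
          refine lintegral_congr_ae ?_
          filter_upwards [hcoc γ⁻¹ γ, hcoc γ⁻¹ h, hc_pos γ⁻¹, hc1] with x h1 h2 h3 h4
          obtain ⟨h1e, _⟩ := h1
          obtain ⟨h2e, h2p⟩ := h2
          rw [inv_mul_cancel, inv_inv] at h1e
          rw [inv_inv] at h2e h2p
          rw [h4] at h1e
          -- h1e : 1 = c γ⁻¹ x * c γ (γ • x)
          -- h2e : c (γ⁻¹ * h) x = c γ⁻¹ x * c h (γ • x)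
          simp only [hF]
          rw [h2e]
          rw [← ENNReal.ofReal_mul (Real.sqrt_nonneg _), ← ENNReal.ofReal_mul h3.le]
          congr 1
          have hu : c γ (γ • x) = (c γ⁻¹ x)⁻¹ := eq_inv_of_mul_eq_one_right h1e.symm
          rw [Real.sqrt_mul h3.le, hu, Real.sqrt_inv, ← mul_assoc, ← div_eq_mul_inv,
            Real.div_sqrt]
      _ = ENNReal.ofReal (Ξ (γ⁻¹ * h)) := hofΞ _
  -- symmetry of Ξ
  have hΞsym : ∀ γ : Γ, Ξ γ⁻¹ = Ξ γ := by
    intro γ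
    have h1 := lemB γ 1
    rw [mul_one] at h1
    have h2 : ∫⁻ x, ENNReal.ofReal (Real.sqrt (c γ x)) * ENNReal.ofReal (Real.sqrt (c 1 x)) ∂ν
        = ∫⁻ x, ENNReal.ofReal (Real.sqrt (c γ x)) ∂ν :=
      lintegral_congr_ae (hc1.mono fun x hx => by simp [hx])
    rw [h2, hofΞ γ] at h1
    exact ((ENNReal.ofReal_eq_ofReal_iff (hΞpos γ).le (hΞpos γ⁻¹).le).mp h1).symm
  -- the key summation inequality from hypothesis (★)
  have key : ∀ (h : Γ) (t : Finset Γ),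
      ∑ γ ∈ t, Ξ γ / (1 + L γ) ^ (2 * d) * Ξ (γ⁻¹ * h) ≤ C * Ξ h := by
    intro h t
    have hξm : Measurable fun x : X => ENNReal.ofReal (Real.sqrt (c h x)) :=
      (hc_meas h).sqrt.ennreal_ofReal
    have H := hstar _ hξm
    rw [hofΞ h] at H
    have H2 : ∑' γ : Γ, ENNReal.ofReal (Ξ γ / (1 + L γ) ^ (2 * d))
        * ENNReal.ofReal (Ξ (γ⁻¹ * h)) ≤ ENNReal.ofReal C * ENNReal.ofReal (Ξ h) := by
      refine le_trans (le_of_eq (tsum_congr fun γ => ?_)) H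
      rw [lemB γ h]
    have h3 : ∑ γ ∈ t, ENNReal.ofReal (Ξ γ / (1 + L γ) ^ (2 * d) * Ξ (γ⁻¹ * h))
        ≤ ENNReal.ofReal (C * Ξ h) := by
      rw [ENNReal.ofReal_mul hC.le]
      refine le_trans (le_of_eq (Finset.sum_congr rfl fun γ _ =>
        ENNReal.ofReal_mul (div_nonneg (hΞpos γ).le (hpow_pos γ).le))) ?_
      exact le_trans (ENNReal.sum_le_tsum t) H2
    rw [← ENNReal.ofReal_sum_of_nonneg (fun γ _ =>
      mul_nonneg (div_nonneg (hΞpos γ).le (hpow_pos γ).le) (hΞpos _).le)] at h3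
    exact (ENNReal.ofReal_le_ofReal_iff (mul_nonneg hC.le (hΞpos h).le)).mp h3
  -- properties of the norm S
  have hbdd : ∀ f : Γ → ℂ, f.support.Finite →
      BddAbove (Set.range fun γ => ‖f γ‖ * (1 + L γ) ^ (2 * d) / Ξ γ) := by
    intro f hf
    refine Set.Finite.bddAbove (Set.Finite.subset
      (Set.Finite.insert 0 (hf.image fun γ => ‖f γ‖ * (1 + L γ) ^ (2 * d) / Ξ γ)) ?_)
    rintro y ⟨γ, rfl⟩
    by_cases hγ : f γ = 0
    · exact Set.mem_insert_iff.mpr (Or.inl (by simp [hγ]))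
    · exact Set.mem_insert_of_mem _ ⟨γ, hγ, rfl⟩
  have hSle : ∀ (f : Γ → ℂ), f.support.Finite →
      ∀ γ : Γ, ‖f γ‖ * (1 + L γ) ^ (2 * d) / Ξ γ ≤ S f := by
    intro f hf γ
    rw [hS f]
    exact le_ciSup (hbdd f hf) γ
  have hSbound : ∀ (f : Γ → ℂ), f.support.Finite →
      ∀ γ : Γ, ‖f γ‖ ≤ S f * (Ξ γ / (1 + L γ) ^ (2 * d)) := by
    intro f hf γ
    have h := hSle f hf γ
    rw [div_le_iff₀ (hΞpos γ)] at h
    rw [show S f * (Ξ γ / (1 + L γ) ^ (2 * d)) = S f * Ξ γ / (1 + L γ) ^ (2 * d) from by ring,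
      le_div_iff₀ (hpow_pos γ)]
    exact h
  have hSnn : ∀ f : Γ → ℂ, f.support.Finite → 0 ≤ S f := by
    intro f hf
    refine le_trans ?_ (hSle f hf 1)
    exact div_nonneg (mul_nonneg (norm_nonneg _) (hpow_pos 1).le) (hΞpos 1).le
  -- the final estimate
  rw [hS]
  refine ciSup_le fun g => ?_
  show ‖∑' γ : Γ, f₁ γ * f₂ (γ⁻¹ * g)‖ * (1 + L g) ^ (2 * d) / Ξ g
      ≤ (2 : ℝ) ^ (2 * d + 1) * C * (S f₁ * S f₂)
  rw [div_le_iff₀ (hΞpos g)]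
  set s : Finset Γ := hf₁.toFinset with hs
  have hFg : (∑' γ : Γ, f₁ γ * f₂ (γ⁻¹ * g)) = ∑ γ ∈ s, f₁ γ * f₂ (γ⁻¹ * g) := by
    refine tsum_eq_sum fun γ hγ => ?_
    rw [Function.notMem_support.mp (fun hmem => hγ (hf₁.mem_toFinset.mpr hmem)), zero_mul]
  -- the termwise bound
  have hterm : ∀ γ : Γ, ‖f₁ γ‖ * ‖f₂ (γ⁻¹ * g)‖ * (1 + L g) ^ (2 * d)
      ≤ S f₁ * S f₂ * (2:ℝ) ^ (2 * d)
        * (Ξ γ * (Ξ (γ⁻¹ * g) / (1 + L (γ⁻¹ * g)) ^ (2 * d))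
          + Ξ γ / (1 + L γ) ^ (2 * d) * Ξ (γ⁻¹ * g)) := by
    intro γ
    set δ : Γ := γ⁻¹ * g with hδ
    have hgγδ : g = γ * δ := (mul_inv_cancel_left γ g).symm
    have h2d : (0:ℝ) ≤ 2 * d := by linarith
    have h0 : ∀ η : Γ, (0:ℝ) < 1 + L η := fun η => by linarith [hL_nonneg η]
    have hLbound : (1 + L g) ^ (2 * d)
        ≤ (2:ℝ) ^ (2 * d) * ((1 + L γ) ^ (2 * d) + (1 + L δ) ^ (2 * d)) := by
      have hmax : 1 + L g ≤ 2 * max (1 + L γ) (1 + L δ) := by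
        have hsub := hL_sub γ δ
        rw [hgγδ]
        rcases le_total (L γ) (L δ) with hle | hle
        · rw [max_eq_right (by linarith : (1:ℝ) + L γ ≤ 1 + L δ)]
          linarith
        · rw [max_eq_left (by linarith : (1:ℝ) + L δ ≤ 1 + L γ)]
          linarith
      calc (1 + L g) ^ (2 * d) ≤ (2 * max (1 + L γ) (1 + L δ)) ^ (2 * d) :=
            Real.rpow_le_rpow (h0 g).le hmax h2d
        _ = (2:ℝ) ^ (2 * d) * (max (1 + L γ) (1 + L δ)) ^ (2 * d) :=
            Real.mul_rpow (by norm_num) (le_trans (h0 γ).le (le_max_left _ _))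
        _ ≤ (2:ℝ) ^ (2 * d) * ((1 + L γ) ^ (2 * d) + (1 + L δ) ^ (2 * d)) := by
            refine mul_le_mul_of_nonneg_left ?_ (Real.rpow_nonneg (by norm_num) _)
            rcases max_cases (1 + L γ) (1 + L δ) with ⟨hmx, _⟩ | ⟨hmx, _⟩ <;> rw [hmx]
            · linarith [Real.rpow_nonneg (h0 δ).le (2 * d)]
            · linarith [Real.rpow_nonneg (h0 γ).le (2 * d)]
    have hb1 := hSbound f₁ hf₁ γ
    have hb2 := hSbound f₂ hf₂ δ
    have hnn1 : (0:ℝ) ≤ S f₁ * (Ξ γ / (1 + L γ) ^ (2 * d)) :=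
      le_trans (norm_nonneg _) hb1
    have hstep : ‖f₁ γ‖ * ‖f₂ δ‖ * (1 + L g) ^ (2 * d)
        ≤ S f₁ * (Ξ γ / (1 + L γ) ^ (2 * d)) * (S f₂ * (Ξ δ / (1 + L δ) ^ (2 * d)))
          * ((2:ℝ) ^ (2 * d) * ((1 + L γ) ^ (2 * d) + (1 + L δ) ^ (2 * d))) := by
      refine mul_le_mul ?_ hLbound (Real.rpow_nonneg (h0 g).le _) ?_
      · exact mul_le_mul hb1 hb2 (norm_nonneg _) hnn1
      · exact mul_nonneg hnn1 (le_trans (norm_nonneg _) hb2)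
    refine le_trans hstep (le_of_eq ?_)
    have hpγ : (1 + L γ) ^ (2 * d) ≠ 0 := (hpow_pos γ).ne'
    have hpδ : (1 + L δ) ^ (2 * d) ≠ 0 := (hpow_pos δ).ne'
    field_simp
  -- the two sum bounds
  have hsum1 : ∑ γ ∈ s, Ξ γ / (1 + L γ) ^ (2 * d) * Ξ (γ⁻¹ * g) ≤ C * Ξ g := key g s
  have hsum2 : ∑ γ ∈ s, Ξ γ * (Ξ (γ⁻¹ * g) / (1 + L (γ⁻¹ * g)) ^ (2 * d)) ≤ C * Ξ g := by
    have hre : ∀ γ : Γ, Ξ γ * (Ξ (γ⁻¹ * g) / (1 + L (γ⁻¹ * g)) ^ (2 * d))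
        = Ξ (g⁻¹ * γ) / (1 + L (g⁻¹ * γ)) ^ (2 * d) * Ξ ((g⁻¹ * γ)⁻¹ * g⁻¹) := by
      intro γ
      have e1 : (g⁻¹ * γ)⁻¹ * g⁻¹ = γ⁻¹ := by group
      have e2 : Ξ (g⁻¹ * γ) = Ξ (γ⁻¹ * g) := by
        rw [← hΞsym (g⁻¹ * γ), mul_inv_rev, inv_inv]
      have e3 : L (g⁻¹ * γ) = L (γ⁻¹ * g) := by
        rw [← hL_inv (g⁻¹ * γ), mul_inv_rev, inv_inv]
      rw [e1, e2, e3, hΞsym γ]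
      ring
    calc ∑ γ ∈ s, Ξ γ * (Ξ (γ⁻¹ * g) / (1 + L (γ⁻¹ * g)) ^ (2 * d))
        = ∑ γ ∈ s, Ξ (g⁻¹ * γ) / (1 + L (g⁻¹ * γ)) ^ (2 * d) * Ξ ((g⁻¹ * γ)⁻¹ * g⁻¹) :=
          Finset.sum_congr rfl fun γ _ => hre γ
      _ = ∑ ε ∈ s.map ⟨fun γ => g⁻¹ * γ, mul_right_injective g⁻¹⟩,
            Ξ ε / (1 + L ε) ^ (2 * d) * Ξ (ε⁻¹ * g⁻¹) :=
          by rw [Finset.sum_map]; simp only [Function.Embedding.coeFn_mk]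
      _ ≤ C * Ξ g⁻¹ := key g⁻¹ _
      _ = C * Ξ g := by rw [hΞsym]
  -- put everything together
  have hnnS : (0:ℝ) ≤ S f₁ * S f₂ * (2:ℝ) ^ (2 * d) :=
    mul_nonneg (mul_nonneg (hSnn f₁ hf₁) (hSnn f₂ hf₂)) (Real.rpow_nonneg (by norm_num) _)
  calc ‖∑' γ : Γ, f₁ γ * f₂ (γ⁻¹ * g)‖ * (1 + L g) ^ (2 * d)
      ≤ (∑ γ ∈ s, ‖f₁ γ‖ * ‖f₂ (γ⁻¹ * g)‖) * (1 + L g) ^ (2 * d) := by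
        refine mul_le_mul_of_nonneg_right ?_ (Real.rpow_nonneg (by linarith [hL_nonneg g]) _)
        rw [hFg]
        refine le_trans (norm_sum_le s _) (le_of_eq (Finset.sum_congr rfl fun γ _ => ?_))
        exact norm_mul _ _
    _ = ∑ γ ∈ s, ‖f₁ γ‖ * ‖f₂ (γ⁻¹ * g)‖ * (1 + L g) ^ (2 * d) := Finset.sum_mul _ _ _
    _ ≤ ∑ γ ∈ s, S f₁ * S f₂ * (2:ℝ) ^ (2 * d)
          * (Ξ γ * (Ξ (γ⁻¹ * g) / (1 + L (γ⁻¹ * g)) ^ (2 * d))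
            + Ξ γ / (1 + L γ) ^ (2 * d) * Ξ (γ⁻¹ * g)) :=
        Finset.sum_le_sum fun γ _ => hterm γ
    _ = S f₁ * S f₂ * (2:ℝ) ^ (2 * d)
          * ((∑ γ ∈ s, Ξ γ * (Ξ (γ⁻¹ * g) / (1 + L (γ⁻¹ * g)) ^ (2 * d)))
            + ∑ γ ∈ s, Ξ γ / (1 + L γ) ^ (2 * d) * Ξ (γ⁻¹ * g)) := by
        rw [← Finset.mul_sum, Finset.sum_add_distrib]
    _ ≤ S f₁ * S f₂ * (2:ℝ) ^ (2 * d) * (C * Ξ g + C * Ξ g) :=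
        mul_le_mul_of_nonneg_left (add_le_add hsum2 hsum1) hnnS
    _ = (2 : ℝ) ^ (2 * d + 1) * C * (S f₁ * S f₂) * Ξ g := by
        rw [Real.rpow_add (by norm_num : (0:ℝ) < 2), Real.rpow_one]
        ring
end

section
/- For every finitely supported f: Γ → ℂ and all ξ, η ∈ L²(X, ν), the operator π_ν(f) := Σ_{γ∈Γ} f(γ) π_ν(γ) satisfies |⟨π_ν(f)ξ, η⟩| ≤ (Σ_{γ∈Γ} |f(γ)| ∫_X c(γ,x)^{1/2} |η(x)|² dν(x))^{1/2} · (Σ_{γ∈Γ} |f(γ)| ∫_X c(γ⁻¹,x)^{1/2} |ξ(x)|² dν(x))^{1/2}, where the right-hand side is an extended nonnegative real number. -/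
open MeasureTheory ENNReal

private lemma ofReal_norm_eq_coe_nnnorm {E : Type*} [NormedAddCommGroup E] (x : E) :
    ENNReal.ofReal ‖x‖ = ↑‖x‖₊ := ENNReal.ofReal_eq_coe_nnreal _

private lemma rpow_half_sq' (x : ℝ≥0∞) : (x ^ (1/2:ℝ)) ^ (2:ℝ) = x := by
  rw [← ENNReal.rpow_mul]; norm_num

private lemma rpow_half_mul_self' (x : ℝ≥0∞) : x ^ (1/2:ℝ) * x ^ (1/2:ℝ) = x := by
  rw [← ENNReal.rpow_add_of_nonneg (1/2) (1/2) (by norm_num) (by norm_num)]; norm_num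

private lemma tsum_cauchy_schwarz' {ι : Type*} [Countable ι] (a b : ι → ℝ≥0∞) :
    ∑' i, (a i) ^ (1/2:ℝ) * (b i) ^ (1/2:ℝ)
      ≤ (∑' i, a i) ^ (1/2:ℝ) * (∑' i, b i) ^ (1/2:ℝ) := by
  letI : MeasurableSpace ι := ⊤
  haveI : MeasurableSingletonClass ι := ⟨fun _ => trivial⟩
  rw [← lintegral_count, ← lintegral_count, ← lintegral_count]
  have h := ENNReal.lintegral_mul_le_Lp_mul_Lq (Measure.count (α := ι))
    (p := 2) (q := 2) Real.HolderConjugate.two_two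
    (f := fun i => (a i) ^ (1/2:ℝ)) (g := fun i => (b i) ^ (1/2:ℝ))
    ((measurable_of_countable _).aemeasurable) ((measurable_of_countable _).aemeasurable)
  simp only [rpow_half_sq', Pi.mul_apply] at h
  convert h using 2

private lemma cocycle_ae' {X : Type*} [MeasurableSpace X] (ν : Measure X)
    [IsProbabilityMeasure ν]
    (T S : X → X) (hT : Measurable T) (hS : Measurable S)
    (hTS : ∀ x, T (S x) = x) (hST : ∀ x, S (T x) = x)
    (w v : X → ℝ≥0∞) (hw : Measurable w) (hv : Measurable v)
    (hmapT : ν.map T = ν.withDensity w) (hmapS : ν.map S = ν.withDensity v) :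
    ∀ᵐ x ∂ν, v x * w (T x) = 1 := by
  have key : ν.withDensity (fun x => v x * w (T x)) = ν := by
    have h1 : ν.withDensity (fun x => v x * w (T x))
        = (ν.withDensity v).withDensity (w ∘ T) := by
      rw [← withDensity_mul ν hv (hw.comp hT)]; rfl
    have h2 : (ν.withDensity v).withDensity (w ∘ T) = (ν.withDensity w).map S := by
      ext s hs
      rw [withDensity_apply _ hs, ← hmapS, ← lintegral_indicator hs,
        lintegral_map ((hw.comp hT).indicator hs) hS,
        Measure.map_apply hS hs, withDensity_apply _ (hS hs),
        ← lintegral_indicator (hS hs)]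
      congr 1
      ext y
      by_cases hy : S y ∈ s
      · simp [Set.indicator_of_mem hy, Set.indicator_of_mem (Set.mem_preimage.mpr hy),
          Function.comp, hTS y]
      · simp [Set.indicator_of_notMem hy,
          Set.indicator_of_notMem (fun h => hy (Set.mem_preimage.mp h))]
    have h3 : (ν.withDensity w).map S = ν := by
      rw [← hmapT, Measure.map_map hS hT]
      have : S ∘ T = id := funext hST
      rw [this, Measure.map_id]
    rw [h1, h2, h3]
  have h4 : ν.withDensity (1 : X → ℝ≥0∞) = ν.withDensity (fun x => v x * w (T x)) := by
    rw [withDensity_one, key]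
  have h5 := (withDensity_eq_iff (μ := ν) (f := (1 : X → ℝ≥0∞))
    (g := fun x => v x * w (T x)) aemeasurable_const
    ((hv.mul (hw.comp hT)).aemeasurable) (by simp)).mp h4
  filter_upwards [h5] with x hx using hx.symm

private lemma sqrt_cocycle' {a b : ℝ} (ha : 0 < a)
    (hab : ENNReal.ofReal a * ENNReal.ofReal b = 1) :
    Real.sqrt b * a = Real.sqrt a := by
  have hb : 0 < b := by
    rcases le_or_gt b 0 with h | h
    · rw [ENNReal.ofReal_eq_zero.mpr h, mul_zero] at hab; exact absurd hab (by simp)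
    · exact h
  have hab' : a * b = 1 := by
    rw [← ENNReal.ofReal_mul ha.le] at hab
    exact (ENNReal.ofReal_eq_one.mp hab)
  have hb' : b = a⁻¹ := by field_simp at hab' ⊢; linarith [hab']
  subst hb'
  rw [Real.sqrt_inv]
  rw [← Real.mul_self_sqrt ha.le]
  field_simp
  rw [Real.sqrt_sq (Real.sqrt_nonneg _)]

private lemma change_var' {X : Type*} [MeasurableSpace X] (ν : Measure X)
    [IsProbabilityMeasure ν]
    (T S : X → X) (hT : Measurable T) (hS : Measurable S)
    (hTS : ∀ x, T (S x) = x) (hST : ∀ x, S (T x) = x)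
    (cT cS : X → ℝ) (hcT : Measurable cT) (hcS : Measurable cS)
    (hmapT : ν.map T = ν.withDensity (fun x => ENNReal.ofReal (cT x)))
    (hmapS : ν.map S = ν.withDensity (fun x => ENNReal.ofReal (cS x)))
    (hpos : ∀ᵐ x ∂ν, 0 < cS x)
    (G : X → ℝ≥0∞) (hG : Measurable G) :
    ∫⁻ x, ENNReal.ofReal (Real.sqrt (cT x)) * G (S x) ∂ν
      = ∫⁻ y, ENNReal.ofReal (Real.sqrt (cS y)) * G y ∂ν := by
  set K : X → ℝ≥0∞ := fun z => ENNReal.ofReal (Real.sqrt (cT (T z))) * G z with hK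
  have hKmeas : Measurable K := (((hcT.comp hT).sqrt).ennreal_ofReal).mul hG
  have step1 : ∫⁻ x, ENNReal.ofReal (Real.sqrt (cT x)) * G (S x) ∂ν
      = ∫⁻ x, K (S x) ∂ν := by
    apply lintegral_congr; intro x; simp [hK, hTS x]
  have step2 : ∫⁻ x, K (S x) ∂ν = ∫⁻ z, ENNReal.ofReal (cS z) * K z ∂ν := by
    rw [← lintegral_map hKmeas hS, hmapS,
      lintegral_withDensity_eq_lintegral_mul ν (hcS.ennreal_ofReal) hKmeas]
    rfl
  rw [step1, step2]
  have hco := cocycle_ae' ν T S hT hS hTS hST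
    (fun x => ENNReal.ofReal (cT x)) (fun x => ENNReal.ofReal (cS x))
    (hcT.ennreal_ofReal) (hcS.ennreal_ofReal) hmapT hmapS
  apply lintegral_congr_ae
  filter_upwards [hco, hpos] with z hz hzpos
  have key : Real.sqrt (cT (T z)) * cS z = Real.sqrt (cS z) := sqrt_cocycle' hzpos hz
  simp only [hK]
  rw [← mul_assoc, mul_comm (ENNReal.ofReal (cS z)),
    ← ENNReal.ofReal_mul (Real.sqrt_nonneg _), key]

private lemma per_gamma' {X : Type*} [MeasurableSpace X] (ν : Measure X)
    [IsProbabilityMeasure ν]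
    (T S : X → X) (hT : Measurable T) (hS : Measurable S)
    (hTS : ∀ x, T (S x) = x) (hST : ∀ x, S (T x) = x)
    (cT cS : X → ℝ) (hcT : Measurable cT) (hcS : Measurable cS)
    (hmapT : ν.map T = ν.withDensity (fun x => ENNReal.ofReal (cT x)))
    (hmapS : ν.map S = ν.withDensity (fun x => ENNReal.ofReal (cS x)))
    (hpos : ∀ᵐ x ∂ν, 0 < cS x)
    (φ ξ η : Lp ℂ 2 ν)
    (hφ : (φ : X → ℂ) =ᵐ[ν] fun x => (Real.sqrt (cT x) : ℂ) * (ξ : X → ℂ) (S x)) :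
    ENNReal.ofReal ‖(inner ℂ φ η : ℂ)‖
      ≤ (∫⁻ x, ENNReal.ofReal (Real.sqrt (cT x))
            * ENNReal.ofReal (‖(η : X → ℂ) x‖ ^ 2) ∂ν) ^ (1/2:ℝ)
        * (∫⁻ x, ENNReal.ofReal (Real.sqrt (cS x))
            * ENNReal.ofReal (‖(ξ : X → ℂ) x‖ ^ 2) ∂ν) ^ (1/2:ℝ) := by
  have hξm : Measurable ((ξ : X → ℂ)) := (Lp.stronglyMeasurable ξ).measurable
  have hηm : Measurable ((η : X → ℂ)) := (Lp.stronglyMeasurable η).measurable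
  set u : X → ℝ≥0∞ :=
    fun x => (ENNReal.ofReal (Real.sqrt (cT x))) ^ (1/2:ℝ) * ↑‖(η : X → ℂ) x‖₊ with hu
  set v : X → ℝ≥0∞ :=
    fun x => (ENNReal.ofReal (Real.sqrt (cT x))) ^ (1/2:ℝ) * ↑‖(ξ : X → ℂ) (S x)‖₊ with hv
  have hum : Measurable u := ((hcT.sqrt.ennreal_ofReal).pow_const _).mul hηm.enorm
  have hvm : Measurable v := ((hcT.sqrt.ennreal_ofReal).pow_const _).mul (hξm.comp hS).enorm
  have step1 : ENNReal.ofReal ‖(inner ℂ φ η : ℂ)‖ ≤ ∫⁻ x, (u * v) x ∂ν := by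
    rw [L2.inner_def]
    calc ENNReal.ofReal ‖∫ x, (inner ℂ ((φ : X → ℂ) x) ((η : X → ℂ) x) : ℂ) ∂ν‖
        = ↑‖∫ x, (inner ℂ ((φ : X → ℂ) x) ((η : X → ℂ) x) : ℂ) ∂ν‖₊ :=
          ofReal_norm_eq_coe_nnnorm _
      _ ≤ ∫⁻ x, ↑‖(inner ℂ ((φ : X → ℂ) x) ((η : X → ℂ) x) : ℂ)‖₊ ∂ν :=
          enorm_integral_le_lintegral_enorm _
      _ ≤ ∫⁻ x, (u * v) x ∂ν := by
          apply lintegral_mono_ae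
          filter_upwards [hφ] with x hx
          rw [RCLike.inner_apply, hx]
          simp only [Pi.mul_apply, hu, hv]
          apply le_of_eq
          have h1 : (↑‖((Real.sqrt (cT x) : ℝ) : ℂ)‖₊ : ℝ≥0∞)
              = ENNReal.ofReal (Real.sqrt (cT x)) := by
            rw [← ofReal_norm_eq_coe_nnnorm]
            simp [Complex.norm_real, abs_of_nonneg (Real.sqrt_nonneg _)]
          simp only [map_mul, nnnorm_mul, ENNReal.coe_mul, RCLike.nnnorm_conj, h1]
          rw [mul_mul_mul_comm (ENNReal.ofReal (Real.sqrt (cT x)) ^ (1/2:ℝ)),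
            rpow_half_mul_self']
          ring
  have step2 : ∫⁻ x, (u * v) x ∂ν
      ≤ (∫⁻ x, u x ^ (2:ℝ) ∂ν) ^ (1/2:ℝ) * (∫⁻ x, v x ^ (2:ℝ) ∂ν) ^ (1/2:ℝ) :=
    ENNReal.lintegral_mul_le_Lp_mul_Lq ν Real.HolderConjugate.two_two
      hum.aemeasurable hvm.aemeasurable
  have hu2 : ∀ x, u x ^ (2:ℝ)
      = ENNReal.ofReal (Real.sqrt (cT x)) * ENNReal.ofReal (‖(η : X → ℂ) x‖ ^ 2) := by
    intro x
    rw [hu, ENNReal.mul_rpow_of_nonneg _ _ (by norm_num : (0:ℝ) ≤ 2), rpow_half_sq']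
    congr 1
    rw [← ofReal_norm_eq_coe_nnnorm, ENNReal.ofReal_pow (norm_nonneg _),
      ← ENNReal.rpow_natCast]
    norm_num
  have hv2 : ∀ x, v x ^ (2:ℝ)
      = ENNReal.ofReal (Real.sqrt (cT x)) * ENNReal.ofReal (‖(ξ : X → ℂ) (S x)‖ ^ 2) := by
    intro x
    rw [hv, ENNReal.mul_rpow_of_nonneg _ _ (by norm_num : (0:ℝ) ≤ 2), rpow_half_sq']
    congr 1
    rw [← ofReal_norm_eq_coe_nnnorm, ENNReal.ofReal_pow (norm_nonneg _),
      ← ENNReal.rpow_natCast]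
    norm_num
  have hcv : ∫⁻ x, v x ^ (2:ℝ) ∂ν
      = ∫⁻ x, ENNReal.ofReal (Real.sqrt (cS x))
          * ENNReal.ofReal (‖(ξ : X → ℂ) x‖ ^ 2) ∂ν := by
    simp only [hv2]
    exact change_var' ν T S hT hS hTS hST cT cS hcT hcS hmapT hmapS hpos
      (fun y => ENNReal.ofReal (‖(ξ : X → ℂ) y‖ ^ 2))
      ((hξm.norm.pow_const 2).ennreal_ofReal)
  calc ENNReal.ofReal ‖(inner ℂ φ η : ℂ)‖ ≤ ∫⁻ x, (u * v) x ∂ν := step1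
    _ ≤ (∫⁻ x, u x ^ (2:ℝ) ∂ν) ^ (1/2:ℝ) * (∫⁻ x, v x ^ (2:ℝ) ∂ν) ^ (1/2:ℝ) := step2
    _ = _ := by rw [hcv]; congr 2; exact lintegral_congr fun x => hu2 x
open MeasureTheory ENNReal

/-- For every finitely supported `f : Γ → ℂ` and `ξ, η ∈ L²(X, ν)`, the operator
`π_ν(f) = Σ_γ f(γ) π_ν(γ)` satisfies
`|⟨π_ν(f)ξ, η⟩| ≤ (Σ_γ |f(γ)| ∫ c(γ,x)^{1/2}|η|² dν)^{1/2}
               · (Σ_γ |f(γ)| ∫ c(γ⁻¹,x)^{1/2}|ξ|² dν)^{1/2}`,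
the right-hand side being an extended nonnegative real number. -/
theorem convolution_operator_inner_product_bound
    {Γ : Type*} [Group Γ] [Countable Γ]
    {X : Type*} [MeasurableSpace X] [MulAction Γ X]
    (ν : Measure X) [IsProbabilityMeasure ν]
    (hact : ∀ γ : Γ, Measurable (fun x : X => γ • x))
    (c : Γ → X → ℝ)
    (hc_meas : ∀ γ : Γ, Measurable (c γ))
    (hc_pos : ∀ γ : Γ, ∀ᵐ x ∂ν, 0 < c γ x)
    (hc : ∀ γ : Γ, Measure.map (fun x : X => γ • x) ν
        = ν.withDensity (fun x => ENNReal.ofReal (c γ x)))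
    (π : Γ → (Lp ℂ 2 ν →L[ℂ] Lp ℂ 2 ν))
    (hπ : ∀ (γ : Γ) (ξ : Lp ℂ 2 ν),
      (π γ ξ : X → ℂ) =ᵐ[ν]
        fun x => (Real.sqrt (c γ x) : ℂ) * (ξ : X → ℂ) (γ⁻¹ • x))
    (f : Γ → ℂ) (hf : f.support.Finite) (ξ η : Lp ℂ 2 ν) :
    ENNReal.ofReal ‖(inner ℂ ((∑ γ ∈ hf.toFinset, f γ • π γ) ξ) η : ℂ)‖
      ≤ (∑' γ : Γ, ENNReal.ofReal ‖f γ‖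
            * ∫⁻ x, ENNReal.ofReal (Real.sqrt (c γ x))
                * ENNReal.ofReal (‖(η : X → ℂ) x‖ ^ 2) ∂ν) ^ (1 / 2 : ℝ)
        * (∑' γ : Γ, ENNReal.ofReal ‖f γ‖
            * ∫⁻ x, ENNReal.ofReal (Real.sqrt (c γ⁻¹ x))
                * ENNReal.ofReal (‖(ξ : X → ℂ) x‖ ^ 2) ∂ν) ^ (1 / 2 : ℝ) := by
  classical
  set s := hf.toFinset with hs
  set A : Γ → ℝ≥0∞ := fun γ => ∫⁻ x, ENNReal.ofReal (Real.sqrt (c γ x))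
      * ENNReal.ofReal (‖(η : X → ℂ) x‖ ^ 2) ∂ν with hA
  set B : Γ → ℝ≥0∞ := fun γ => ∫⁻ x, ENNReal.ofReal (Real.sqrt (c γ⁻¹ x))
      * ENNReal.ofReal (‖(ξ : X → ℂ) x‖ ^ 2) ∂ν with hB
  set w : Γ → ℝ≥0∞ := fun γ => ENNReal.ofReal ‖f γ‖ with hw
  have hper : ∀ γ : Γ, ENNReal.ofReal ‖(inner ℂ (π γ ξ) η : ℂ)‖
      ≤ (A γ) ^ (1/2:ℝ) * (B γ) ^ (1/2:ℝ) := by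
    intro γ
    exact per_gamma' ν (fun x => γ • x) (fun x => γ⁻¹ • x) (hact γ) (hact γ⁻¹)
      (fun x => smul_inv_smul γ x) (fun x => inv_smul_smul γ x)
      (c γ) (c γ⁻¹) (hc_meas γ) (hc_meas γ⁻¹) (hc γ) (hc γ⁻¹) (hc_pos γ⁻¹)
      (π γ ξ) ξ η (hπ γ ξ)
  have expand : (inner ℂ ((∑ γ ∈ s, f γ • π γ) ξ) η : ℂ)
      = ∑ γ ∈ s, (starRingEnd ℂ) (f γ) * (inner ℂ (π γ ξ) η : ℂ) := by
    rw [ContinuousLinearMap.sum_apply, sum_inner]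
    apply Finset.sum_congr rfl
    intro γ _
    rw [ContinuousLinearMap.smul_apply, inner_smul_left]
  calc ENNReal.ofReal ‖(inner ℂ ((∑ γ ∈ s, f γ • π γ) ξ) η : ℂ)‖
      ≤ ∑ γ ∈ s, ENNReal.ofReal (‖f γ‖ * ‖(inner ℂ (π γ ξ) η : ℂ)‖) := by
        rw [expand]
        refine le_trans (ENNReal.ofReal_le_ofReal (norm_sum_le _ _)) ?_
        rw [ENNReal.ofReal_sum_of_nonneg (fun _ _ => norm_nonneg _)]
        apply Finset.sum_le_sum
        intro γ _
        apply ENNReal.ofReal_le_ofReal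
        rw [norm_mul, RCLike.norm_conj]
    _ ≤ ∑ γ ∈ s, (w γ * A γ) ^ (1/2:ℝ) * (w γ * B γ) ^ (1/2:ℝ) := by
        apply Finset.sum_le_sum
        intro γ _
        rw [ENNReal.ofReal_mul (norm_nonneg _)]
        calc w γ * ENNReal.ofReal ‖(inner ℂ (π γ ξ) η : ℂ)‖
            ≤ w γ * ((A γ) ^ (1/2:ℝ) * (B γ) ^ (1/2:ℝ)) :=
              mul_le_mul_right (hper γ) _
          _ = (w γ * A γ) ^ (1/2:ℝ) * (w γ * B γ) ^ (1/2:ℝ) := by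
              rw [ENNReal.mul_rpow_of_nonneg _ _ (by norm_num : (0:ℝ) ≤ 1/2),
                ENNReal.mul_rpow_of_nonneg _ _ (by norm_num : (0:ℝ) ≤ 1/2),
                mul_mul_mul_comm, rpow_half_mul_self']
    _ ≤ ∑' γ : Γ, (w γ * A γ) ^ (1/2:ℝ) * (w γ * B γ) ^ (1/2:ℝ) :=
        ENNReal.sum_le_tsum s
    _ ≤ (∑' γ : Γ, w γ * A γ) ^ (1/2:ℝ) * (∑' γ : Γ, w γ * B γ) ^ (1/2:ℝ) :=
        tsum_cauchy_schwarz' _ _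
end

section
/- (Abstract form of Theorem 1.2, Item (2), boundary representation version.) Assume hypothesis (★). Then for every finitely supported f: Γ → ℂ, the operator π_ν(f) := Σ_{γ∈Γ} f(γ) π_ν(γ) on L²(X, ν) satisfies ‖π_ν(f)‖_{op} ≤ C · ‖f‖_{S^{2d}}. -/
open MeasureTheory ENNReal

section BRAux

variable {Γ : Type*} [Group Γ] {X : Type*} [MeasurableSpace X] [MulAction Γ X]
  {ν : Measure X} {c : Γ → X → ℝ}

private lemma aux_lint_smul (hact : ∀ γ : Γ, Measurable (fun x : X => γ • x))
    (hc_meas : ∀ γ : Γ, Measurable (c γ))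
    (hc : ∀ γ : Γ, Measure.map (fun x : X => γ • x) ν
        = ν.withDensity (fun x => ENNReal.ofReal (c γ x)))
    (γ : Γ) {g : X → ℝ≥0∞} (hg : Measurable g) :
    ∫⁻ x, g (γ • x) ∂ν = ∫⁻ x, ENNReal.ofReal (c γ x) * g x ∂ν := by
  rw [← lintegral_map hg (hact γ), hc γ,
    lintegral_withDensity_eq_lintegral_mul _ (hc_meas γ).ennreal_ofReal hg]
  rfl

private lemma aux_int_c_one (hact : ∀ γ : Γ, Measurable (fun x : X => γ • x))
    [IsProbabilityMeasure ν]
    (hc : ∀ γ : Γ, Measure.map (fun x : X => γ • x) ν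
        = ν.withDensity (fun x => ENNReal.ofReal (c γ x)))
    (γ : Γ) : ∫⁻ x, ENNReal.ofReal (c γ x) ∂ν = 1 := by
  have h1 : (ν.withDensity fun x => ENNReal.ofReal (c γ x)) Set.univ = 1 := by
    rw [← hc γ, Measure.map_apply (hact γ) MeasurableSet.univ]
    simp
  rwa [withDensity_apply _ MeasurableSet.univ, setLIntegral_univ] at h1

private lemma aux_map_withDensity (hact : ∀ γ : Γ, Measurable (fun x : X => γ • x))
    (γ : Γ) {h : X → ℝ≥0∞} (hh : Measurable h) :
    Measure.map (fun x : X => γ • x) (ν.withDensity h)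
      = (Measure.map (fun x : X => γ • x) ν).withDensity (fun x => h (γ⁻¹ • x)) := by
  ext s hs
  rw [Measure.map_apply (hact γ) hs, withDensity_apply _ ((hact γ) hs),
    withDensity_apply _ hs,
    setLIntegral_map hs (show Measurable fun x => h (γ⁻¹ • x) from hh.comp (hact γ⁻¹)) (hact γ)]
  refine setLIntegral_congr_fun ((hact γ) hs) (fun x _ => ?_)
  simp [inv_smul_smul]

private lemma aux_cocycle (hact : ∀ γ : Γ, Measurable (fun x : X => γ • x))
    [IsProbabilityMeasure ν]
    (hc_meas : ∀ γ : Γ, Measurable (c γ))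
    (hc : ∀ γ : Γ, Measure.map (fun x : X => γ • x) ν
        = ν.withDensity (fun x => ENNReal.ofReal (c γ x)))
    (γ δ : Γ) :
    (fun x => ENNReal.ofReal (c (γ * δ) x))
      =ᵐ[ν] fun x => ENNReal.ofReal (c γ x) * ENNReal.ofReal (c δ (γ⁻¹ • x)) := by
  have hmain : ν.withDensity (fun x => ENNReal.ofReal (c (γ * δ) x))
      = ν.withDensity (fun x => ENNReal.ofReal (c γ x) * ENNReal.ofReal (c δ (γ⁻¹ • x))) := by
    have h1 : Measure.map (fun x : X => (γ * δ) • x) ν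
        = Measure.map (fun x : X => γ • x) (Measure.map (fun x : X => δ • x) ν) := by
      rw [Measure.map_map (hact γ) (hact δ)]
      congr 1
      ext x
      simp [mul_smul]
    rw [← hc (γ * δ), h1, hc δ,
      aux_map_withDensity hact γ (hc_meas δ).ennreal_ofReal, hc γ,
      ← withDensity_mul _ (hc_meas γ).ennreal_ofReal
        (show Measurable fun x => ENNReal.ofReal (c δ (γ⁻¹ • x)) from
          (hc_meas δ).ennreal_ofReal.comp (hact γ⁻¹))]
    rfl
  refine (withDensity_eq_iff ((hc_meas (γ * δ)).ennreal_ofReal.aemeasurable)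
    (((hc_meas γ).ennreal_ofReal.mul
      ((hc_meas δ).ennreal_ofReal.comp (hact γ⁻¹))).aemeasurable) ?_).1 hmain
  rw [aux_int_c_one hact hc]
  exact one_ne_top

private lemma aux_c_one (hact : ∀ γ : Γ, Measurable (fun x : X => γ • x))
    [IsProbabilityMeasure ν]
    (hc_meas : ∀ γ : Γ, Measurable (c γ))
    (hc : ∀ γ : Γ, Measure.map (fun x : X => γ • x) ν
        = ν.withDensity (fun x => ENNReal.ofReal (c γ x))) :
    ∀ᵐ x ∂ν, ENNReal.ofReal (c 1 x) = 1 := by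
  have hmain : ν.withDensity (fun x => ENNReal.ofReal (c 1 x)) = ν.withDensity 1 := by
    rw [← hc 1, withDensity_one]
    have : (fun x : X => (1 : Γ) • x) = id := by ext x; simp
    rw [this, Measure.map_id]
  have := (withDensity_eq_iff ((hc_meas 1).ennreal_ofReal.aemeasurable)
    aemeasurable_one (by rw [aux_int_c_one hact hc]; exact one_ne_top)).1 hmain
  filter_upwards [this] with x hx using hx

/-- a.e. statements transfer along the action. -/
private lemma aux_ae_smul (hact : ∀ γ : Γ, Measurable (fun x : X => γ • x))
    (hc : ∀ γ : Γ, Measure.map (fun x : X => γ • x) ν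
        = ν.withDensity (fun x => ENNReal.ofReal (c γ x)))
    (γ : Γ) {p : X → Prop} (h : ∀ᵐ x ∂ν, p x) :
    ∀ᵐ x ∂ν, p (γ • x) := by
  rw [ae_iff] at h ⊢
  obtain ⟨N, hNsub, hNm, hN0⟩ := exists_measurable_superset_of_null h
  refine measure_mono_null (t := (fun x : X => γ • x) ⁻¹' N) (fun x hx => hNsub hx) ?_
  have h2 : ν ((fun x : X => γ • x) ⁻¹' N) = (Measure.map (fun x : X => γ • x) ν) N :=
    (Measure.map_apply (hact γ) hNm).symm
  rw [h2, hc γ]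
  exact (withDensity_absolutelyContinuous ν _) hN0

/-- the key a.e. identity `c(γ⁻¹,x) √(c(γ, γx)) = √(c(γ⁻¹,x))`. -/
private lemma aux_sqrt_id (hact : ∀ γ : Γ, Measurable (fun x : X => γ • x))
    [IsProbabilityMeasure ν]
    (hc_meas : ∀ γ : Γ, Measurable (c γ))
    (hc_pos : ∀ γ : Γ, ∀ᵐ x ∂ν, 0 < c γ x)
    (hc : ∀ γ : Γ, Measure.map (fun x : X => γ • x) ν
        = ν.withDensity (fun x => ENNReal.ofReal (c γ x)))
    (γ : Γ) :
    ∀ᵐ x ∂ν, ENNReal.ofReal (c γ⁻¹ x) * ENNReal.ofReal (Real.sqrt (c γ (γ • x)))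
      = ENNReal.ofReal (Real.sqrt (c γ⁻¹ x)) := by
  have hco := aux_cocycle hact hc_meas hc γ⁻¹ γ
  have hone := aux_c_one hact hc_meas hc
  filter_upwards [hco, hone, hc_pos γ⁻¹] with x hcx h1x hpos
  rw [inv_mul_cancel] at hcx
  rw [inv_inv] at hcx
  rw [h1x] at hcx
  -- hcx : 1 = ofReal (c γ⁻¹ x) * ofReal (c γ (γ • x))
  set a := c γ⁻¹ x with ha
  have hb : c γ (γ • x) = a⁻¹ := by
    have h3 : ENNReal.ofReal (c γ (γ • x)) = ENNReal.ofReal a⁻¹ := by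
      rw [ENNReal.ofReal_inv_of_pos hpos]
      exact ENNReal.eq_inv_of_mul_eq_one_left (by rw [mul_comm]; exact hcx.symm)
    have h4 : (0:ℝ) < a⁻¹ := inv_pos.2 hpos
    have h5 : 0 < ENNReal.ofReal (c γ (γ • x)) := by
      rw [h3]; exact ENNReal.ofReal_pos.2 h4
    have h6 : 0 < c γ (γ • x) := ENNReal.ofReal_pos.1 h5
    exact (ENNReal.ofReal_eq_ofReal_iff h6.le h4.le).1 h3
  rw [hb, ← ENNReal.ofReal_mul hpos.le, Real.sqrt_inv]
  congr 1
  rw [← div_eq_mul_inv, Real.div_sqrt]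

end BRAux

section BRAux2

variable {Γ : Type*} [Group Γ] {X : Type*} [MeasurableSpace X] [MulAction Γ X]
  {ν : Measure X} {c : Γ → X → ℝ}

/-- change of variables: `∫ √c(γ,x) g(γ⁻¹x) = ∫ √c(γ⁻¹,x) g(x)`. -/
private lemma aux_cov (hact : ∀ γ : Γ, Measurable (fun x : X => γ • x))
    [IsProbabilityMeasure ν]
    (hc_meas : ∀ γ : Γ, Measurable (c γ))
    (hc_pos : ∀ γ : Γ, ∀ᵐ x ∂ν, 0 < c γ x)
    (hc : ∀ γ : Γ, Measure.map (fun x : X => γ • x) ν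
        = ν.withDensity (fun x => ENNReal.ofReal (c γ x)))
    (γ : Γ) {g : X → ℝ≥0∞} (hg : Measurable g) :
    ∫⁻ x, ENNReal.ofReal (Real.sqrt (c γ x)) * g (γ⁻¹ • x) ∂ν
      = ∫⁻ x, ENNReal.ofReal (Real.sqrt (c γ⁻¹ x)) * g x ∂ν := by
  have hF : Measurable fun x : X => ENNReal.ofReal (Real.sqrt (c γ (γ • x))) * g x :=
    (((hc_meas γ).comp (hact γ)).sqrt.ennreal_ofReal).mul hg
  have h1 := aux_lint_smul hact hc_meas hc γ⁻¹ hF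
  have h2 : ∫⁻ x, ENNReal.ofReal (Real.sqrt (c γ (γ • γ⁻¹ • x))) * g (γ⁻¹ • x) ∂ν
      = ∫⁻ x, ENNReal.ofReal (Real.sqrt (c γ x)) * g (γ⁻¹ • x) ∂ν := by
    refine lintegral_congr fun x => ?_
    rw [smul_inv_smul]
  rw [h2] at h1
  rw [h1]
  refine lintegral_congr_ae ?_
  filter_upwards [aux_sqrt_id hact hc_meas hc_pos hc γ] with x hx
  rw [← mul_assoc, hx]

/-- `∫ ofReal √(c γ) ∂ν = ofReal (Ξ γ)` etc. -/
private lemma aux_ofReal_sqrt_le (a : ℝ) :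
    ENNReal.ofReal (Real.sqrt a) ≤ 1 + ENNReal.ofReal a := by
  rcases le_or_gt a 0 with h | h
  · have : Real.sqrt a = 0 := Real.sqrt_eq_zero_of_nonpos h
    rw [this]
    simp
  · have h1 : Real.sqrt a ≤ 1 + a := by
      nlinarith [Real.sq_sqrt h.le, Real.sqrt_nonneg a, sq_nonneg (Real.sqrt a - 1)]
    calc ENNReal.ofReal (Real.sqrt a) ≤ ENNReal.ofReal (1 + a) := ENNReal.ofReal_le_ofReal h1
    _ = 1 + ENNReal.ofReal a := by rw [ENNReal.ofReal_add zero_le_one h.le, ENNReal.ofReal_one]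

private lemma aux_two_mul_le (a b : ℝ≥0∞) : 2 * (a * b) ≤ a ^ 2 + b ^ 2 := by
  rcases eq_or_ne a ⊤ with ha | ha
  · rcases eq_or_ne b 0 with hb | hb
    · simp [hb]
    · have : a ^ 2 = ⊤ := by rw [ha]; simp
      rw [this, top_add]; exact le_top
  rcases eq_or_ne b ⊤ with hb | hb
  · have : b ^ 2 = ⊤ := by rw [hb]; simp
    rw [this, add_top]; exact le_top
  lift a to NNReal using ha
  lift b to NNReal using hb
  rw [← ENNReal.coe_mul, ← ENNReal.coe_two, ← ENNReal.coe_mul, ← ENNReal.coe_pow,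
    ← ENNReal.coe_pow, ← ENNReal.coe_add, ENNReal.coe_le_coe, ← NNReal.coe_le_coe]
  push_cast
  nlinarith [sq_nonneg ((a:ℝ) - b), NNReal.coe_nonneg a, NNReal.coe_nonneg b]

private lemma aux_ofReal_Xi (hact : ∀ γ : Γ, Measurable (fun x : X => γ • x))
    [IsProbabilityMeasure ν]
    (hc_meas : ∀ γ : Γ, Measurable (c γ))
    (hc : ∀ γ : Γ, Measure.map (fun x : X => γ • x) ν
        = ν.withDensity (fun x => ENNReal.ofReal (c γ x)))
    {Ξ : Γ → ℝ} (hΞ : ∀ γ : Γ, Ξ γ = ∫ x, Real.sqrt (c γ x) ∂ν) (γ : Γ) :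
    ENNReal.ofReal (Ξ γ) = ∫⁻ x, ENNReal.ofReal (Real.sqrt (c γ x)) ∂ν := by
  have hint : Integrable (fun x => Real.sqrt (c γ x)) ν := by
    refine ⟨((hc_meas γ).sqrt).aestronglyMeasurable, ?_⟩
    rw [hasFiniteIntegral_iff_ofReal (ae_of_all _ fun x => Real.sqrt_nonneg _)]
    calc ∫⁻ x, ENNReal.ofReal (Real.sqrt (c γ x)) ∂ν
        ≤ ∫⁻ x, (1 + ENNReal.ofReal (c γ x)) ∂ν := lintegral_mono fun x => aux_ofReal_sqrt_le _
      _ = 1 + 1 := by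
          rw [lintegral_add_left measurable_const, aux_int_c_one hact hc, lintegral_const]
          simp
      _ < ⊤ := by norm_num
  rw [hΞ γ, ofReal_integral_eq_lintegral_ofReal hint (ae_of_all _ fun x => Real.sqrt_nonneg _)]

end BRAux2

private lemma aux_lint_sq_le {X : Type*} [MeasurableSpace X] {ν : Measure X}
    [Fact ((1:ℝ≥0∞) ≤ 2)] (ξ : Lp ℂ 2 ν) (hξ : ‖ξ‖ ≤ 1)
    {u : X → ℝ≥0∞} (hu : (fun x => ENNReal.ofReal ‖(ξ : X → ℂ) x‖) =ᵐ[ν] u) :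
    ∫⁻ x, u x ^ 2 ∂ν ≤ 1 := by
  have h1 : ∫⁻ x, u x ^ 2 ∂ν = ∫⁻ x, (‖(ξ : X → ℂ) x‖₊ : ℝ≥0∞) ^ (2:ℕ) ∂ν := by
    refine lintegral_congr_ae ?_
    filter_upwards [hu] with x hx
    rw [← hx, ← coe_nnnorm, ENNReal.ofReal_coe_nnreal]
  have h2 : eLpNorm (ξ : X → ℂ) 2 ν ≤ 1 := by
    rw [← ENNReal.ofReal_one]
    refine (ENNReal.le_ofReal_iff_toReal_le (Lp.eLpNorm_ne_top ξ) zero_le_one).2 ?_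
    rw [← Lp.norm_def]; exact hξ
  have h4 : eLpNorm (ξ : X → ℂ) 2 ν
      = (∫⁻ x, (‖(ξ : X → ℂ) x‖₊ : ℝ≥0∞) ^ (2:ℝ) ∂ν) ^ (1/(2:ℝ)) := by
    rw [eLpNorm_eq_lintegral_rpow_enorm_toReal (by norm_num) (by norm_num)]
    simp only [enorm_eq_nnnorm]
    norm_num
  have h5 := ENNReal.rpow_le_rpow (h4 ▸ h2) (by norm_num : (0:ℝ) ≤ 2)
  rw [ENNReal.one_rpow, ← ENNReal.rpow_mul] at h5
  norm_num at h5
  rw [h1]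
  exact h5
/-- Abstract form of Theorem 1.2, Item (2), boundary representation version:
under hypothesis (★), for every finitely supported `f : Γ → ℂ` the operator
`π_ν(f) = Σ_γ f(γ) π_ν(γ)` on `L²(X, ν)` satisfies `‖π_ν(f)‖ ≤ C ‖f‖_{S^{2d}}`,
where `‖f‖_{S^{2d}} = sup_γ |f(γ)|(1+L(γ))^{2d}/Ξ(γ)`. -/
theorem boundary_representation_operator_norm_bound
    {Γ : Type*} [Group Γ] [Countable Γ]
    {X : Type*} [MeasurableSpace X] [MulAction Γ X]
    (ν : Measure X) [IsProbabilityMeasure ν]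
    (hact : ∀ γ : Γ, Measurable (fun x : X => γ • x))
    (c : Γ → X → ℝ)
    (hc_meas : ∀ γ : Γ, Measurable (c γ))
    (hc_pos : ∀ γ : Γ, ∀ᵐ x ∂ν, 0 < c γ x)
    (hc : ∀ γ : Γ, Measure.map (fun x : X => γ • x) ν
        = ν.withDensity (fun x => ENNReal.ofReal (c γ x)))
    (Ξ : Γ → ℝ) (hΞ : ∀ γ : Γ, Ξ γ = ∫ x, Real.sqrt (c γ x) ∂ν)
    (L : Γ → ℝ) (hL_nonneg : ∀ γ, 0 ≤ L γ) (hL_one : L 1 = 0)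
    (hL_inv : ∀ γ, L γ⁻¹ = L γ) (hL_sub : ∀ γ δ : Γ, L (γ * δ) ≤ L γ + L δ)
    (d : ℝ) (hd : 0 < d) (C : ℝ) (hC : 0 < C)
    (hstar : ∀ ξ : X → ℝ≥0∞, Measurable ξ →
      ∑' γ : Γ, ENNReal.ofReal (Ξ γ / (1 + L γ) ^ (2 * d))
          * ∫⁻ x, ENNReal.ofReal (Real.sqrt (c γ x)) * ξ x ∂ν
        ≤ ENNReal.ofReal C * ∫⁻ x, ξ x ∂ν)
    (π : Γ → (Lp ℂ 2 ν →L[ℂ] Lp ℂ 2 ν))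
    (hπ : ∀ (γ : Γ) (ξ : Lp ℂ 2 ν),
      (π γ ξ : X → ℂ) =ᵐ[ν]
        fun x => (Real.sqrt (c γ x) : ℂ) * (ξ : X → ℂ) (γ⁻¹ • x))
    (f : Γ → ℂ) (hf : f.support.Finite) :
    ‖∑ γ ∈ hf.toFinset, f γ • π γ‖
      ≤ C * ⨆ γ : Γ, ‖f γ‖ * (1 + L γ) ^ (2 * d) / Ξ γ := by
  classical
  -- Ξ facts
  have hΞofReal : ∀ γ : Γ,
      ENNReal.ofReal (Ξ γ) = ∫⁻ x, ENNReal.ofReal (Real.sqrt (c γ x)) ∂ν :=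
    aux_ofReal_Xi hact hc_meas hc hΞ
  have hΞnonneg : ∀ γ : Γ, 0 ≤ Ξ γ := fun γ => by
    rw [hΞ γ]; exact integral_nonneg fun x => Real.sqrt_nonneg _
  have hΞpos : ∀ γ : Γ, 0 < Ξ γ := by
    intro γ
    rw [← ENNReal.ofReal_pos, hΞofReal γ, pos_iff_ne_zero]
    intro h0
    have h1 := (lintegral_eq_zero_iff ((hc_meas γ).sqrt.ennreal_ofReal)).1 h0
    have h2 : ∀ᵐ x ∂ν, (0:ℝ≥0∞) < ENNReal.ofReal (Real.sqrt (c γ x)) := by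
      filter_upwards [hc_pos γ] with x hx
      exact ENNReal.ofReal_pos.2 (Real.sqrt_pos.2 hx)
    obtain ⟨x, hx1, hx2⟩ := (h1.and h2).exists
    exact hx2.ne' hx1
  have hΞsymm : ∀ γ : Γ, Ξ γ⁻¹ = Ξ γ := by
    intro γ
    have h1 : ENNReal.ofReal (Ξ γ) = ENNReal.ofReal (Ξ γ⁻¹) := by
      rw [hΞofReal γ, hΞofReal γ⁻¹]
      have h2 := aux_cov hact hc_meas hc_pos hc γ
        (g := fun _ : X => (1:ℝ≥0∞)) measurable_const
      simpa using h2
    exact ((ENNReal.ofReal_eq_ofReal_iff (hΞnonneg γ) (hΞnonneg γ⁻¹)).1 h1).symm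
  have hWsymm : ∀ γ : Γ, ENNReal.ofReal (Ξ γ⁻¹ / (1 + L γ⁻¹) ^ (2 * d))
      = ENNReal.ofReal (Ξ γ / (1 + L γ) ^ (2 * d)) := fun γ => by
    rw [hΞsymm, hL_inv]
  -- sup facts
  set S := ⨆ γ : Γ, ‖f γ‖ * (1 + L γ) ^ (2 * d) / Ξ γ with hS_def
  have hgnonneg : ∀ γ : Γ, 0 ≤ ‖f γ‖ * (1 + L γ) ^ (2 * d) / Ξ γ := fun γ =>
    div_nonneg (mul_nonneg (norm_nonneg _)
      (Real.rpow_nonneg (by linarith [hL_nonneg γ]) _)) (hΞpos γ).le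
  have hbdd : BddAbove (Set.range fun γ : Γ => ‖f γ‖ * (1 + L γ) ^ (2 * d) / Ξ γ) := by
    refine BddAbove.mono ?_
      (((hf.image fun γ : Γ => ‖f γ‖ * (1 + L γ) ^ (2 * d) / Ξ γ).insert 0).bddAbove)
    rintro _ ⟨γ, rfl⟩
    by_cases hγ : f γ = 0
    · refine Set.mem_insert_iff.2 (Or.inl ?_)
      simp [hγ]
    · exact Set.mem_insert_iff.2 (Or.inr ⟨γ, hγ, rfl⟩)
  have hS0 : 0 ≤ S := le_trans (hgnonneg 1) (le_ciSup hbdd 1)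
  have hfS : ∀ γ : Γ, ENNReal.ofReal ‖f γ‖
      ≤ ENNReal.ofReal S * ENNReal.ofReal (Ξ γ / (1 + L γ) ^ (2 * d)) := by
    intro γ
    have hP : (0:ℝ) < (1 + L γ) ^ (2 * d) :=
      Real.rpow_pos_of_pos (by linarith [hL_nonneg γ]) _
    have h1 : ‖f γ‖ * (1 + L γ) ^ (2 * d) / Ξ γ ≤ S := le_ciSup hbdd γ
    have h2 : ‖f γ‖ ≤ S * (Ξ γ / (1 + L γ) ^ (2 * d)) := by
      rw [div_le_iff₀ (hΞpos γ)] at h1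
      rw [mul_div_assoc'] at *
      rw [le_div_iff₀ hP]
      calc ‖f γ‖ * (1 + L γ) ^ (2 * d) ≤ S * Ξ γ := h1
      _ = S * Ξ γ := rfl
    calc ENNReal.ofReal ‖f γ‖
        ≤ ENNReal.ofReal (S * (Ξ γ / (1 + L γ) ^ (2 * d))) := ENNReal.ofReal_le_ofReal h2
      _ = ENNReal.ofReal S * ENNReal.ofReal (Ξ γ / (1 + L γ) ^ (2 * d)) :=
          ENNReal.ofReal_mul hS0
  -- main claim for unit vectors
  have claim : ∀ ξ η : Lp ℂ 2 ν, ‖ξ‖ ≤ 1 → ‖η‖ ≤ 1 →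
      ‖(inner ℂ ((∑ γ ∈ hf.toFinset, f γ • π γ) ξ) η : ℂ)‖ ≤ C * S := by
    intro ξ η hξ hη
    have haeu : AEMeasurable (fun x => ENNReal.ofReal ‖(ξ : X → ℂ) x‖) ν :=
      ENNReal.measurable_ofReal.comp_aemeasurable
        (Lp.aestronglyMeasurable ξ).norm.aemeasurable
    have haev : AEMeasurable (fun x => ENNReal.ofReal ‖(η : X → ℂ) x‖) ν :=
      ENNReal.measurable_ofReal.comp_aemeasurable
        (Lp.aestronglyMeasurable η).norm.aemeasurable
    set u := haeu.mk _ with hu_def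
    set v := haev.mk _ with hv_def
    have hu_meas : Measurable u := haeu.measurable_mk
    have hv_meas : Measurable v := haev.measurable_mk
    have hu_ae : (fun x => ENNReal.ofReal ‖(ξ : X → ℂ) x‖) =ᵐ[ν] u := haeu.ae_eq_mk
    have hv_ae : (fun x => ENNReal.ofReal ‖(η : X → ℂ) x‖) =ᵐ[ν] v := haev.ae_eq_mk
    have hIu : ∫⁻ x, u x ^ 2 ∂ν ≤ 1 := aux_lint_sq_le ξ hξ hu_ae
    have hIv : ∫⁻ x, v x ^ 2 ∂ν ≤ 1 := aux_lint_sq_le η hη hv_ae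
    -- per-γ bound
    have key : ∀ γ : Γ, ENNReal.ofReal ‖(inner ℂ (π γ ξ) η : ℂ)‖
        ≤ ∫⁻ x, ENNReal.ofReal (Real.sqrt (c γ x)) * (u (γ⁻¹ • x) * v x) ∂ν := by
      intro γ
      have h1 : ‖(inner ℂ (π γ ξ) η : ℂ)‖
          ≤ (∫⁻ x, ENNReal.ofReal
              ‖(inner ℂ ((π γ ξ : X → ℂ) x) ((η : X → ℂ) x) : ℂ)‖ ∂ν).toReal := by
        rw [L2.inner_def]
        exact norm_integral_le_lintegral_norm _
      have h2 : ∫⁻ x, ENNReal.ofReal ‖(inner ℂ ((π γ ξ : X → ℂ) x) ((η : X → ℂ) x) : ℂ)‖ ∂ν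
          ≤ ∫⁻ x, ENNReal.ofReal (Real.sqrt (c γ x)) * (u (γ⁻¹ • x) * v x) ∂ν := by
        refine lintegral_mono_ae ?_
        have hu' : ∀ᵐ x ∂ν, ENNReal.ofReal ‖(ξ : X → ℂ) (γ⁻¹ • x)‖ = u (γ⁻¹ • x) :=
          aux_ae_smul hact hc γ⁻¹ hu_ae
        filter_upwards [hπ γ ξ, hu', hv_ae] with x hx hux hvx
        calc ENNReal.ofReal ‖(inner ℂ ((π γ ξ : X → ℂ) x) ((η : X → ℂ) x) : ℂ)‖
            ≤ ENNReal.ofReal (‖(π γ ξ : X → ℂ) x‖ * ‖(η : X → ℂ) x‖) :=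
              ENNReal.ofReal_le_ofReal (norm_inner_le_norm _ _)
          _ = ENNReal.ofReal ‖(π γ ξ : X → ℂ) x‖ * ENNReal.ofReal ‖(η : X → ℂ) x‖ :=
              ENNReal.ofReal_mul (norm_nonneg _)
          _ = ENNReal.ofReal (Real.sqrt (c γ x)) * (u (γ⁻¹ • x) * v x) := by
              rw [hx]
              simp only [norm_mul, Complex.norm_real, Real.norm_eq_abs]
              rw [abs_of_nonneg (Real.sqrt_nonneg _),
                ENNReal.ofReal_mul (Real.sqrt_nonneg _), hux, hvx, mul_assoc]
      calc ENNReal.ofReal ‖(inner ℂ (π γ ξ) η : ℂ)‖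
          ≤ ENNReal.ofReal (∫⁻ x, ENNReal.ofReal
              ‖(inner ℂ ((π γ ξ : X → ℂ) x) ((η : X → ℂ) x) : ℂ)‖ ∂ν).toReal :=
            ENNReal.ofReal_le_ofReal h1
        _ ≤ ∫⁻ x, ENNReal.ofReal ‖(inner ℂ ((π γ ξ : X → ℂ) x) ((η : X → ℂ) x) : ℂ)‖ ∂ν :=
            ENNReal.ofReal_toReal_le
        _ ≤ _ := h2
    -- sum over the support
    have hsum1 : ‖(inner ℂ ((∑ γ ∈ hf.toFinset, f γ • π γ) ξ) η : ℂ)‖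
        ≤ ∑ γ ∈ hf.toFinset, ‖f γ‖ * ‖(inner ℂ (π γ ξ) η : ℂ)‖ := by
      rw [ContinuousLinearMap.sum_apply, sum_inner]
      refine (norm_sum_le _ _).trans ?_
      refine Finset.sum_le_sum fun γ _ => le_of_eq ?_
      rw [ContinuousLinearMap.smul_apply, inner_smul_left, norm_mul, RCLike.norm_conj]
    have hofReal : ENNReal.ofReal ‖(inner ℂ ((∑ γ ∈ hf.toFinset, f γ • π γ) ξ) η : ℂ)‖
        ≤ ∑ γ ∈ hf.toFinset,
            ENNReal.ofReal ‖f γ‖ * ENNReal.ofReal ‖(inner ℂ (π γ ξ) η : ℂ)‖ := by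
      refine (ENNReal.ofReal_le_ofReal hsum1).trans (le_of_eq ?_)
      rw [ENNReal.ofReal_sum_of_nonneg fun γ _ =>
        mul_nonneg (norm_nonneg _) (norm_nonneg _)]
      exact Finset.sum_congr rfl fun γ _ => ENNReal.ofReal_mul (norm_nonneg _)
    -- doubling
    have h2I : ∀ γ : Γ,
        2 * ∫⁻ x, ENNReal.ofReal (Real.sqrt (c γ x)) * (u (γ⁻¹ • x) * v x) ∂ν
        ≤ (∫⁻ x, ENNReal.ofReal (Real.sqrt (c γ x)) * u (γ⁻¹ • x) ^ 2 ∂ν)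
          + ∫⁻ x, ENNReal.ofReal (Real.sqrt (c γ x)) * v x ^ 2 ∂ν := by
      intro γ
      have hm : Measurable fun x =>
          ENNReal.ofReal (Real.sqrt (c γ x)) * (u (γ⁻¹ • x) * v x) :=
        ((hc_meas γ).sqrt.ennreal_ofReal).mul
          ((hu_meas.comp (hact γ⁻¹)).mul hv_meas)
      rw [← lintegral_const_mul 2 hm,
        ← lintegral_add_left (show Measurable fun x =>
            ENNReal.ofReal (Real.sqrt (c γ x)) * u (γ⁻¹ • x) ^ 2 from
          ((hc_meas γ).sqrt.ennreal_ofReal).mul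
            ((hu_meas.comp (hact γ⁻¹)).pow_const 2))]
      refine lintegral_mono fun x => ?_
      calc 2 * (ENNReal.ofReal (Real.sqrt (c γ x)) * (u (γ⁻¹ • x) * v x))
          = ENNReal.ofReal (Real.sqrt (c γ x)) * (2 * (u (γ⁻¹ • x) * v x)) := by ring
        _ ≤ ENNReal.ofReal (Real.sqrt (c γ x)) * (u (γ⁻¹ • x) ^ 2 + v x ^ 2) :=
            mul_le_mul_right (aux_two_mul_le _ _) _
        _ = ENNReal.ofReal (Real.sqrt (c γ x)) * u (γ⁻¹ • x) ^ 2
            + ENNReal.ofReal (Real.sqrt (c γ x)) * v x ^ 2 := by ring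
    -- the two Schur sums
    have hAsum : ∑ γ ∈ hf.toFinset, ENNReal.ofReal (Ξ γ / (1 + L γ) ^ (2 * d))
          * ∫⁻ x, ENNReal.ofReal (Real.sqrt (c γ x)) * u (γ⁻¹ • x) ^ 2 ∂ν
        ≤ ENNReal.ofReal C := by
      calc ∑ γ ∈ hf.toFinset, ENNReal.ofReal (Ξ γ / (1 + L γ) ^ (2 * d))
            * ∫⁻ x, ENNReal.ofReal (Real.sqrt (c γ x)) * u (γ⁻¹ • x) ^ 2 ∂ν
          = ∑ γ ∈ hf.toFinset, ENNReal.ofReal (Ξ γ / (1 + L γ) ^ (2 * d))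
            * ∫⁻ x, ENNReal.ofReal (Real.sqrt (c γ⁻¹ x)) * u x ^ 2 ∂ν := by
            refine Finset.sum_congr rfl fun γ _ => ?_
            rw [aux_cov hact hc_meas hc_pos hc γ (hu_meas.pow_const 2)]
        _ ≤ ∑' γ : Γ, ENNReal.ofReal (Ξ γ / (1 + L γ) ^ (2 * d))
            * ∫⁻ x, ENNReal.ofReal (Real.sqrt (c γ⁻¹ x)) * u x ^ 2 ∂ν :=
            ENNReal.sum_le_tsum _
        _ = ∑' γ : Γ, ENNReal.ofReal (Ξ γ / (1 + L γ) ^ (2 * d))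
            * ∫⁻ x, ENNReal.ofReal (Real.sqrt (c γ x)) * u x ^ 2 ∂ν := by
            rw [← Equiv.tsum_eq (Equiv.inv Γ) (fun γ : Γ =>
              ENNReal.ofReal (Ξ γ / (1 + L γ) ^ (2 * d))
                * ∫⁻ x, ENNReal.ofReal (Real.sqrt (c γ x)) * u x ^ 2 ∂ν)]
            refine tsum_congr fun γ => ?_
            have : (Equiv.inv Γ) γ = γ⁻¹ := rfl
            rw [this, hWsymm γ]
        _ ≤ ENNReal.ofReal C * ∫⁻ x, u x ^ 2 ∂ν := hstar _ (hu_meas.pow_const 2)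
        _ ≤ ENNReal.ofReal C * 1 := mul_le_mul_right hIu _
        _ = ENNReal.ofReal C := mul_one _
    have hBsum : ∑ γ ∈ hf.toFinset, ENNReal.ofReal (Ξ γ / (1 + L γ) ^ (2 * d))
          * ∫⁻ x, ENNReal.ofReal (Real.sqrt (c γ x)) * v x ^ 2 ∂ν
        ≤ ENNReal.ofReal C := by
      calc ∑ γ ∈ hf.toFinset, ENNReal.ofReal (Ξ γ / (1 + L γ) ^ (2 * d))
            * ∫⁻ x, ENNReal.ofReal (Real.sqrt (c γ x)) * v x ^ 2 ∂ν
          ≤ ∑' γ : Γ, ENNReal.ofReal (Ξ γ / (1 + L γ) ^ (2 * d))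
            * ∫⁻ x, ENNReal.ofReal (Real.sqrt (c γ x)) * v x ^ 2 ∂ν :=
            ENNReal.sum_le_tsum _
        _ ≤ ENNReal.ofReal C * ∫⁻ x, v x ^ 2 ∂ν := hstar _ (hv_meas.pow_const 2)
        _ ≤ ENNReal.ofReal C * 1 := mul_le_mul_right hIv _
        _ = ENNReal.ofReal C := mul_one _
    -- combine
    have hfinal : 2 * ENNReal.ofReal ‖(inner ℂ ((∑ γ ∈ hf.toFinset, f γ • π γ) ξ) η : ℂ)‖
        ≤ 2 * (ENNReal.ofReal C * ENNReal.ofReal S) := by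
      calc 2 * ENNReal.ofReal ‖(inner ℂ ((∑ γ ∈ hf.toFinset, f γ • π γ) ξ) η : ℂ)‖
          ≤ 2 * ∑ γ ∈ hf.toFinset,
              ENNReal.ofReal ‖f γ‖ * ENNReal.ofReal ‖(inner ℂ (π γ ξ) η : ℂ)‖ :=
            mul_le_mul_right hofReal 2
        _ = ∑ γ ∈ hf.toFinset,
              2 * (ENNReal.ofReal ‖f γ‖ * ENNReal.ofReal ‖(inner ℂ (π γ ξ) η : ℂ)‖) := by
            rw [Finset.mul_sum]
        _ ≤ ∑ γ ∈ hf.toFinset, ENNReal.ofReal S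
              * (ENNReal.ofReal (Ξ γ / (1 + L γ) ^ (2 * d))
                * (2 * ∫⁻ x, ENNReal.ofReal (Real.sqrt (c γ x)) * (u (γ⁻¹ • x) * v x) ∂ν)) := by
            refine Finset.sum_le_sum fun γ _ => ?_
            calc 2 * (ENNReal.ofReal ‖f γ‖ * ENNReal.ofReal ‖(inner ℂ (π γ ξ) η : ℂ)‖)
                ≤ 2 * ((ENNReal.ofReal S * ENNReal.ofReal (Ξ γ / (1 + L γ) ^ (2 * d)))
                    * ∫⁻ x, ENNReal.ofReal (Real.sqrt (c γ x)) * (u (γ⁻¹ • x) * v x) ∂ν) :=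
                  mul_le_mul_right (mul_le_mul' (hfS γ) (key γ)) 2
              _ = ENNReal.ofReal S * (ENNReal.ofReal (Ξ γ / (1 + L γ) ^ (2 * d))
                    * (2 * ∫⁻ x, ENNReal.ofReal (Real.sqrt (c γ x)) * (u (γ⁻¹ • x) * v x) ∂ν)) := by
                  ring
        _ ≤ ∑ γ ∈ hf.toFinset, ENNReal.ofReal S
              * (ENNReal.ofReal (Ξ γ / (1 + L γ) ^ (2 * d))
                * ((∫⁻ x, ENNReal.ofReal (Real.sqrt (c γ x)) * u (γ⁻¹ • x) ^ 2 ∂ν)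
                  + ∫⁻ x, ENNReal.ofReal (Real.sqrt (c γ x)) * v x ^ 2 ∂ν)) := by
            refine Finset.sum_le_sum fun γ _ => ?_
            exact mul_le_mul_right (mul_le_mul_right (h2I γ) _) _
        _ = ENNReal.ofReal S
            * ((∑ γ ∈ hf.toFinset, ENNReal.ofReal (Ξ γ / (1 + L γ) ^ (2 * d))
                * ∫⁻ x, ENNReal.ofReal (Real.sqrt (c γ x)) * u (γ⁻¹ • x) ^ 2 ∂ν)
              + ∑ γ ∈ hf.toFinset, ENNReal.ofReal (Ξ γ / (1 + L γ) ^ (2 * d))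
                * ∫⁻ x, ENNReal.ofReal (Real.sqrt (c γ x)) * v x ^ 2 ∂ν) := by
            rw [← Finset.sum_add_distrib, Finset.mul_sum]
            refine Finset.sum_congr rfl fun γ _ => by ring
        _ ≤ ENNReal.ofReal S * (ENNReal.ofReal C + ENNReal.ofReal C) :=
            mul_le_mul_right (add_le_add hAsum hBsum) _
        _ = 2 * (ENNReal.ofReal C * ENNReal.ofReal S) := by ring
    have h6 : ENNReal.ofReal ‖(inner ℂ ((∑ γ ∈ hf.toFinset, f γ • π γ) ξ) η : ℂ)‖
        ≤ ENNReal.ofReal C * ENNReal.ofReal S :=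
      (ENNReal.mul_le_mul_iff_right (by norm_num) (by norm_num)).1 hfinal
    rw [← ENNReal.ofReal_mul hC.le] at h6
    exact (ENNReal.ofReal_le_ofReal_iff (mul_nonneg hC.le hS0)).1 h6
  -- scaling
  have claim2 : ∀ ξ η : Lp ℂ 2 ν,
      ‖(inner ℂ ((∑ γ ∈ hf.toFinset, f γ • π γ) ξ) η : ℂ)‖ ≤ C * S * (‖ξ‖ * ‖η‖) := by
    intro ξ η
    rcases eq_or_ne ξ 0 with rfl | hξ0
    · simp
    rcases eq_or_ne η 0 with rfl | hη0
    · simp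
    have hnξ : 0 < ‖ξ‖ := norm_pos_iff.2 hξ0
    have hnη : 0 < ‖η‖ := norm_pos_iff.2 hη0
    have h1 : ‖((‖ξ‖⁻¹ : ℝ) : ℂ) • ξ‖ ≤ 1 := by
      rw [norm_smul, Complex.norm_real, Real.norm_eq_abs,
        abs_of_nonneg (inv_nonneg.2 (norm_nonneg ξ)), inv_mul_cancel₀ hnξ.ne']
    have h2 : ‖((‖η‖⁻¹ : ℝ) : ℂ) • η‖ ≤ 1 := by
      rw [norm_smul, Complex.norm_real, Real.norm_eq_abs,
        abs_of_nonneg (inv_nonneg.2 (norm_nonneg η)), inv_mul_cancel₀ hnη.ne']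
    have h3 := claim (((‖ξ‖⁻¹ : ℝ) : ℂ) • ξ) (((‖η‖⁻¹ : ℝ) : ℂ) • η) h1 h2
    rw [_root_.map_smul, inner_smul_left, inner_smul_right, norm_mul, norm_mul,
      RCLike.norm_conj, Complex.norm_real, Complex.norm_real, Real.norm_eq_abs,
      Real.norm_eq_abs, abs_of_nonneg (inv_nonneg.2 (norm_nonneg ξ)),
      abs_of_nonneg (inv_nonneg.2 (norm_nonneg η))] at h3
    have h4 := mul_le_mul_of_nonneg_left h3 (mul_nonneg hnξ.le hnη.le)
    calc ‖(inner ℂ ((∑ γ ∈ hf.toFinset, f γ • π γ) ξ) η : ℂ)‖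
        = (‖ξ‖ * ‖η‖) * (‖ξ‖⁻¹ * (‖η‖⁻¹
            * ‖(inner ℂ ((∑ γ ∈ hf.toFinset, f γ • π γ) ξ) η : ℂ)‖)) := by
          field_simp
      _ ≤ (‖ξ‖ * ‖η‖) * (C * S) := h4
      _ = C * S * (‖ξ‖ * ‖η‖) := by ring
  -- conclude
  refine ContinuousLinearMap.opNorm_le_bound _ (mul_nonneg hC.le hS0) fun ξ => ?_
  rcases eq_or_ne ‖(∑ γ ∈ hf.toFinset, f γ • π γ) ξ‖ 0 with h0 | h0
  · rw [h0]
    exact mul_nonneg (mul_nonneg hC.le hS0) (norm_nonneg ξ)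
  · have h1 : ‖(∑ γ ∈ hf.toFinset, f γ • π γ) ξ‖ * ‖(∑ γ ∈ hf.toFinset, f γ • π γ) ξ‖
        ≤ (C * S * ‖ξ‖) * ‖(∑ γ ∈ hf.toFinset, f γ • π γ) ξ‖ := by
      calc ‖(∑ γ ∈ hf.toFinset, f γ • π γ) ξ‖ * ‖(∑ γ ∈ hf.toFinset, f γ • π γ) ξ‖
          = RCLike.re (inner ℂ ((∑ γ ∈ hf.toFinset, f γ • π γ) ξ)
              ((∑ γ ∈ hf.toFinset, f γ • π γ) ξ) : ℂ) := by
            rw [inner_self_eq_norm_sq (𝕜 := ℂ)]; ring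
        _ ≤ ‖(inner ℂ ((∑ γ ∈ hf.toFinset, f γ • π γ) ξ)
              ((∑ γ ∈ hf.toFinset, f γ • π γ) ξ) : ℂ)‖ := RCLike.re_le_norm _
        _ ≤ C * S * (‖ξ‖ * ‖(∑ γ ∈ hf.toFinset, f γ • π γ) ξ‖) :=
            claim2 ξ ((∑ γ ∈ hf.toFinset, f γ • π γ) ξ)
        _ = (C * S * ‖ξ‖) * ‖(∑ γ ∈ hf.toFinset, f γ • π γ) ξ‖ := by ring
    exact le_of_mul_le_mul_right h1 (lt_of_le_of_ne (norm_nonneg _) (Ne.symm h0))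
end
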